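/- arXiv:2501.11656 — 4 statements merged into one kernel-verified Lean document; each statement's English description precedes it below -/
import Mathlib

section
/- Under Hypothesis (H1), the function x ↦ log‖df(x)^{−1}‖ is Lebesgue-integrable near the critical set: there is a constant K > 0 such that for all sufficiently small δ > 0, ∫_{B_δ(C)} |log‖df(x)^{−1}‖| dx ≤ K δ log(1/δ); in particular log‖df(·)^{−1}‖ ∈ L^1 of any measure on X with bounded density with respect to Lebesgue measure. -/
open MeasureTheory Metric Set Filter
open scoped ENNReal NNReal symmDiff

noncomputable section

/-- Euclidean state space `ℝ^d`. -/
abbrev Ed (d : ℕ) := EuclideanSpace ℝ (Fin d)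

/-- The noise cube `[-σ, σ]^d`. -/
def cube (d : ℕ) (σ : ℝ) : Set (Ed d) := {w | ∀ i, |w i| ≤ σ}

/-- The sup-norm cube of radius `σ` centred at `c`. -/
def cubeAt (d : ℕ) (c : Ed d) (σ : ℝ) : Set (Ed d) := {z | ∀ i, |z i - c i| ≤ σ}

/-- The uniform (normalized Lebesgue) probability measure on the noise cube. -/
def noiseMeasure (d : ℕ) (σ : ℝ) : Measure (Ed d) :=
  (volume (cube d σ))⁻¹ • volume.restrict (cube d σ)

instance {d : ℕ} {σ : ℝ} : SFinite (noiseMeasure d σ) := by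
  unfold noiseMeasure; infer_instance

/-- The one-sided shift on noise sequences. -/
def shft {d : ℕ} (ω : ℕ → Ed d) : ℕ → Ed d := fun n => ω (n + 1)

/-- Random compositions `f^n_ω(x)`, where `f_ω(x) = f(x) + ω 0`. -/
def RComp {d : ℕ} (f : Ed d → Ed d) : ℕ → (ℕ → Ed d) → Ed d → Ed d
  | 0, _, x => x
  | n + 1, ω, x => f (RComp f n ω x) + ω n

/-- The derivative cocycle `d f^n_ω (x)` built from a candidate derivative `Df`. -/
def DComp {d : ℕ} (f : Ed d → Ed d) (Df : Ed d → Ed d →L[ℝ] Ed d) :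
    ℕ → (ℕ → Ed d) → Ed d → (Ed d →L[ℝ] Ed d)
  | 0, _, _ => ContinuousLinearMap.id ℝ (Ed d)
  | n + 1, ω, x => (Df (RComp f n ω x)).comp (DComp f Df n ω x)

/-- The inverse derivative cocycle `(d f^n_ω (x))⁻¹`. -/
def DCompInv {d : ℕ} (f : Ed d → Ed d) (DfInv : Ed d → Ed d →L[ℝ] Ed d) :
    ℕ → (ℕ → Ed d) → Ed d → (Ed d →L[ℝ] Ed d)
  | 0, _, _ => ContinuousLinearMap.id ℝ (Ed d)
  | n + 1, ω, x => (DCompInv f DfInv n ω x).comp (DfInv (RComp f n ω x))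

/-- The `δ`-truncated distance to the critical set. -/
def distTrunc {d : ℕ} (Crit : Set (Ed d)) (δ : ℝ) (x : Ed d) : ℝ :=
  if δ < infDist x Crit then 1 else infDist x Crit

/-- Hypothesis (H1): regularity of `f` away from the critical set and structure and
non-degeneracy of the critical set. -/
structure H1Data (d : ℕ) where
  X : Set (Ed d)
  f : Ed d → Ed d
  Crit : Set (Ed d)
  Df : Ed d → Ed d →L[ℝ] Ed d
  DfInv : Ed d → Ed d →L[ℝ] Ed d
  B : ℝ
  β : ℝ
  compact_X : IsCompact X
  cont_f : ContinuousOn f X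
  one_lt_B : 1 < B
  beta_pos : 0 < β
  deriv : ∀ x ∈ X \ Crit, HasFDerivWithinAt f (Df x) X x
  inv_left : ∀ x ∈ X \ Crit, (DfInv x).comp (Df x) = ContinuousLinearMap.id ℝ (Ed d)
  inv_right : ∀ x ∈ X \ Crit, (Df x).comp (DfInv x) = ContinuousLinearMap.id ℝ (Ed d)
  deriv_bound : ∀ x ∈ X \ Crit, ∀ v : Ed d,
    B⁻¹ * infDist x Crit ^ β * ‖v‖ ≤ ‖Df x v‖ ∧
      ‖Df x v‖ ≤ B * infDist x Crit ^ (-β) * ‖v‖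
  logHolder_inv : ∀ x ∈ X \ Crit, ∀ y ∈ X \ Crit, dist x y ≤ infDist x Crit / 2 →
    |Real.log ‖DfInv x‖ - Real.log ‖DfInv y‖| ≤ B / infDist x Crit ^ β * dist x y
  logHolder_det : ∀ x ∈ X \ Crit, ∀ y ∈ X \ Crit, dist x y ≤ infDist x Crit / 2 →
    |Real.log (abs (Df x).det) - Real.log (abs (Df y).det)| ≤ B / infDist x Crit ^ β * dist x y
  crit_structure : ∃ (m : ℕ) (g : Fin m → ((Fin (d - 1) → ℝ) → Ed d)) (L : ℝ≥0),
    (∀ i, ContDiff ℝ 1 (g i)) ∧ (∀ i, LipschitzWith L (g i)) ∧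
    Crit ⊆ ⋃ i, g i '' (Set.univ.pi fun _ => Set.Icc (0 : ℝ) 1)

/-- iid uniform noise: cylinder events have product probabilities. -/
def IsIIDNoise {d : ℕ} (σn : ℝ) (P : Measure (ℕ → Ed d)) : Prop :=
  ∀ (m : ℕ) (s : Fin m → Set (Ed d)), (∀ i, MeasurableSet (s i)) →
    P {ω | ∀ i : Fin m, ω i.1 ∈ s i} = ∏ i, noiseMeasure d σn (s i)

/-- Hypothesis (H2): an invariant ergodic component `Y` carrying a stationary ergodic
measure `μ` with `λ = ∫ log ‖df⁻¹‖ dμ < 0` (all Lyapunov exponents positive). -/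
structure H2Data {d : ℕ} (D : H1Data d) (σn : ℝ) (P : Measure (ℕ → Ed d)) where
  Y : Set (Ed d)
  μ : ProbabilityMeasure (Ed d)
  subset_X : Y ⊆ D.X
  full : (μ : Measure (Ed d)) Y = 1
  stationary :
    Measure.map (fun p : Ed d × Ed d => D.f p.2 + p.1)
      ((noiseMeasure d σn).prod (μ : Measure (Ed d))) = (μ : Measure (Ed d))
  invariantY : ∀ x ∈ Y, ∀ᵐ w ∂(noiseMeasure d σn), D.f x + w ∈ Y
  ergodic :
    Ergodic (fun p : (ℕ → Ed d) × Ed d => (shft p.1, D.f p.2 + p.1 0))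
      (P.prod (μ : Measure (Ed d)))
  neg_lyap : ∫ x, Real.log ‖D.DfInv x‖ ∂(μ : Measure (Ed d)) < 0

/-- `n` is a `(σ'², r)`-hyperbolic time for `(ω, x)` (with recurrence exponent `b`). -/
def IsHypTime {d : ℕ} (f : Ed d → Ed d) (DfInv : Ed d → Ed d →L[ℝ] Ed d)
    (Crit : Set (Ed d)) (σ' r b : ℝ) (ω : ℕ → Ed d) (x : Ed d) (n : ℕ) : Prop :=
  ∀ k < n,
    (∏ i ∈ Finset.Ico k n, ‖DfInv (RComp f i ω x)‖) ≤ σ' ^ (2 * (n - k)) ∧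
    σ' ^ (b * ((n - k : ℕ) : ℝ)) ≤ distTrunc Crit r (RComp f (n - k) ω x)

/-- Greedy `N`-sparse selection from a set `H ⊆ ℕ` of times (`⊤` if exhausted). -/
def sparseTimes (H : Set ℕ) (N : ℕ) : ℕ → ℕ∞
  | 0 => sInf ((fun m : ℕ => (m : ℕ∞)) '' H)
  | k + 1 => sInf ((fun m : ℕ => (m : ℕ∞)) ''
      {m : ℕ | m ∈ H ∧ sparseTimes H N k + (N : ℕ∞) < (m : ℕ∞)})

/-- `i` is an `N`-sparse `(σ'², r)`-hyperbolic time for `(ω, x)`. -/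
def IsSparseHypTime {d : ℕ} (f : Ed d → Ed d) (DfInv : Ed d → Ed d →L[ℝ] Ed d)
    (Crit : Set (Ed d)) (σ' r b : ℝ) (N : ℕ) (ω : ℕ → Ed d) (x : Ed d) (i : ℕ) : Prop :=
  ∃ k : ℕ, sparseTimes {n : ℕ | IsHypTime f DfInv Crit σ' r b ω x n} N k = (i : ℕ∞)

/-- The event `E_J(I, N, ι)`: some ball `Ĩ ⊆ I` covers `J` within time `N`,
staying `ι`-away from the critical set. -/
def coverEvent {d : ℕ} (f : Ed d → Ed d) (Crit : Set (Ed d)) (J : Set (Ed d))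
    (N : ℕ) (ι : ℝ) (I : Set (Ed d)) : Set (ℕ → Ed d) :=
  {ω | ∃ i ≤ N, ∃ c : Ed d, ∃ r : ℝ, 0 < r ∧ Metric.ball c r ⊆ I ∧
    J ⊆ RComp f i ω '' Metric.ball c r ∧
    ∀ j ≤ i, ∀ x ∈ Metric.ball c r, ι < infDist (RComp f j ω x) Crit}

/-- `i` is a `(σ'², r)`-Young time for `(ω, x)`. -/
def IsYoungTime {d : ℕ} (f : Ed d → Ed d) (DfInv : Ed d → Ed d →L[ℝ] Ed d)
    (Crit : Set (Ed d)) (σ' r b : ℝ) (N : ℕ) (J : Set (Ed d)) (ι δ1 : ℝ)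
    (ω : ℕ → Ed d) (x : Ed d) (i : ℕ) : Prop :=
  IsSparseHypTime f DfInv Crit σ' r b N ω x i ∧
    shft^[i] ω ∈ coverEvent f Crit J N ι (Metric.ball (RComp f i ω x) δ1)

/-- `|Y_m(ω, x)|`: the number of Young times in `{1, …, m}`. -/
def youngCount {d : ℕ} (f : Ed d → Ed d) (DfInv : Ed d → Ed d →L[ℝ] Ed d)
    (Crit : Set (Ed d)) (σ' r b : ℝ) (N : ℕ) (J : Set (Ed d)) (ι δ1 : ℝ)
    (ω : ℕ → Ed d) (x : Ed d) (m : ℕ) : ℕ :=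
  {i : ℕ | 1 ≤ i ∧ i ≤ m ∧ IsYoungTime f DfInv Crit σ' r b N J ι δ1 ω x i}.ncard

/-- The transfer-type operator `P_θ` as a pointwise integral. -/
def transferFun {d : ℕ} (D : H1Data d) (σn θ : ℝ) (h : Ed d → ℝ) (x : Ed d) : ℝ :=
  ∫ w, Real.exp (θ * Real.log ‖D.DfInv (D.f x + w)‖) * h (D.f x + w) ∂(noiseMeasure d σn)

namespace LogDerivAux

open scoped Topology

lemma thick_vol {e : ℕ} (L : ℝ≥0) (g : (Fin e → ℝ) → Ed (e+1))
    (hg : LipschitzWith L g) :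
    ∃ C > 0, ∀ r : ℝ, 0 < r → r ≤ 1 →
      volume (thickening r (g '' (Set.univ.pi fun _ => Set.Icc (0:ℝ) 1)))
        ≤ ENNReal.ofReal (C * r) := by
  have hV : volume (ball (0 : Ed (e+1)) 1) ≠ ⊤ := measure_ball_lt_top.ne
  set c0 : ℝ := (volume (ball (0 : Ed (e+1)) 1)).toReal with hc0
  have hc0pos : 0 < c0 := ENNReal.toReal_pos (measure_ball_pos _ _ one_pos).ne' hV
  refine ⟨2^e * (1+(L:ℝ))^(e+1) * c0, by positivity, fun r hr hr1 => ?_⟩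
  set n : ℕ := ⌈1/r⌉₊ with hn
  have hnpos : 0 < n := Nat.ceil_pos.mpr (by positivity)
  have hn0 : (0:ℝ) < n := by exact_mod_cast hnpos
  have hn1 : 1/r ≤ (n:ℝ) := Nat.le_ceil _
  have hn2 : (n:ℝ) ≤ 1/r + 1 := (Nat.ceil_lt_add_one (by positivity)).le
  have hnr : 1/(n:ℝ) ≤ r := by
    rw [div_le_iff₀ hn0]
    have h1r : (1/r) * r = 1 := by field_simp
    nlinarith
  have hcov : thickening r (g '' (Set.univ.pi fun _ => Set.Icc (0:ℝ) 1)) ⊆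
      ⋃ (j : Fin e → Fin n), ball (g (fun i => (j i : ℝ)/n)) ((1+(L:ℝ))*r) := by
    intro x hx
    rw [mem_thickening_iff] at hx
    obtain ⟨z, ⟨y, hy, rfl⟩, hxz⟩ := hx
    have hy' : ∀ i, y i ∈ Set.Icc (0:ℝ) 1 := fun i => hy i (Set.mem_univ i)
    refine Set.mem_iUnion.mpr ⟨fun i => ⟨min ⌊y i * n⌋₊ (n-1), by omega⟩, ?_⟩
    have key : ∀ i, |y i - ((min ⌊y i * n⌋₊ (n-1) : ℕ) : ℝ)/n| ≤ 1/n := by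
      intro i
      obtain ⟨hy0, hy1⟩ := hy' i
      rw [abs_sub_le_iff]
      rcases le_or_gt ⌊y i * n⌋₊ (n-1) with h | h
      · rw [min_eq_left h]
        have h1 : (⌊y i * n⌋₊ : ℝ) ≤ y i * n := Nat.floor_le (by positivity)
        have h2 : y i * n < ⌊y i * n⌋₊ + 1 := Nat.lt_floor_add_one _
        constructor
        · rw [sub_le_iff_le_add, ← add_div, le_div_iff₀ hn0]; linarith
        · rw [sub_le_iff_le_add]
          rw [div_le_iff₀ hn0]
          have hthis : (1/(n:ℝ) + y i) * n = 1 + y i * n := by field_simp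
          rw [hthis]; linarith
      · rw [min_eq_right h.le]
        have hfl : (n:ℝ) ≤ ⌊y i * n⌋₊ := by exact_mod_cast Nat.le_of_lt_succ (by omega)
        have h2 : (⌊y i * n⌋₊:ℝ) ≤ y i * n := Nat.floor_le (by positivity)
        have hyy : y i = 1 := le_antisymm hy1 (by nlinarith)
        have hcast : ((n-1:ℕ):ℝ) = (n:ℝ) - 1 := by
          have h1n : 1 ≤ n := hnpos
          push_cast [h1n]; ring
        rw [hyy, hcast]
        constructor
        · rw [sub_le_iff_le_add, ← add_div]
          rw [le_div_iff₀ hn0]; nlinarith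
        · rw [sub_le_iff_le_add]
          rw [div_le_iff₀ hn0]
          have hthis : (1/(n:ℝ) + 1) * n = 1 + n := by field_simp
          rw [hthis]; linarith
    rw [mem_ball]
    have hdy : dist y (fun i => ((min ⌊y i * n⌋₊ (n-1) : ℕ) : ℝ)/n) ≤ 1/n := by
      rw [dist_pi_le_iff (by positivity)]
      intro i
      rw [Real.dist_eq]
      exact key i
    have hgd := hg.dist_le_mul y (fun i => ((min ⌊y i * n⌋₊ (n-1) : ℕ):ℝ)/n)
    have hL0 : (0:ℝ) ≤ L := L.coe_nonneg
    have hstep : dist (g y) (g fun i => ((min ⌊y i * n⌋₊ (n-1):ℕ):ℝ)/n) ≤ L * r := by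
      refine le_trans hgd ?_
      calc (L:ℝ) * dist y _ ≤ L * (1/n) := mul_le_mul_of_nonneg_left hdy hL0
        _ ≤ L * r := mul_le_mul_of_nonneg_left hnr hL0
    calc dist x (g fun i => ((min ⌊y i * n⌋₊ (n-1) : ℕ):ℝ)/n)
        ≤ dist x (g y) + dist (g y) (g fun i => ((min ⌊y i * n⌋₊ (n-1):ℕ):ℝ)/n) := dist_triangle _ _ _
      _ < r + L * r := add_lt_add_of_lt_of_le hxz hstep
      _ = (1+(L:ℝ))*r := by ring
  calc volume (thickening r (g '' (Set.univ.pi fun _ => Set.Icc (0:ℝ) 1)))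
      ≤ volume (⋃ (j : Fin e → Fin n), ball (g (fun i => (j i : ℝ)/n)) ((1+(L:ℝ))*r)) :=
        measure_mono hcov
    _ ≤ ∑' (j : Fin e → Fin n), volume (ball (g (fun i => (j i : ℝ)/n)) ((1+(L:ℝ))*r)) :=
        measure_iUnion_le _
    _ = ∑' (_ : Fin e → Fin n), ENNReal.ofReal (((1+(L:ℝ))*r) ^ Module.finrank ℝ (Ed (e+1))) * volume (ball (0:Ed (e+1)) 1) := by
        exact tsum_congr fun j => Measure.addHaar_ball _ _ (by positivity)
    _ = (Fintype.card (Fin e → Fin n) : ℝ≥0∞) * (ENNReal.ofReal (((1+(L:ℝ))*r) ^ Module.finrank ℝ (Ed (e+1))) * volume (ball (0:Ed (e+1)) 1)) := by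
        simp [tsum_fintype, Finset.sum_const, nsmul_eq_mul]
    _ ≤ ENNReal.ofReal (2^e * (1+(L:ℝ))^(e+1) * c0 * r) := by
        rw [Fintype.card_fun, Fintype.card_fin, Fintype.card_fin, finrank_euclideanSpace_fin]
        rw [← ENNReal.ofReal_toReal hV, ← hc0]
        rw [← ENNReal.ofReal_natCast, ← ENNReal.ofReal_mul (by positivity),
          ← ENNReal.ofReal_mul (by positivity)]
        apply ENNReal.ofReal_le_ofReal
        push_cast
        have hnr2 : (n:ℝ) * r ≤ 2 := by
          have h1r : (1/r) * r = 1 := by field_simp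
          nlinarith
        have hrpow : ((n:ℝ))^e * r^(e+1) ≤ 2^e * r := by
          have heq : ((n:ℝ))^e * r^(e+1) = ((n:ℝ)*r)^e * r := by
            rw [mul_pow, pow_succ]; ring
          rw [heq]
          have h2e : ((n:ℝ)*r)^e ≤ 2^e := pow_le_pow_left₀ (by positivity) hnr2 e
          nlinarith
        calc ((n:ℝ))^e * (((1+(L:ℝ))*r)^(e+1) * c0)
            = ((1+(L:ℝ)))^(e+1) * c0 * ((n:ℝ)^e * r^(e+1)) := by rw [mul_pow]; ring
          _ ≤ ((1+(L:ℝ)))^(e+1) * c0 * (2^e * r) := by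
              apply mul_le_mul_of_nonneg_left hrpow (by positivity)
          _ = 2^e * (1+(L:ℝ))^(e+1) * c0 * r := by ring

/-- The volume of the `r`-thickening of the critical set is `O(r)`. -/
lemma crit_thick {d : ℕ} (hd : 0 < d) (D : H1Data d) :
    ∃ C > 0, ∀ r : ℝ, 0 < r → r ≤ 1 →
      volume (thickening r D.Crit) ≤ ENNReal.ofReal (C * r) := by
  obtain ⟨e, rfl⟩ : ∃ e, d = e + 1 := ⟨d - 1, by omega⟩
  obtain ⟨m, g, L, hg1, hg2, hsub⟩ := D.crit_structure
  choose C hC0 hCb using fun i : Fin m => thick_vol L (g i) (hg2 i)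
  have hsum0 : 0 ≤ ∑ i, C i := Finset.sum_nonneg fun i _ => (hC0 i).le
  refine ⟨∑ i, C i + 1, by linarith, fun r hr hr1 => ?_⟩
  calc volume (thickening r D.Crit)
      ≤ volume (⋃ i, thickening r (g i '' (Set.univ.pi fun _ => Set.Icc (0:ℝ) 1))) := by
        refine measure_mono ?_
        rw [← thickening_iUnion]
        exact thickening_subset_of_subset r hsub
    _ ≤ ∑' i, volume (thickening r (g i '' (Set.univ.pi fun _ => Set.Icc (0:ℝ) 1))) :=
        measure_iUnion_le _
    _ ≤ ∑' i, ENNReal.ofReal (C i * r) := ENNReal.tsum_le_tsum fun i => hCb i r hr hr1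
    _ = ∑ i, ENNReal.ofReal (C i * r) := tsum_fintype _
    _ ≤ ENNReal.ofReal ((∑ i, C i + 1) * r) := by
        rw [← ENNReal.ofReal_sum_of_nonneg (fun i _ => mul_nonneg (hC0 i).le hr.le)]
        apply ENNReal.ofReal_le_ofReal
        rw [← Finset.sum_mul, add_mul]
        nlinarith

/-- The closure of the critical set is Lebesgue-null. -/
lemma crit_closure_null {d : ℕ} (hd : 0 < d) (D : H1Data d) :
    volume (closure D.Crit) = 0 := by
  obtain ⟨m, g, L, hg1, hg2, hsub⟩ := D.crit_structure
  set Q : Set (Fin (d-1) → ℝ) := Set.univ.pi fun _ => Set.Icc (0:ℝ) 1 with hQ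
  have hQc : IsCompact Q := isCompact_univ_pi fun _ => isCompact_Icc
  have hUc : IsClosed (⋃ i, g i '' Q) :=
    isClosed_iUnion_of_finite fun i => (hQc.image (hg2 i).continuous).isClosed
  have hsub' : closure D.Crit ⊆ ⋃ i, g i '' Q := closure_minimal hsub hUc
  have hdim : dimH (closure D.Crit) ≤ ((d-1 : ℕ) : ℝ≥0∞) := by
    refine le_trans (dimH_mono hsub') ?_
    rw [dimH_iUnion]
    refine iSup_le fun i => ?_
    calc dimH (g i '' Q) ≤ dimH Q := (hg2 i).dimH_image_le _
      _ ≤ dimH (Set.univ : Set (Fin (d-1) → ℝ)) := dimH_mono (Set.subset_univ _)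
      _ = ((d-1:ℕ) : ℝ≥0∞) := Real.dimH_univ_pi_fin _
  have hac : (volume : Measure (Ed d)) ≪ μH[Module.finrank ℝ (Ed d)] :=
    Measure.absolutelyContinuous_isAddHaarMeasure _ _
  rw [finrank_euclideanSpace_fin] at hac
  refine measure_zero_of_dimH_lt (d := (d : ℝ≥0)) (by exact_mod_cast hac) ?_
  refine lt_of_le_of_lt hdim ?_
  have : (d - 1 : ℕ) < d := by omega
  exact_mod_cast this

/-- Points of `X \ Crit` are at positive distance from the critical set. -/
lemma dist_pos {d : ℕ} (hd : 0 < d) (D : H1Data d) :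
    ∀ x ∈ D.X \ D.Crit, 0 < infDist x D.Crit := by
  intro x hx
  rcases lt_or_eq_of_le (infDist_nonneg (x := x) (s := D.Crit)) with h | h
  · exact h
  exfalso
  set v : Ed d := EuclideanSpace.single (⟨0, hd⟩ : Fin d) (1:ℝ) with hv
  have hvnorm : ‖v‖ = 1 := by rw [hv, EuclideanSpace.norm_single]; norm_num
  have hub := (D.deriv_bound x hx v).2
  rw [← h, Real.zero_rpow (by have := D.beta_pos; intro hc; linarith [neg_eq_zero.mp hc])] at hub
  have hDf0 : D.Df x v = 0 := by
    have : ‖D.Df x v‖ ≤ 0 := by rw [hvnorm] at hub; linarith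
    simpa using le_antisymm this (norm_nonneg _)
  have hcomp := ContinuousLinearMap.ext_iff.mp (D.inv_left x hx) v
  simp only [ContinuousLinearMap.comp_apply, ContinuousLinearMap.id_apply, hDf0, map_zero] at hcomp
  rw [← hcomp] at hvnorm
  simp at hvnorm

/-- Two-sided bound on `log ‖DfInv‖` in terms of the distance to the critical set. -/
lemma log_bound {d : ℕ} (hd : 0 < d) (D : H1Data d) :
    ∀ x ∈ D.X \ D.Crit,
      |Real.log ‖D.DfInv x‖| ≤ Real.log D.B + D.β * |Real.log (infDist x D.Crit)| := by
  intro x hx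
  have hρ : 0 < infDist x D.Crit := dist_pos hd D x hx
  set ρ := infDist x D.Crit with hρdef
  have hB : (0:ℝ) < D.B := lt_trans one_pos D.one_lt_B
  have hβ := D.beta_pos
  have hρβ : 0 < ρ ^ D.β := Real.rpow_pos_of_pos hρ _
  have hρβ' : 0 < ρ ^ (-D.β) := Real.rpow_pos_of_pos hρ _
  have hprod : (D.B⁻¹ * ρ ^ D.β) * (D.B * ρ ^ (-D.β)) = 1 := by
    rw [Real.rpow_neg hρ.le]; field_simp
  -- upper bound on the operator norm
  have hup : ‖D.DfInv x‖ ≤ D.B * ρ ^ (-D.β) := by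
    refine ContinuousLinearMap.opNorm_le_bound _ (by positivity) fun w => ?_
    have hWinv : D.Df x (D.DfInv x w) = w := by
      have := ContinuousLinearMap.ext_iff.mp (D.inv_right x hx) w
      simpa using this
    have hu := (D.deriv_bound x hx (D.DfInv x w)).1
    rw [hWinv] at hu
    have hpos : 0 < D.B⁻¹ * ρ ^ D.β := by positivity
    nlinarith [norm_nonneg (D.DfInv x w), norm_nonneg w]
  -- lower bound
  have hlow : D.B⁻¹ * ρ ^ D.β ≤ ‖D.DfInv x‖ := by
    set v : Ed d := EuclideanSpace.single (⟨0, hd⟩ : Fin d) (1:ℝ) with hv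
    have hvnorm : ‖v‖ = 1 := by rw [hv, EuclideanSpace.norm_single]; norm_num
    have hVinv : D.DfInv x (D.Df x v) = v := by
      have := ContinuousLinearMap.ext_iff.mp (D.inv_left x hx) v
      simpa using this
    have h1 : ‖v‖ ≤ ‖D.DfInv x‖ * ‖D.Df x v‖ := by
      conv_lhs => rw [← hVinv]
      exact ContinuousLinearMap.le_opNorm _ _
    have h2 := (D.deriv_bound x hx v).2
    rw [hvnorm] at h1 h2
    rw [mul_one] at h2
    have hn : 0 ≤ ‖D.DfInv x‖ := norm_nonneg _
    have h3 : 1 ≤ ‖D.DfInv x‖ * (D.B * ρ ^ (-D.β)) :=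
      le_trans h1 (mul_le_mul_of_nonneg_left h2 hn)
    have hpos' : 0 < D.B⁻¹ * ρ ^ D.β := by positivity
    have h4 := mul_le_mul_of_nonneg_left h3 hpos'.le
    have h5 : D.B⁻¹ * ρ ^ D.β * (‖D.DfInv x‖ * (D.B * ρ ^ (-D.β)))
        = ‖D.DfInv x‖ * (D.B⁻¹ * ρ ^ D.β * (D.B * ρ ^ (-D.β))) := by ring
    rw [hprod, mul_one] at h5
    rw [mul_one, h5] at h4
    exact h4
  have hDpos : 0 < ‖D.DfInv x‖ := lt_of_lt_of_le (by positivity) hlow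
  have hlog1 : Real.log ‖D.DfInv x‖ ≤ Real.log D.B + D.β * (- Real.log ρ) := by
    calc Real.log ‖D.DfInv x‖ ≤ Real.log (D.B * ρ ^ (-D.β)) :=
          Real.log_le_log hDpos hup
      _ = Real.log D.B + (-D.β) * Real.log ρ := by
          rw [Real.log_mul hB.ne' (by positivity), Real.log_rpow hρ]
      _ = Real.log D.B + D.β * (- Real.log ρ) := by ring
  have hlog2 : - Real.log D.B + D.β * Real.log ρ ≤ Real.log ‖D.DfInv x‖ := by
    calc - Real.log D.B + D.β * Real.log ρ
        = Real.log (D.B⁻¹ * ρ ^ D.β) := by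
          rw [Real.log_mul (by positivity) (by positivity), Real.log_inv, Real.log_rpow hρ]
      _ ≤ Real.log ‖D.DfInv x‖ := Real.log_le_log (by positivity) hlow
  have hBlog : 0 ≤ Real.log D.B := Real.log_nonneg D.one_lt_B.le
  have ha1 : Real.log ρ ≤ |Real.log ρ| := le_abs_self _
  have ha2 : - |Real.log ρ| ≤ Real.log ρ := neg_abs_le _
  rw [abs_le]
  constructor <;> nlinarith

/-- `log ‖DfInv‖` is continuous on `X \ Crit`. -/
lemma log_contOn {d : ℕ} (hd : 0 < d) (D : H1Data d) :
    ContinuousOn (fun x => Real.log ‖D.DfInv x‖) (D.X \ D.Crit) := by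
  intro x hx
  have hρ : 0 < infDist x D.Crit := dist_pos hd D x hx
  set ρ := infDist x D.Crit with hρdef
  have hB : (0:ℝ) < D.B := lt_trans one_pos D.one_lt_B
  have hρβ : 0 < ρ ^ D.β := Real.rpow_pos_of_pos hρ _
  rw [Metric.continuousWithinAt_iff]
  intro ε hε
  refine ⟨min (ρ/2) (ε * (ρ ^ D.β) / (2 * D.B)), by positivity, fun y hy hdy => ?_⟩
  have h1 : dist x y ≤ ρ/2 := by
    rw [dist_comm]
    exact le_trans (le_of_lt hdy) (min_le_left _ _)
  have h2 : dist x y < ε * (ρ ^ D.β) / (2 * D.B) := by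
    rw [dist_comm x y]
    exact lt_of_lt_of_le hdy (min_le_right _ _)
  have hLH := D.logHolder_inv x hx y hy h1
  rw [Real.dist_eq, abs_sub_comm]
  calc |Real.log ‖D.DfInv x‖ - Real.log ‖D.DfInv y‖| ≤ D.B / ρ ^ D.β * dist x y := hLH
    _ < D.B / ρ ^ D.β * (ε * (ρ ^ D.β) / (2 * D.B)) := by
        apply mul_lt_mul_of_pos_left h2 (by positivity)
    _ = ε / 2 := by field_simp
    _ < ε := by linarith

/-- `X \ Crit` equals `X` minus the closure of `Crit`. -/
lemma diff_crit_eq {d : ℕ} (hd : 0 < d) (D : H1Data d) :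
    D.X \ D.Crit = D.X \ closure D.Crit := by
  ext x
  constructor
  · intro hx
    refine ⟨hx.1, fun hc => ?_⟩
    have h0 : infDist x D.Crit = 0 := Metric.infDist_zero_of_mem_closure hc
    have := dist_pos hd D x hx
    rw [h0] at this
    exact lt_irrefl 0 this
  · intro hx
    exact ⟨hx.1, fun hc => hx.2 (subset_closure hc)⟩

/-- `log ‖DfInv‖` is a.e. strongly measurable on `X` (w.r.t. Lebesgue). -/
lemma log_aesm {d : ℕ} (hd : 0 < d) (D : H1Data d) :
    AEStronglyMeasurable (fun x => Real.log ‖D.DfInv x‖) (volume.restrict D.X) := by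
  have hSmeas : MeasurableSet (D.X \ closure D.Crit) :=
    D.compact_X.isClosed.measurableSet.diff isClosed_closure.measurableSet
  have hcont : ContinuousOn (fun x => Real.log ‖D.DfInv x‖) (D.X \ closure D.Crit) := by
    rw [← diff_crit_eq hd D]
    exact log_contOn hd D
  have h1 : AEStronglyMeasurable (fun x => Real.log ‖D.DfInv x‖)
      (volume.restrict (D.X \ closure D.Crit)) :=
    hcont.aestronglyMeasurable hSmeas
  have hae : D.X =ᵐ[volume] (D.X \ closure D.Crit) := by
    refine MeasureTheory.ae_eq_set.mpr ?_
    constructor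
    · refine measure_mono_null ?_ (crit_closure_null hd D)
      intro x hx
      by_contra hc
      exact hx.2 ⟨hx.1, hc⟩
    · have h2 : (D.X \ closure D.Crit) \ D.X = ∅ := Set.diff_eq_empty.mpr Set.diff_subset
      exact measure_mono_null (fun x hx => absurd hx.1.1 hx.2) measure_empty
  rwa [Measure.restrict_congr_set hae]

set_option maxHeartbeats 1000000 in
/-- The key dyadic estimate on the lower integral near the critical set. -/
lemma main_lint {d : ℕ} (hd : 0 < d) (D : H1Data d) :
    ∃ K > 0, ∀ δ : ℝ, 0 < δ → δ ≤ Real.exp (-1) →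
      ∫⁻ x in D.X ∩ thickening δ D.Crit, ENNReal.ofReal |Real.log ‖D.DfInv x‖|
        ≤ ENNReal.ofReal (K * δ * Real.log (1/δ)) := by
  obtain ⟨C, hC, hCr⟩ := crit_thick hd D
  have hβ := D.beta_pos
  have hB1 := D.one_lt_B
  have hlogB : 0 < Real.log D.B := Real.log_pos hB1
  have hlog2 : 0 < Real.log 2 := Real.log_pos one_lt_two
  set M : ℝ := Real.log D.B + 2 * D.β * Real.log 2 with hM
  have hM0 : 0 < M := by nlinarith
  refine ⟨4*C*(M + D.β), mul_pos (by linarith) (by linarith), fun δ hδ hδ0 => ?_⟩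
  have he2 : (2:ℝ) < Real.exp 1 := by
    have := Real.add_one_lt_exp (x := 1) one_ne_zero
    linarith
  have hexp : Real.exp (-1) ≤ 1/2 := by
    rw [Real.exp_neg]
    have hinv := mul_inv_cancel₀ (ne_of_gt (Real.exp_pos 1))
    nlinarith [Real.exp_pos 1]
  have hδhalf : δ ≤ 1/2 := le_trans hδ0 hexp
  have hδ1 : δ < 1 := by linarith
  have hL1 : 1 ≤ Real.log (1/δ) := by
    rw [one_div, Real.log_inv]
    have h1 : Real.log δ ≤ -1 := by
      calc Real.log δ ≤ Real.log (Real.exp (-1)) := Real.log_le_log hδ hδ0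
        _ = -1 := Real.log_exp _
    linarith
  rcases Set.eq_empty_or_nonempty D.Crit with hCe | hCne
  · rw [hCe, thickening_empty, Set.inter_empty, Measure.restrict_empty, lintegral_zero_measure]
    exact zero_le
  -- main case
  set T : Set (Ed d) := (D.X ∩ thickening δ D.Crit) \ closure D.Crit with hT
  have hres : volume.restrict (D.X ∩ thickening δ D.Crit) = volume.restrict T := by
    apply Measure.restrict_congr_set
    rw [MeasureTheory.ae_eq_set]
    refine ⟨measure_mono_null ?_ (crit_closure_null hd D), ?_⟩
    · intro x hx
      by_contra hc
      exact hx.2 ⟨hx.1, hc⟩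
    · have h2 : T \ (D.X ∩ thickening δ D.Crit) = ∅ := Set.diff_eq_empty.mpr Set.diff_subset
      simp [h2]
  rw [hres]
  have hmemT : ∀ x ∈ T, x ∈ D.X \ D.Crit ∧ 0 < infDist x D.Crit ∧ infDist x D.Crit < δ := by
    intro x hx
    have hx1 : x ∈ D.X \ D.Crit := by
      rw [diff_crit_eq hd D]
      exact ⟨hx.1.1, hx.2⟩
    exact ⟨hx1, dist_pos hd D x hx1,
      (Metric.mem_thickening_iff_infDist_lt hCne).mp hx.1.2⟩
  -- dyadic pieces
  set S : ℕ → Set (Ed d) :=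
    fun k => T ∩ (fun x => infDist x D.Crit) ⁻¹' (Set.Ioc (δ * 2⁻¹^(k+1)) (δ * 2⁻¹^k)) with hSdef
  have hTmeas : MeasurableSet T :=
    (D.compact_X.isClosed.measurableSet.inter isOpen_thickening.measurableSet).diff
      isClosed_closure.measurableSet
  have hSmeas : ∀ k, MeasurableSet (S k) := fun k =>
    hTmeas.inter ((continuous_infDist_pt D.Crit).measurable measurableSet_Ioc)
  have hcover : T ⊆ ⋃ k, S k := by
    intro x hx
    obtain ⟨hx1, hρ0, hρδ⟩ := hmemT x hx
    have hex : ∃ k : ℕ, δ * 2⁻¹^(k+1) < infDist x D.Crit := by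
      obtain ⟨k, hk⟩ := exists_pow_lt_of_lt_one (div_pos hρ0 hδ) (by norm_num : (2⁻¹:ℝ) < 1)
      refine ⟨k, ?_⟩
      have h1 : δ * 2⁻¹^(k+1) ≤ δ * 2⁻¹^k := by
        have : (2⁻¹:ℝ)^(k+1) ≤ 2⁻¹^k :=
          pow_le_pow_of_le_one (by norm_num) (by norm_num) (Nat.le_succ k)
        nlinarith
      have h2 : 2⁻¹^k * δ < infDist x D.Crit := (lt_div_iff₀ hδ).mp hk
      nlinarith
    set k0 := Nat.find hex with hk0def
    have hk0 : δ * 2⁻¹^(k0+1) < infDist x D.Crit := Nat.find_spec hex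
    have hupper : infDist x D.Crit ≤ δ * 2⁻¹^k0 := by
      rcases Nat.eq_zero_or_pos k0 with h0 | hpos
      · rw [h0]; simpa using hρδ.le
      · obtain ⟨j, hj⟩ := Nat.exists_eq_succ_of_ne_zero hpos.ne'
        have hnot := Nat.find_min hex (m := j) (by omega)
        push_neg at hnot
        rw [hj]
        simpa [Nat.succ_eq_add_one] using hnot
    exact Set.mem_iUnion.mpr ⟨k0, hx, Set.mem_Ioc.mpr ⟨hk0, hupper⟩⟩
  -- per-piece bound
  have hpiece : ∀ k : ℕ,
      ∫⁻ x in S k, ENNReal.ofReal |Real.log ‖D.DfInv x‖|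
        ≤ ENNReal.ofReal ((Real.log D.B + D.β * (Real.log (1/δ) + ((k:ℝ)+1) * Real.log 2))
            * (C * (2 * (δ * 2⁻¹^k)))) := by
    intro k
    have hk0' : (0:ℝ) ≤ (k:ℝ) := Nat.cast_nonneg k
    have hinner : 0 ≤ Real.log (1/δ) + ((k:ℝ)+1) * Real.log 2 := by
      have := mul_nonneg (by linarith : (0:ℝ) ≤ (k:ℝ)+1) hlog2.le
      linarith
    have hbk0 : 0 ≤ Real.log D.B + D.β * (Real.log (1/δ) + ((k:ℝ)+1) * Real.log 2) := by
      have := mul_nonneg hβ.le hinner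
      linarith
    have hpow : (0:ℝ) < 2⁻¹^k := by positivity
    have hrk : 0 < 2 * (δ * 2⁻¹^k) := by positivity
    have hrk1 : 2 * (δ * 2⁻¹^k) ≤ 1 := by
      have h1 : (2⁻¹:ℝ)^k ≤ 1 := pow_le_one₀ (by norm_num) (by norm_num)
      nlinarith
    have hptw : ∀ x ∈ S k, ENNReal.ofReal |Real.log ‖D.DfInv x‖|
        ≤ ENNReal.ofReal (Real.log D.B + D.β * (Real.log (1/δ) + ((k:ℝ)+1) * Real.log 2)) := by
      intro x hx
      obtain ⟨hxT, hxI⟩ := hx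
      obtain ⟨hx1, hρ0, hρδ⟩ := hmemT x hxT
      obtain ⟨hlo, hhi⟩ := Set.mem_Ioc.mp hxI
      apply ENNReal.ofReal_le_ofReal
      have hb := log_bound hd D x hx1
      have habs : |Real.log (infDist x D.Crit)| ≤ Real.log (1/δ) + ((k:ℝ)+1) * Real.log 2 := by
        have hρ1 : infDist x D.Crit < 1 := lt_of_lt_of_le hρδ (by linarith)
        have hneg : Real.log (infDist x D.Crit) < 0 := Real.log_neg hρ0 hρ1
        rw [abs_of_neg hneg]
        have hmono : Real.log (δ * 2⁻¹^(k+1)) ≤ Real.log (infDist x D.Crit) :=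
          Real.log_le_log (mul_pos hδ (by positivity)) hlo.le
        have hval : Real.log (δ * 2⁻¹^(k+1)) = Real.log δ - ((k:ℝ)+1) * Real.log 2 := by
          rw [Real.log_mul hδ.ne' (by positivity), Real.log_pow, Real.log_inv]
          push_cast
          ring
        have hlogδ : Real.log (1/δ) = - Real.log δ := by rw [one_div, Real.log_inv]
        rw [hlogδ]
        linarith [hmono, hval.symm.le]
      calc |Real.log ‖D.DfInv x‖| ≤ Real.log D.B + D.β * |Real.log (infDist x D.Crit)| := hb
        _ ≤ Real.log D.B + D.β * (Real.log (1/δ) + ((k:ℝ)+1) * Real.log 2) := by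
            nlinarith [mul_le_mul_of_nonneg_left habs hβ.le]
    calc ∫⁻ x in S k, ENNReal.ofReal |Real.log ‖D.DfInv x‖|
        ≤ ∫⁻ _ in S k, ENNReal.ofReal (Real.log D.B + D.β * (Real.log (1/δ) + ((k:ℝ)+1) * Real.log 2)) :=
          setLIntegral_mono measurable_const hptw
      _ = ENNReal.ofReal (Real.log D.B + D.β * (Real.log (1/δ) + ((k:ℝ)+1) * Real.log 2)) * volume (S k) :=
          setLIntegral_const _ _
      _ ≤ ENNReal.ofReal (Real.log D.B + D.β * (Real.log (1/δ) + ((k:ℝ)+1) * Real.log 2)) *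
            ENNReal.ofReal (C * (2 * (δ * 2⁻¹^k))) := by
          apply mul_le_mul_right
          refine le_trans (measure_mono ?_) (hCr _ hrk hrk1)
          intro x hx
          obtain ⟨hxT, hxI⟩ := hx
          rw [Metric.mem_thickening_iff_infDist_lt hCne]
          have := (Set.mem_Ioc.mp hxI).2
          nlinarith [(hmemT x hxT).2.1]
      _ = ENNReal.ofReal ((Real.log D.B + D.β * (Real.log (1/δ) + ((k:ℝ)+1) * Real.log 2))
            * (C * (2 * (δ * 2⁻¹^k)))) := (ENNReal.ofReal_mul hbk0).symm
  -- sum up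
  set a : ℕ → ℝ := fun k => (Real.log D.B + D.β * (Real.log (1/δ) + ((k:ℝ)+1) * Real.log 2))
      * (C * (2 * (δ * 2⁻¹^k))) with ha
  set c1 : ℝ := (Real.log D.B + D.β * (Real.log (1/δ) + Real.log 2)) * (2*C*δ) with hc1
  set c2 : ℝ := D.β * Real.log 2 * (2*C*δ) with hc2
  have hak : ∀ k : ℕ, a k = c1 * 2⁻¹^k + c2 * ((k:ℝ) * 2⁻¹^k) := by
    intro k; rw [ha, hc1, hc2]; ring
  have hsum1 : Summable (fun k : ℕ => c1 * 2⁻¹^k) :=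
    (summable_geometric_of_lt_one (by norm_num) (by norm_num)).mul_left c1
  have hgeo2 : HasSum (fun k : ℕ => (k:ℝ) * 2⁻¹^k) ((2:ℝ)⁻¹ / (1 - 2⁻¹)^2) :=
    hasSum_coe_mul_geometric_of_norm_lt_one (by rw [norm_inv]; norm_num)
  have hsum2 : Summable (fun k : ℕ => c2 * ((k:ℝ) * 2⁻¹^k)) := hgeo2.summable.mul_left c2
  have hsummable : Summable a := by
    rw [funext hak]
    exact hsum1.add hsum2
  have ha0 : ∀ k, 0 ≤ a k := by
    intro k
    rw [ha]
    have hk0' : (0:ℝ) ≤ (k:ℝ) := Nat.cast_nonneg k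
    have hinner : 0 ≤ Real.log (1/δ) + ((k:ℝ)+1) * Real.log 2 := by
      have := mul_nonneg (by linarith : (0:ℝ) ≤ (k:ℝ)+1) hlog2.le
      linarith
    have hbk0 : 0 ≤ Real.log D.B + D.β * (Real.log (1/δ) + ((k:ℝ)+1) * Real.log 2) := by
      have := mul_nonneg hβ.le hinner
      linarith
    exact mul_nonneg hbk0 (mul_nonneg hC.le (by positivity))
  have htsum : ∑' k, a k ≤ 4*C*(M + D.β) * δ * Real.log (1/δ) := by
    have h1 : ∑' k : ℕ, (2⁻¹:ℝ)^k = 2 := by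
      rw [tsum_geometric_of_lt_one (by norm_num) (by norm_num)]
      norm_num
    have h2 : ∑' k : ℕ, (k:ℝ) * 2⁻¹^k = 2 := by
      rw [hgeo2.tsum_eq]
      norm_num
    have heq : ∑' k, a k = c1 * 2 + c2 * 2 := by
      rw [funext hak, Summable.tsum_add hsum1 hsum2, tsum_mul_left, tsum_mul_left, h1, h2]
    rw [heq]
    have hkey : c1 * 2 + c2 * 2 = 4*C*δ*(M + D.β * Real.log (1/δ)) := by
      rw [hc1, hc2, hM]; ring
    rw [hkey]
    nlinarith [mul_nonneg (mul_nonneg hC.le hδ.le)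
      (mul_nonneg hM0.le (sub_nonneg.mpr hL1))]
  calc ∫⁻ x in T, ENNReal.ofReal |Real.log ‖D.DfInv x‖|
      ≤ ∫⁻ x in ⋃ k, S k, ENNReal.ofReal |Real.log ‖D.DfInv x‖| := lintegral_mono_set hcover
    _ ≤ ∑' k, ∫⁻ x in S k, ENNReal.ofReal |Real.log ‖D.DfInv x‖| := lintegral_iUnion_le _ _
    _ ≤ ∑' k, ENNReal.ofReal (a k) := ENNReal.tsum_le_tsum hpiece
    _ = ENNReal.ofReal (∑' k, a k) := (ENNReal.ofReal_tsum_of_nonneg ha0 hsummable).symm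
    _ ≤ ENNReal.ofReal (4*C*(M + D.β) * δ * Real.log (1/δ)) := ENNReal.ofReal_le_ofReal htsum

end LogDerivAux


set_option maxHeartbeats 1000000 in
set_option synthInstance.maxHeartbeats 400000 in
/-- Under (H1), `log ‖df⁻¹‖` is Lebesgue-integrable near the critical set:
`∫_{B_δ(𝒞)} |log ‖df⁻¹‖| dx ≲ δ log(1/δ)`, and `log ‖df⁻¹‖ ∈ L¹(μ')` for any
measure `μ'` with bounded density with respect to Lebesgue measure on `X`. -/
theorem log_deriv_inv_integrable {d : ℕ} (hd : 0 < d) (D : H1Data d) :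
    (∃ K > 0, ∃ δ0 > 0, ∀ δ : ℝ, 0 < δ → δ ≤ δ0 →
      (∫ x in D.X ∩ Metric.thickening δ D.Crit, |Real.log ‖D.DfInv x‖|)
        ≤ K * δ * Real.log (1 / δ)) ∧
    ∀ (μ' : Measure (Ed d)) (K' : ℝ≥0),
      μ' ≤ (K' : ℝ≥0∞) • volume.restrict D.X →
      Integrable (fun x => Real.log ‖D.DfInv x‖) μ' := by
  obtain ⟨K, hK, hKb⟩ := LogDerivAux.main_lint hd D
  have haesmX := LogDerivAux.log_aesm hd D
  have haesmX' : AEStronglyMeasurable (fun x => |Real.log ‖D.DfInv x‖|)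
      (volume.restrict D.X) := by
    simpa [Real.norm_eq_abs] using haesmX.norm
  constructor
  · refine ⟨K, hK, Real.exp (-1), Real.exp_pos _, fun δ hδ1 hδ2 => ?_⟩
    have hb := hKb δ hδ1 hδ2
    have hTle : volume.restrict (D.X ∩ thickening δ D.Crit) ≤ volume.restrict D.X :=
      Measure.restrict_mono Set.inter_subset_left le_rfl
    have haesm' : AEStronglyMeasurable (fun x => |Real.log ‖D.DfInv x‖|)
        (volume.restrict (D.X ∩ thickening δ D.Crit)) := haesmX'.mono_measure hTle
    rw [MeasureTheory.integral_eq_lintegral_of_nonneg_ae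
      (Filter.Eventually.of_forall fun x => abs_nonneg _) haesm']
    have hδlt1 : δ ≤ 1 := by
      have h1 : Real.exp (-1) ≤ 1 := by
        rw [Real.exp_le_one_iff]
        norm_num
      linarith
    have hRHS : 0 ≤ K * δ * Real.log (1/δ) := by
      have : 0 ≤ Real.log (1/δ) := Real.log_nonneg (one_le_one_div hδ1 hδlt1)
      have hKδ : 0 ≤ K * δ := mul_nonneg hK.le hδ1.le
      exact mul_nonneg hKδ this
    exact ENNReal.toReal_le_of_le_ofReal hRHS hb
  · intro μ' K' hle
    have hac : μ' ≪ volume.restrict D.X :=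
      Measure.absolutelyContinuous_of_le_smul hle
    refine ⟨haesmX.mono_ac hac, ?_⟩
    rw [MeasureTheory.hasFiniteIntegral_iff_norm]
    set δ0 : ℝ := Real.exp (-1) with hδ0def
    have hδ0 : 0 < δ0 := Real.exp_pos _
    -- bound away from the critical set
    have hbdd : ∃ cB : ℝ, ∀ x ∈ D.X \ thickening δ0 D.Crit, |Real.log ‖D.DfInv x‖| ≤ cB := by
      rcases Set.eq_empty_or_nonempty D.Crit with hCe | hCne
      · refine ⟨0, fun x hx => absurd ?_ (lt_irrefl (0:ℝ))⟩
        have hx1 : x ∈ D.X \ D.Crit := ⟨hx.1, by rw [hCe]; exact Set.notMem_empty x⟩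
        have := LogDerivAux.dist_pos hd D x hx1
        rwa [hCe, Metric.infDist_empty] at this
      · obtain ⟨c, hc⟩ := hCne
        obtain ⟨R, hR⟩ := D.compact_X.isBounded.subset_closedBall c
        set R' : ℝ := max R δ0 with hR'def
        have hR'pos : 0 < R' := lt_of_lt_of_le hδ0 (le_max_right _ _)
        refine ⟨Real.log D.B + D.β * (|Real.log δ0| + |Real.log R'|), fun x hx => ?_⟩
        have hx1 : x ∈ D.X \ D.Crit :=
          ⟨hx.1, fun hcx => hx.2 (Metric.self_subset_thickening hδ0 _ hcx)⟩
        have hρpos := LogDerivAux.dist_pos hd D x hx1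
        have hρlo : δ0 ≤ infDist x D.Crit := by
          by_contra hlt
          push_neg at hlt
          exact hx.2 ((Metric.mem_thickening_iff_infDist_lt ⟨c, hc⟩).mpr hlt)
        have hρhi : infDist x D.Crit ≤ R' := by
          calc infDist x D.Crit ≤ dist x c := Metric.infDist_le_dist_of_mem hc
            _ ≤ R := Metric.mem_closedBall.mp (hR hx.1)
            _ ≤ R' := le_max_left _ _
        have hb := LogDerivAux.log_bound hd D x hx1
        have habs : |Real.log (infDist x D.Crit)| ≤ |Real.log δ0| + |Real.log R'| := by
          have hll : Real.log δ0 ≤ Real.log (infDist x D.Crit) := Real.log_le_log hδ0 hρlo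
          have hlu : Real.log (infDist x D.Crit) ≤ Real.log R' := Real.log_le_log hρpos hρhi
          rw [abs_le]
          constructor
          · have := neg_abs_le (Real.log δ0)
            have h2 := abs_nonneg (Real.log R')
            linarith
          · have := le_abs_self (Real.log R')
            have h2 := abs_nonneg (Real.log δ0)
            linarith
        have := mul_le_mul_of_nonneg_left habs D.beta_pos.le
        linarith
    obtain ⟨cB, hcB⟩ := hbdd
    -- split the integral over X
    have hsplit : D.X ⊆ (D.X ∩ thickening δ0 D.Crit) ∪ (D.X \ thickening δ0 D.Crit) := by
      intro x hx
      by_cases hxt : x ∈ thickening δ0 D.Crit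
      · exact Or.inl ⟨hx, hxt⟩
      · exact Or.inr ⟨hx, hxt⟩
    have hI1 : ∫⁻ x in D.X ∩ thickening δ0 D.Crit, ENNReal.ofReal |Real.log ‖D.DfInv x‖| < ⊤ :=
      lt_of_le_of_lt (hKb δ0 hδ0 le_rfl) ENNReal.ofReal_lt_top
    have hI2 : ∫⁻ x in D.X \ thickening δ0 D.Crit, ENNReal.ofReal |Real.log ‖D.DfInv x‖| < ⊤ := by
      calc ∫⁻ x in D.X \ thickening δ0 D.Crit, ENNReal.ofReal |Real.log ‖D.DfInv x‖|
          ≤ ∫⁻ _ in D.X \ thickening δ0 D.Crit, ENNReal.ofReal cB :=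
            setLIntegral_mono measurable_const fun x hx =>
              ENNReal.ofReal_le_ofReal (hcB x hx)
        _ = ENNReal.ofReal cB * volume (D.X \ thickening δ0 D.Crit) := setLIntegral_const _ _
        _ ≤ ENNReal.ofReal cB * volume D.X :=
            mul_le_mul_right (measure_mono Set.diff_subset) _
        _ < ⊤ := ENNReal.mul_lt_top ENNReal.ofReal_lt_top D.compact_X.measure_lt_top
    calc ∫⁻ x, ENNReal.ofReal ‖Real.log ‖D.DfInv x‖‖ ∂μ'
        ≤ ∫⁻ x, ENNReal.ofReal ‖Real.log ‖D.DfInv x‖‖ ∂((K' : ℝ≥0∞) • volume.restrict D.X) :=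
          lintegral_mono' hle le_rfl
      _ = (K' : ℝ≥0∞) * ∫⁻ x in D.X, ENNReal.ofReal ‖Real.log ‖D.DfInv x‖‖ :=
          lintegral_smul_measure _ _
      _ ≤ (K' : ℝ≥0∞) * ∫⁻ x in (D.X ∩ thickening δ0 D.Crit) ∪ (D.X \ thickening δ0 D.Crit),
            ENNReal.ofReal ‖Real.log ‖D.DfInv x‖‖ :=
          mul_le_mul_right (lintegral_mono_set hsplit) _
      _ ≤ (K' : ℝ≥0∞) * ((∫⁻ x in D.X ∩ thickening δ0 D.Crit, ENNReal.ofReal ‖Real.log ‖D.DfInv x‖‖) +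
            ∫⁻ x in D.X \ thickening δ0 D.Crit, ENNReal.ofReal ‖Real.log ‖D.DfInv x‖‖) :=
          mul_le_mul_right (lintegral_union_le _ _ _) _
      _ < ⊤ := by
          simp only [Real.norm_eq_abs]
          exact ENNReal.mul_lt_top ENNReal.coe_lt_top (ENNReal.add_lt_top.mpr ⟨hI1, hI2⟩)

end
end

section
/- Under Hypothesis (H1), let g(x) = log‖df(x)^{−1}‖. Then for every θ with 0 < θ < 1/β there exists a constant K > 0 such that for all sufficiently small δ > 0, ∫_{B_δ(C)} e^{θ g(x)} dx ≤ K δ^{1 − βθ}; moreover g is uniformly bounded on X \ B_δ(C) for each δ > 0. -/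
open MeasureTheory Metric Set Filter
open scoped ENNReal NNReal symmDiff

noncomputable section

lemma vol_thickening_aux {d : ℕ} (hd : 0 < d) {m : ℕ}
    (g : Fin m → ((Fin (d - 1) → ℝ) → Ed d)) (L : ℝ≥0)
    (hgL : ∀ i, LipschitzWith L (g i)) (Crit : Set (Ed d))
    (hC : Crit ⊆ ⋃ i, g i '' (Set.univ.pi fun _ => Set.Icc (0 : ℝ) 1)) :
    ∃ c : ℝ, 0 < c ∧ ∀ t : ℝ, 0 < t → t ≤ 1 →
      volume (Metric.thickening t Crit) ≤ ENNReal.ofReal (c * t) := by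
  set V : ℝ := (volume (ball (0 : Ed d) 1)).toReal with hVdef
  have hV0 : 0 ≤ V := ENNReal.toReal_nonneg
  set c0 : ℝ := (m : ℝ) * 3 ^ (d - 1) * ((L : ℝ) + 1) ^ d * V with hc0def
  have hc00 : 0 ≤ c0 := by positivity
  refine ⟨c0 + 1, by positivity, fun t ht ht1 => ?_⟩
  set n : ℕ := ⌈1 / t⌉₊ with hndef
  have htinv : (1 : ℝ) ≤ 1 / t := by
    rw [le_div_iff₀ ht]; simpa using ht1
  have hn1 : 1 ≤ (n : ℝ) := le_trans htinv (Nat.le_ceil _)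
  have hn0 : (0 : ℝ) < n := lt_of_lt_of_le one_pos hn1
  have h1nt : 1 / (n : ℝ) ≤ t := by
    rw [div_le_iff₀ hn0]
    have h : (1 : ℝ) / t ≤ n := Nat.le_ceil _
    have h2 : ((1 : ℝ) / t) * t ≤ n * t := mul_le_mul_of_nonneg_right h ht.le
    have h3 : ((1 : ℝ) / t) * t = 1 := by field_simp
    nlinarith
  have hn3 : (n : ℝ) + 1 ≤ 3 / t := by
    have h1 : (n : ℝ) < 1 / t + 1 := Nat.ceil_lt_add_one (by positivity)
    have h2 : (2 : ℝ) ≤ 2 / t := by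
      rw [le_div_iff₀ ht]; nlinarith
    have : (3 : ℝ) / t = 1 / t + 2 / t := by ring
    linarith
  -- the covering
  have hLt : (0 : ℝ) ≤ ((L : ℝ) + 1) * t := by positivity
  have cover : Metric.thickening t Crit ⊆
      ⋃ i : Fin m, ⋃ k : Fin (d - 1) → Fin (n + 1),
        closedBall (g i fun a => (k a : ℝ) / n) (((L : ℝ) + 1) * t) := by
    intro x hx
    obtain ⟨z, hz, hdz⟩ := mem_thickening_iff.mp hx
    obtain ⟨i, hi⟩ := mem_iUnion.mp (hC hz)
    obtain ⟨q, hq, rfl⟩ := hi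
    have hq' : ∀ a, q a ∈ Set.Icc (0 : ℝ) 1 := fun a => hq a (Set.mem_univ a)
    have hk : ∀ a : Fin (d - 1), ⌊q a * n⌋₊ < n + 1 := by
      intro a
      have : q a * n ≤ n := by
        have := (hq' a).2
        nlinarith
      calc ⌊q a * n⌋₊ ≤ ⌊(n : ℝ)⌋₊ := Nat.floor_le_floor this
      _ = n := Nat.floor_natCast n
      _ < n + 1 := Nat.lt_succ_self n
    refine mem_iUnion.mpr ⟨i, mem_iUnion.mpr ⟨fun a => ⟨⌊q a * n⌋₊, hk a⟩, ?_⟩⟩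
    set p : (Fin (d - 1)) → ℝ := fun a => ((⌊q a * n⌋₊ : ℝ)) / n with hpdef
    have hqp : dist q p ≤ 1 / n := by
      rw [dist_pi_le_iff (by positivity)]
      intro a
      rw [Real.dist_eq, abs_le]
      have hfl1 : (⌊q a * n⌋₊ : ℝ) ≤ q a * n := Nat.floor_le (by nlinarith [(hq' a).1])
      have hfl2 : q a * n - 1 < (⌊q a * n⌋₊ : ℝ) := Nat.sub_one_lt_floor _
      constructor
      · rw [hpdef]
        have : (⌊q a * n⌋₊ : ℝ) / n ≤ q a := by
          rw [div_le_iff₀ hn0]; linarith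
        linarith [le_of_lt (by positivity : (0:ℝ) < 1 / n)]
      · rw [hpdef]
        have hexp : (q a - 1 / (n : ℝ)) * n = q a * n - 1 := by field_simp
        have : q a - 1 / n ≤ (⌊q a * n⌋₊ : ℝ) / n := by
          rw [le_div_iff₀ hn0, hexp]; linarith
        linarith
    have hgq : dist (g i q) (g i p) ≤ (L : ℝ) * t := by
      calc dist (g i q) (g i p) ≤ (L : ℝ) * dist q p := (hgL i).dist_le_mul q p
      _ ≤ (L : ℝ) * (1 / n) := by gcongr
      _ ≤ (L : ℝ) * t := by gcongr
    have : dist x (g i p) ≤ ((L : ℝ) + 1) * t := by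
      calc dist x (g i p) ≤ dist x (g i q) + dist (g i q) (g i p) := dist_triangle _ _ _
      _ ≤ t + (L : ℝ) * t := add_le_add hdz.le hgq
      _ = ((L : ℝ) + 1) * t := by ring
    exact mem_closedBall.mpr this
  -- volume estimate
  have hball : ∀ (y : Ed d), volume (closedBall y (((L : ℝ) + 1) * t)) =
      ENNReal.ofReal ((((L : ℝ) + 1) * t) ^ d) * ENNReal.ofReal V := by
    intro y
    rw [Measure.addHaar_closedBall volume y hLt, hVdef,
      ENNReal.ofReal_toReal measure_ball_lt_top.ne]
    congr 2
    rw [finrank_euclideanSpace_fin]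
  calc volume (Metric.thickening t Crit)
      ≤ volume (⋃ i : Fin m, ⋃ k : Fin (d - 1) → Fin (n + 1),
        closedBall (g i fun a => (k a : ℝ) / n) (((L : ℝ) + 1) * t)) := measure_mono cover
    _ ≤ ∑' i : Fin m, volume (⋃ k : Fin (d - 1) → Fin (n + 1),
        closedBall (g i fun a => (k a : ℝ) / n) (((L : ℝ) + 1) * t)) := measure_iUnion_le _
    _ ≤ ∑' i : Fin m, ∑' k : Fin (d - 1) → Fin (n + 1),
        volume (closedBall (g i fun a => (k a : ℝ) / n) (((L : ℝ) + 1) * t)) :=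
        ENNReal.tsum_le_tsum fun i => measure_iUnion_le _
    _ = ∑' _i : Fin m, ∑' _k : Fin (d - 1) → Fin (n + 1),
        (ENNReal.ofReal ((((L : ℝ) + 1) * t) ^ d) * ENNReal.ofReal V) := by
        congr 1; ext i; congr 1; ext k; exact hball _
    _ = (m : ℝ≥0∞) * ((n + 1 : ℕ) ^ (d - 1) : ℕ) *
        (ENNReal.ofReal ((((L : ℝ) + 1) * t) ^ d) * ENNReal.ofReal V) := by
        rw [tsum_fintype]
        simp only [tsum_fintype, Finset.sum_const, Finset.card_univ, Fintype.card_fun,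
          Fintype.card_fin, nsmul_eq_mul]
        push_cast
        ring
    _ ≤ ENNReal.ofReal ((c0 + 1) * t) := by
        have e1 : ((m : ℝ≥0∞)) = ENNReal.ofReal (m : ℝ) := (ENNReal.ofReal_natCast m).symm
        have e2 : (((n + 1 : ℕ) ^ (d - 1) : ℕ) : ℝ≥0∞)
            = ENNReal.ofReal (((n : ℝ) + 1) ^ (d - 1)) := by
          rw [← ENNReal.ofReal_natCast]
          congr 1
          push_cast
          ring
        rw [e1, e2, ← ENNReal.ofReal_mul (by positivity), ← ENNReal.ofReal_mul (by positivity),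
          ← ENNReal.ofReal_mul (by positivity)]
        apply ENNReal.ofReal_le_ofReal
        have hpow : ((n : ℝ) + 1) ^ (d - 1) ≤ (3 / t) ^ (d - 1) := by
          gcongr
        have htd : t ^ d = t ^ (d - 1) * t := by
          conv_lhs => rw [show d = (d - 1) + 1 by omega]
          rw [pow_succ]
        calc (m : ℝ) * ((n : ℝ) + 1) ^ (d - 1) * ((((L : ℝ) + 1) * t) ^ d * V)
            ≤ (m : ℝ) * (3 / t) ^ (d - 1) * ((((L : ℝ) + 1) * t) ^ d * V) := by gcongr
          _ = c0 * t := by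
              rw [hc0def, mul_pow ((L : ℝ) + 1) t, div_pow, htd]
              field_simp
          _ ≤ (c0 + 1) * t := by nlinarith

lemma crit_null {d : ℕ} {Crit : Set (Ed d)} {c : ℝ} (hc : 0 < c)
    (hb : ∀ t : ℝ, 0 < t → t ≤ 1 →
      volume (Metric.thickening t Crit) ≤ ENNReal.ofReal (c * t)) :
    volume Crit = 0 := by
  by_contra h
  have hle : ∀ t : ℝ, 0 < t → t ≤ 1 → volume Crit ≤ ENNReal.ofReal (c * t) := fun t ht ht1 =>
    le_trans (measure_mono (Metric.self_subset_thickening ht Crit)) (hb t ht ht1)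
  have hfin : volume Crit ≠ ⊤ :=
    ne_top_of_le_ne_top ENNReal.ofReal_ne_top (hle 1 one_pos le_rfl)
  set e : ℝ := (volume Crit).toReal with he
  have he0 : 0 < e := ENNReal.toReal_pos h hfin
  set t : ℝ := min 1 (e / (2 * c)) with ht
  have ht0 : 0 < t := lt_min one_pos (by positivity)
  have ht1 : t ≤ 1 := min_le_left _ _
  have h1 : volume Crit ≤ ENNReal.ofReal (c * t) := hle t ht0 ht1
  have h2 : c * t ≤ e / 2 := by
    have : t ≤ e / (2 * c) := min_le_right _ _
    calc c * t ≤ c * (e / (2 * c)) := by gcongr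
    _ = e / 2 := by field_simp
  have h3 : volume Crit = ENNReal.ofReal e := (ENNReal.ofReal_toReal hfin).symm
  rw [h3] at h1
  have h4 : e ≤ e / 2 := by
    have := (ENNReal.ofReal_le_ofReal_iff (by positivity)).mp
      (le_trans h1 (ENNReal.ofReal_le_ofReal h2))
    linarith [this]
  linarith

lemma dfinv_bounds {d : ℕ} (hd : 0 < d) (D : H1Data d) {x : Ed d}
    (hx : x ∈ D.X \ D.Crit) :
    0 < infDist x D.Crit ∧
      D.B⁻¹ * infDist x D.Crit ^ D.β ≤ ‖D.DfInv x‖ ∧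
      ‖D.DfInv x‖ ≤ D.B * infDist x D.Crit ^ (-D.β) := by
  have hB0 : (0 : ℝ) < D.B := lt_trans one_pos D.one_lt_B
  have hβ := D.beta_pos
  set ρ : ℝ := infDist x D.Crit with hρ
  have hρ0 : 0 ≤ ρ := infDist_nonneg
  set v0 : Ed d := EuclideanSpace.single ⟨0, hd⟩ (1 : ℝ) with hv0def
  have hv0 : ‖v0‖ = 1 := by
    rw [hv0def, EuclideanSpace.norm_single]; norm_num
  have hv0ne : v0 ≠ 0 := fun h => by simp [h] at hv0
  have hleft : ∀ v : Ed d, D.DfInv x (D.Df x v) = v := fun v => by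
    have := ContinuousLinearMap.ext_iff.mp (D.inv_left x hx) v
    simpa using this
  have hright : ∀ v : Ed d, D.Df x (D.DfInv x v) = v := fun v => by
    have := ContinuousLinearMap.ext_iff.mp (D.inv_right x hx) v
    simpa using this
  have hρpos : 0 < ρ := by
    rcases eq_or_lt_of_le hρ0 with h0 | h0
    · exfalso
      have hub := (D.deriv_bound x hx v0).2
      rw [← hρ, ← h0, Real.zero_rpow (by linarith : -D.β ≠ 0), mul_zero, zero_mul] at hub
      have h2 : D.Df x v0 = 0 := norm_le_zero_iff.mp hub
      have h3 := hleft v0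
      rw [h2, map_zero] at h3
      exact hv0ne h3.symm
    · exact h0
  have hρβ : (0 : ℝ) < ρ ^ D.β := Real.rpow_pos_of_pos hρpos _
  have hρβ' : (0 : ℝ) < ρ ^ (-D.β) := Real.rpow_pos_of_pos hρpos _
  have hprod : ρ ^ (-D.β) * ρ ^ D.β = 1 := by
    rw [← Real.rpow_add hρpos]; simp
  have key : D.B * ρ ^ (-D.β) * (D.B⁻¹ * ρ ^ D.β) = 1 := by
    calc D.B * ρ ^ (-D.β) * (D.B⁻¹ * ρ ^ D.β)
        = (D.B * D.B⁻¹) * (ρ ^ (-D.β) * ρ ^ D.β) := by ring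
      _ = 1 := by rw [mul_inv_cancel₀ hB0.ne', hprod, one_mul]
  refine ⟨hρpos, ?_, ?_⟩
  · -- lower bound on ‖DfInv x‖
    have hub := (D.deriv_bound x hx (D.DfInv x v0)).2
    rw [hright v0, hv0] at hub
    have hnv : ‖D.DfInv x v0‖ ≤ ‖D.DfInv x‖ := by
      calc ‖D.DfInv x v0‖ ≤ ‖D.DfInv x‖ * ‖v0‖ := (D.DfInv x).le_opNorm v0
      _ = ‖D.DfInv x‖ := by rw [hv0, mul_one]
    have h1 : 1 ≤ D.B * ρ ^ (-D.β) * ‖D.DfInv x‖ := by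
      rw [← hρ] at hub
      nlinarith [hub, hnv, mul_pos hB0 hρβ']
    have e : D.B⁻¹ * ρ ^ D.β * (D.B * ρ ^ (-D.β) * ‖D.DfInv x‖) = ‖D.DfInv x‖ := by
      linear_combination ‖D.DfInv x‖ * key
    calc D.B⁻¹ * ρ ^ D.β = D.B⁻¹ * ρ ^ D.β * 1 := (mul_one _).symm
      _ ≤ D.B⁻¹ * ρ ^ D.β * (D.B * ρ ^ (-D.β) * ‖D.DfInv x‖) := by
          have : (0 : ℝ) ≤ D.B⁻¹ * ρ ^ D.β := by positivity
          nlinarith [h1, this]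
      _ = ‖D.DfInv x‖ := e
  · -- upper bound on ‖DfInv x‖
    apply ContinuousLinearMap.opNorm_le_bound _ (by positivity)
    intro w
    have hlb := (D.deriv_bound x hx (D.DfInv x w)).1
    rw [hright w, ← hρ] at hlb
    have e2 : D.B * ρ ^ (-D.β) * (D.B⁻¹ * ρ ^ D.β * ‖D.DfInv x w‖) = ‖D.DfInv x w‖ := by
      linear_combination ‖D.DfInv x w‖ * key
    calc ‖D.DfInv x w‖
        = D.B * ρ ^ (-D.β) * (D.B⁻¹ * ρ ^ D.β * ‖D.DfInv x w‖) := e2.symm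
      _ ≤ D.B * ρ ^ (-D.β) * ‖w‖ := by
          have : (0 : ℝ) ≤ D.B * ρ ^ (-D.β) := by positivity
          nlinarith [hlb, this]



lemma measurable_rpow_const_of_nonneg {α : Type*} [MeasurableSpace α] {f : α → ℝ}
    (hf : Measurable f) {c : ℝ} (hc : c ≠ 0) (hf0 : ∀ x, 0 ≤ f x) :
    Measurable fun x => f x ^ c := by
  have heq : (fun x => f x ^ c) = fun x =>
      if f x = 0 then 0 else Real.exp (Real.log (f x) * c) := by
    funext x
    rcases eq_or_ne (f x) 0 with h | h
    · simp [h, Real.zero_rpow hc]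
    · have hpos : 0 < f x := lt_of_le_of_ne (hf0 x) (Ne.symm h)
      simp [h, Real.rpow_def_of_pos hpos]
  rw [heq]
  exact Measurable.ite (hf (measurableSet_singleton 0)) measurable_const
    (Real.measurable_exp.comp ((Real.measurable_log.comp hf).mul_const c))

/-- Under (H1), with `g = log ‖df⁻¹‖`: for `0 < θ < 1/β`,
`∫_{B_δ(𝒞)} e^{θ g} dx ≲ δ^{1 - βθ}`, and `g` is uniformly bounded away from the
critical set. -/
theorem exp_log_deriv_inv_integrable {d : ℕ} (hd : 0 < d) (D : H1Data d)
    (θ : ℝ) (hθ : 0 < θ) (hθβ : θ < 1 / D.β) :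
    (∃ K > 0, ∃ δ0 > 0, ∀ δ : ℝ, 0 < δ → δ ≤ δ0 →
      (∫ x in D.X ∩ Metric.thickening δ D.Crit,
          Real.exp (θ * Real.log ‖D.DfInv x‖))
        ≤ K * δ ^ (1 - D.β * θ)) ∧
    ∀ δ : ℝ, 0 < δ → ∃ M : ℝ, ∀ x ∈ D.X \ Metric.thickening δ D.Crit,
      |Real.log ‖D.DfInv x‖| ≤ M := by
  have hB0 : (0 : ℝ) < D.B := lt_trans one_pos D.one_lt_B
  have hβ := D.beta_pos
  constructor
  · -- integral bound near the critical set
    obtain ⟨m, g, L, _hg1, hgL, hCsub⟩ := D.crit_structure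
    obtain ⟨c, hc0, hcb⟩ := vol_thickening_aux hd g L hgL D.Crit hCsub
    have hCritnull : volume D.Crit = 0 := crit_null hc0 hcb
    set γ : ℝ := D.β * θ with hγdef
    have hγ0 : 0 < γ := mul_pos hβ hθ
    have hγ1 : γ < 1 := by
      rw [lt_div_iff₀ hβ] at hθβ; rw [hγdef]; linarith
    set ρ0 : ℝ := (1 / 2 : ℝ) ^ (1 - γ) with hρ0def
    have hρ00 : 0 ≤ ρ0 := Real.rpow_nonneg (by norm_num) _
    have hρ01 : ρ0 < 1 := Real.rpow_lt_one (by norm_num) (by norm_num) (by linarith)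
    have h1ρ : 0 < 1 - ρ0 := by linarith
    have hBθ : (0 : ℝ) < D.B ^ θ := Real.rpow_pos_of_pos hB0 θ
    set K : ℝ := 2 * c * D.B ^ θ * (1 - ρ0)⁻¹ with hKdef
    have hK0 : 0 < K := by positivity
    refine ⟨K, hK0, 1, one_pos, fun δ hδ hδ1 => ?_⟩
    set S : Set (Ed d) := D.X ∩ Metric.thickening δ D.Crit with hSdef
    have hSmeas : MeasurableSet S :=
      D.compact_X.isClosed.measurableSet.inter isOpen_thickening.measurableSet
    set G : Ed d → ℝ := fun x => D.B ^ θ * infDist x D.Crit ^ (-γ) with hGdef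
    have hGnn : ∀ x, 0 ≤ G x := fun x =>
      mul_nonneg hBθ.le (Real.rpow_nonneg infDist_nonneg _)
    have hGmeas : Measurable G :=
      (measurable_rpow_const_of_nonneg (continuous_infDist_pt D.Crit).measurable
        (by linarith : -γ ≠ 0) fun _ => infDist_nonneg).const_mul _
    -- the key lintegral estimate
    have hlin : ∫⁻ x in S, ENNReal.ofReal (G x) ≤ ENNReal.ofReal (K * δ ^ (1 - γ)) := by
      set s : ℕ → ℝ := fun j => δ * (1 / 2 : ℝ) ^ (j + 1) with hsdef
      have hs0 : ∀ j, 0 < s j := fun j => by rw [hsdef]; positivity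
      have h2s : ∀ j, 2 * s j = δ * (1 / 2 : ℝ) ^ j := fun j => by
        rw [hsdef]; simp only; rw [pow_succ]; ring
      set A : ℕ → Set (Ed d) :=
        fun j => {x | s j ≤ infDist x D.Crit ∧ infDist x D.Crit < 2 * s j} with hAdef
      have hAmeas : ∀ j, MeasurableSet (A j) := fun j =>
        (continuous_infDist_pt D.Crit).measurable measurableSet_Ico
      set Z : Set (Ed d) := {x | infDist x D.Crit = 0} with hZdef
      have hZmeas : MeasurableSet Z :=
        (continuous_infDist_pt D.Crit).measurable (measurableSet_singleton 0)
      have hcover : S ⊆ Z ∪ ⋃ j, A j := by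
        intro x hx
        rcases eq_or_lt_of_le (infDist_nonneg : 0 ≤ infDist x D.Crit) with h0 | h0
        · exact Or.inl h0.symm
        · right
          have hCne : D.Crit.Nonempty := by
            rcases D.Crit.eq_empty_or_nonempty with he | hne
            · rw [he, infDist_empty] at h0; exact absurd h0 (lt_irrefl 0)
            · exact hne
          have hdlt : infDist x D.Crit < δ :=
            (Metric.mem_thickening_iff_infDist_lt hCne).mp hx.2
          have hex : ∃ j, s j ≤ infDist x D.Crit := by
            obtain ⟨J, hJ⟩ := exists_pow_lt_of_lt_one (div_pos h0 hδ)
              (by norm_num : (1 / 2 : ℝ) < 1)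
            refine ⟨J, ?_⟩
            have h1 : δ * (1 / 2 : ℝ) ^ J < infDist x D.Crit := by
              have hcancel : infDist x D.Crit / δ * δ = infDist x D.Crit :=
                div_mul_cancel₀ _ hδ.ne'
              nlinarith [hJ, hδ, hcancel]
            have h2 : s J ≤ δ * (1 / 2 : ℝ) ^ J := by
              rw [hsdef]; simp only
              have hp : (0:ℝ) < (1 / 2 : ℝ) ^ J := by positivity
              rw [pow_succ]
              nlinarith
            linarith
          have hj0 := Nat.find_spec hex
          refine mem_iUnion.mpr ⟨Nat.find hex, hj0, ?_⟩
          rcases Nat.eq_zero_or_pos (Nat.find hex) with hz | hpos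
          · rw [hz, h2s 0, pow_zero, mul_one]; exact hdlt
          · obtain ⟨k, hk⟩ := Nat.exists_eq_succ_of_ne_zero hpos.ne'
            have hmin := Nat.find_min hex (by omega : k < Nat.find hex)
            push_neg at hmin
            rw [hk, h2s (k + 1)]
            rw [hsdef] at hmin
            exact hmin
      calc ∫⁻ x in S, ENNReal.ofReal (G x)
          ≤ ∫⁻ x in Z ∪ ⋃ j, A j, ENNReal.ofReal (G x) := lintegral_mono_set hcover
        _ ≤ (∫⁻ x in Z, ENNReal.ofReal (G x)) +
            ∫⁻ x in ⋃ j, A j, ENNReal.ofReal (G x) := lintegral_union_le _ _ _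
        _ = ∫⁻ x in ⋃ j, A j, ENNReal.ofReal (G x) := by
            have hZ0 : ∫⁻ x in Z, ENNReal.ofReal (G x) = 0 := by
              rw [setLIntegral_congr_fun hZmeas
                (fun x (hx : x ∈ Z) => ?_), lintegral_zero]
              rw [hGdef]; simp only
              rw [show infDist x D.Crit = 0 from hx,
                Real.zero_rpow (by linarith : -γ ≠ 0), mul_zero, ENNReal.ofReal_zero]
            rw [hZ0, zero_add]
        _ ≤ ∑' j, ∫⁻ x in A j, ENNReal.ofReal (G x) := lintegral_iUnion_le _ _
        _ ≤ ∑' j : ℕ, ENNReal.ofReal ((2 * c * D.B ^ θ * δ ^ (1 - γ)) * ρ0 ^ j) := by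
            refine ENNReal.tsum_le_tsum fun j => ?_
            have hAsub : A j ⊆ Metric.thickening (2 * s j) D.Crit := by
              intro y hy
              have hCne : D.Crit.Nonempty := by
                rcases D.Crit.eq_empty_or_nonempty with he | hne
                · exfalso
                  have := hy.1
                  rw [he, infDist_empty] at this
                  exact absurd (lt_of_lt_of_le (hs0 j) this) (lt_irrefl 0)
                · exact hne
              exact (Metric.mem_thickening_iff_infDist_lt hCne).mpr hy.2
            have h2sle1 : 2 * s j ≤ 1 := by
              rw [h2s j]
              have h1 : (1 / 2 : ℝ) ^ j ≤ 1 := pow_le_one₀ (by norm_num) (by norm_num)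
              nlinarith
            have hvolA : volume (A j) ≤ ENNReal.ofReal (c * (2 * s j)) :=
              le_trans (measure_mono hAsub)
                (hcb _ (by positivity) h2sle1)
            have hss : s j ^ (-γ) * s j = s j ^ (1 - γ) := by
              nth_rewrite 2 [← Real.rpow_one (s j)]
              rw [← Real.rpow_add (hs0 j)]
              ring_nf
            have hs1γ : s j ^ (1 - γ) ≤ δ ^ (1 - γ) * ρ0 ^ j := by
              rw [hsdef]; simp only
              rw [Real.mul_rpow hδ.le (by positivity)]
              have hhalf : ((1 / 2 : ℝ) ^ (j + 1)) ^ (1 - γ) = ρ0 ^ (j + 1) := by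
                rw [← Real.rpow_natCast (1 / 2 : ℝ) (j + 1),
                  ← Real.rpow_mul (by norm_num : (0 : ℝ) ≤ 1 / 2),
                  ← Real.rpow_natCast ρ0 (j + 1), hρ0def,
                  ← Real.rpow_mul (by norm_num : (0 : ℝ) ≤ 1 / 2)]
                congr 1
                ring
              rw [hhalf, pow_succ]
              have hδγ : (0:ℝ) ≤ δ ^ (1 - γ) := Real.rpow_nonneg hδ.le _
              exact mul_le_mul_of_nonneg_left
                (mul_le_of_le_one_right (pow_nonneg hρ00 j) hρ01.le) hδγ
            calc ∫⁻ x in A j, ENNReal.ofReal (G x)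
                ≤ ∫⁻ _x in A j, ENNReal.ofReal (D.B ^ θ * s j ^ (-γ)) := by
                  refine setLIntegral_mono measurable_const fun x hx => ?_
                  refine ENNReal.ofReal_le_ofReal ?_
                  rw [hGdef]; simp only
                  exact mul_le_mul_of_nonneg_left
                    (Real.rpow_le_rpow_of_nonpos (hs0 j) hx.1 (by linarith)) hBθ.le
              _ = ENNReal.ofReal (D.B ^ θ * s j ^ (-γ)) * volume (A j) :=
                  setLIntegral_const _ _
              _ ≤ ENNReal.ofReal (D.B ^ θ * s j ^ (-γ)) * ENNReal.ofReal (c * (2 * s j)) := by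
                  gcongr
              _ = ENNReal.ofReal (D.B ^ θ * s j ^ (-γ) * (c * (2 * s j))) :=
                  (ENNReal.ofReal_mul (by positivity)).symm
              _ ≤ ENNReal.ofReal ((2 * c * D.B ^ θ * δ ^ (1 - γ)) * ρ0 ^ j) := by
                  refine ENNReal.ofReal_le_ofReal ?_
                  calc D.B ^ θ * s j ^ (-γ) * (c * (2 * s j))
                      = 2 * c * D.B ^ θ * (s j ^ (-γ) * s j) := by ring
                    _ = 2 * c * D.B ^ θ * s j ^ (1 - γ) := by rw [hss]
                    _ ≤ 2 * c * D.B ^ θ * (δ ^ (1 - γ) * ρ0 ^ j) :=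
                        mul_le_mul_of_nonneg_left hs1γ (by positivity)
                    _ = (2 * c * D.B ^ θ * δ ^ (1 - γ)) * ρ0 ^ j := by ring
        _ = ENNReal.ofReal (K * δ ^ (1 - γ)) := by
            have hCδ0 : (0:ℝ) ≤ 2 * c * D.B ^ θ * δ ^ (1 - γ) := by positivity
            calc ∑' j : ℕ, ENNReal.ofReal ((2 * c * D.B ^ θ * δ ^ (1 - γ)) * ρ0 ^ j)
                = ∑' j : ℕ, ENNReal.ofReal (2 * c * D.B ^ θ * δ ^ (1 - γ)) *
                    (ENNReal.ofReal ρ0) ^ j := by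
                  congr 1
                  funext j
                  rw [ENNReal.ofReal_mul hCδ0, ENNReal.ofReal_pow hρ00]
              _ = ENNReal.ofReal (2 * c * D.B ^ θ * δ ^ (1 - γ)) *
                    (1 - ENNReal.ofReal ρ0)⁻¹ := by
                  rw [ENNReal.tsum_mul_left, ENNReal.tsum_geometric]
              _ = ENNReal.ofReal (K * δ ^ (1 - γ)) := by
                  rw [show (1 : ℝ≥0∞) - ENNReal.ofReal ρ0 = ENNReal.ofReal (1 - ρ0) by
                      rw [ENNReal.ofReal_sub _ hρ00, ENNReal.ofReal_one],
                    ← ENNReal.ofReal_inv_of_pos h1ρ, ← ENNReal.ofReal_mul hCδ0]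
                  congr 1
                  rw [hKdef]
                  ring
    -- integrability of the dominating function
    have hGint : Integrable G (volume.restrict S) := by
      refine ⟨hGmeas.aestronglyMeasurable, ?_⟩
      rw [hasFiniteIntegral_iff_norm]
      calc ∫⁻ a in S, ENNReal.ofReal ‖G a‖
          = ∫⁻ a in S, ENNReal.ofReal (G a) :=
            lintegral_congr fun a => by rw [Real.norm_of_nonneg (hGnn a)]
        _ ≤ ENNReal.ofReal (K * δ ^ (1 - γ)) := hlin
        _ < ⊤ := ENNReal.ofReal_lt_top
    -- a.e. domination
    have hFG : ∀ᵐ x ∂volume.restrict S,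
        Real.exp (θ * Real.log ‖D.DfInv x‖) ≤ G x := by
      have hcritnull' : volume.restrict S D.Crit = 0 :=
        le_antisymm (le_trans (Measure.le_iff'.mp Measure.restrict_le_self D.Crit)
          hCritnull.le) (by positivity)
      have h2 : ∀ᵐ x ∂volume.restrict S, x ∉ D.Crit := by
        rw [ae_iff]
        simpa [not_not] using hcritnull'
      filter_upwards [ae_restrict_mem hSmeas, h2] with x hxS hxC
      obtain ⟨hρpos, hlow, hup⟩ := dfinv_bounds hd D ⟨hxS.1, hxC⟩
      have hlow0 : (0:ℝ) < D.B⁻¹ * infDist x D.Crit ^ D.β := by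
        have := Real.rpow_pos_of_pos hρpos D.β
        positivity
      have ht0 : 0 < ‖D.DfInv x‖ := lt_of_lt_of_le hlow0 hlow
      rw [show Real.exp (θ * Real.log ‖D.DfInv x‖) = ‖D.DfInv x‖ ^ θ by
        rw [Real.rpow_def_of_pos ht0, mul_comm]]
      rw [hGdef]; simp only
      calc ‖D.DfInv x‖ ^ θ
          ≤ (D.B * infDist x D.Crit ^ (-D.β)) ^ θ :=
            Real.rpow_le_rpow ht0.le hup hθ.le
        _ = D.B ^ θ * infDist x D.Crit ^ (-γ) := by
            rw [Real.mul_rpow hB0.le (Real.rpow_nonneg infDist_nonneg _),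
              ← Real.rpow_mul infDist_nonneg, hγdef, neg_mul]
    -- conclude
    have hrhs0 : (0:ℝ) ≤ K * δ ^ (1 - γ) :=
      mul_nonneg hK0.le (Real.rpow_nonneg hδ.le _)
    by_cases hFint : Integrable
        (fun x => Real.exp (θ * Real.log ‖D.DfInv x‖)) (volume.restrict S)
    · calc ∫ x in S, Real.exp (θ * Real.log ‖D.DfInv x‖)
          ≤ ∫ x in S, G x :=
            integral_mono_of_nonneg
              (Filter.Eventually.of_forall fun x => (Real.exp_pos _).le) hGint hFG
        _ = (∫⁻ x in S, ENNReal.ofReal (G x)).toReal :=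
            integral_eq_lintegral_of_nonneg_ae
              (Filter.Eventually.of_forall hGnn) hGmeas.aestronglyMeasurable
        _ ≤ (ENNReal.ofReal (K * δ ^ (1 - γ))).toReal :=
            ENNReal.toReal_mono ENNReal.ofReal_ne_top hlin
        _ = K * δ ^ (1 - γ) := ENNReal.toReal_ofReal hrhs0
    · rw [integral_undef hFint]
      exact hrhs0
  · -- uniform boundedness away from the critical set
    intro δ hδ
    refine ⟨max |Real.log (D.B⁻¹ * δ ^ D.β)| |Real.log (D.B * δ ^ (-D.β))|,
      fun x hx => ?_⟩
    have hxC : x ∉ D.Crit := fun h => hx.2 (Metric.self_subset_thickening hδ _ h)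
    obtain ⟨hρpos, hlow, hup⟩ := dfinv_bounds hd D ⟨hx.1, hxC⟩
    have hCne : D.Crit.Nonempty := by
      rcases D.Crit.eq_empty_or_nonempty with he | hne
      · rw [he, infDist_empty] at hρpos; exact absurd hρpos (lt_irrefl 0)
      · exact hne
    have hδρ : δ ≤ infDist x D.Crit := by
      by_contra hcon
      push_neg at hcon
      exact hx.2 ((Metric.mem_thickening_iff_infDist_lt hCne).mpr hcon)
    have hlow0 : (0:ℝ) < D.B⁻¹ * δ ^ D.β := by
      have := Real.rpow_pos_of_pos hδ D.β
      positivity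
    have ht0 : 0 < ‖D.DfInv x‖ := by
      have h1 : (0:ℝ) < D.B⁻¹ * infDist x D.Crit ^ D.β := by
        have := Real.rpow_pos_of_pos hρpos D.β
        positivity
      exact lt_of_lt_of_le h1 hlow
    have hup' : ‖D.DfInv x‖ ≤ D.B * δ ^ (-D.β) :=
      le_trans hup (mul_le_mul_of_nonneg_left
        (Real.rpow_le_rpow_of_nonpos hδ hδρ (neg_nonpos.mpr hβ.le)) hB0.le)
    have hlow' : D.B⁻¹ * δ ^ D.β ≤ ‖D.DfInv x‖ :=
      le_trans (mul_le_mul_of_nonneg_left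
        (Real.rpow_le_rpow hδ.le hδρ hβ.le) (inv_nonneg.mpr hB0.le)) hlow
    rw [abs_le]
    constructor
    · calc -(max |Real.log (D.B⁻¹ * δ ^ D.β)| |Real.log (D.B * δ ^ (-D.β))|)
          ≤ -|Real.log (D.B⁻¹ * δ ^ D.β)| := neg_le_neg (le_max_left _ _)
        _ ≤ Real.log (D.B⁻¹ * δ ^ D.β) := neg_abs_le _
        _ ≤ Real.log ‖D.DfInv x‖ := Real.log_le_log hlow0 hlow'
    · calc Real.log ‖D.DfInv x‖
          ≤ Real.log (D.B * δ ^ (-D.β)) := Real.log_le_log ht0 hup'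
        _ ≤ |Real.log (D.B * δ ^ (-D.β))| := le_abs_self _
        _ ≤ max |Real.log (D.B⁻¹ * δ ^ D.β)| |Real.log (D.B * δ ^ (-D.β))| :=
            le_max_right _ _


end
end

section
/- Under Hypothesis (H1), for each θ with 0 < θ < 1/(2β) the operator P_θ is a well-defined bounded linear operator from C^0(X) to C^0(X): one has ‖P_θ h‖_{C^0} ≤ ‖h‖_{C^0} · ‖e^{θg}‖_{L^1(dx)}/(2σ)^n, and for all x, y ∈ X, |P_θ h(x) − P_θ h(y)| ≤ K ‖h‖_{C^0} · (‖e^{2θg}‖_{L^1(dx)})^{1/2} · (Leb(B_σ(f(x)) Δ B_σ(f(y))))^{1/2}, where Δ denotes symmetric difference; in particular P_θ h is continuous whenever h is. -/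
open MeasureTheory Metric Set Filter
open scoped ENNReal NNReal symmDiff

noncomputable section

lemma aux_abs_coord_le {d : ℕ} (x : Ed d) (i : Fin d) : |x i| ≤ ‖x‖ := by
  rw [EuclideanSpace.norm_eq]
  calc |x i| = Real.sqrt (‖x i‖ ^ 2) := by
        rw [Real.sqrt_sq_eq_abs, Real.norm_eq_abs, abs_abs]
    _ ≤ _ := Real.sqrt_le_sqrt (Finset.single_le_sum (f := fun j => ‖x j‖ ^ 2)
        (fun j _ => sq_nonneg _) (Finset.mem_univ i))

lemma aux_cube_eq_cubeAt {d : ℕ} (σ : ℝ) : cube d σ = cubeAt d 0 σ := by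
  ext z; simp [cube, cubeAt]

lemma aux_cubeAt_eq {d : ℕ} (c : Ed d) (r : ℝ) :
    cubeAt d c r = ((MeasurableEquiv.toLp 2 (Fin d → ℝ)).symm) ⁻¹' (Set.univ.pi fun i => Icc (c i - r) (c i + r)) := by
  ext z
  simp only [cubeAt, mem_setOf_eq, mem_preimage, Set.mem_pi, mem_univ, forall_true_left, mem_Icc,
    MeasurableEquiv.coe_toLp_symm]
  refine forall_congr' fun i => ?_
  rw [abs_le]
  constructor <;> intro h <;> constructor <;> linarith [h.1, h.2]

lemma aux_cubeAt_meas {d : ℕ} (c : Ed d) (r : ℝ) : MeasurableSet (cubeAt d c r) := by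
  rw [aux_cubeAt_eq]
  exact (MeasurableEquiv.toLp 2 (Fin d → ℝ)).symm.measurable
    (MeasurableSet.univ_pi fun i => measurableSet_Icc)

lemma aux_cube_meas {d : ℕ} (σ : ℝ) : MeasurableSet (cube d σ) := by
  rw [aux_cube_eq_cubeAt]; exact aux_cubeAt_meas _ _

lemma aux_vol_cubeAt {d : ℕ} (c : Ed d) (r : ℝ) :
    volume (cubeAt d c r) = (ENNReal.ofReal (2 * r)) ^ d := by
  rw [aux_cubeAt_eq,
    (EuclideanSpace.volume_preserving_symm_measurableEquiv_toLp (Fin d)).measure_preimage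
      ((MeasurableSet.univ_pi fun i => measurableSet_Icc).nullMeasurableSet),
    volume_pi_pi]
  have : ∀ i : Fin d, c i + r - (c i - r) = 2 * r := fun i => by ring
  simp [Real.volume_Icc, this]

lemma aux_vol_cube {d : ℕ} (σ : ℝ) : volume (cube d σ) = (ENNReal.ofReal (2 * σ)) ^ d := by
  rw [aux_cube_eq_cubeAt, aux_vol_cubeAt]

lemma aux_image_cube {d : ℕ} (c : Ed d) (σ : ℝ) :
    (fun w => c + w) '' cube d σ = cubeAt d c σ := by
  ext z
  constructor
  · rintro ⟨w, hw, rfl⟩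
    intro i
    simpa using hw i
  · intro hz
    refine ⟨z - c, fun i => by simpa using hz i, by show c + (z - c) = z; rw [add_sub_cancel]⟩

lemma aux_shift_integral {d : ℕ} (c : Ed d) (σ : ℝ) (F : Ed d → ℝ) :
    ∫ z in cubeAt d c σ, F z = ∫ w in cube d σ, F (c + w) := by
  rw [← aux_image_cube c σ]
  exact (measurePreserving_add_left volume c).setIntegral_image_emb
    (MeasurableEquiv.addLeft c).measurableEmbedding F _

lemma aux_grid (N : ℕ) (hN : 1 ≤ N) {r : ℝ} (h0 : 0 ≤ r) (h1 : r ≤ 1) :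
    ∃ k : Fin N, |r - (k : ℝ) / N| ≤ 1 / N := by
  have hNpos : (0 : ℝ) < N := by exact_mod_cast hN
  by_cases hc : ⌊r * N⌋₊ < N
  · refine ⟨⟨⌊r * N⌋₊, hc⟩, ?_⟩
    have fl : (⌊r * N⌋₊ : ℝ) ≤ r * N := Nat.floor_le (by positivity)
    have fu : r * N < ⌊r * N⌋₊ + 1 := Nat.lt_floor_add_one _
    have e1 : ((⌊r * N⌋₊ : ℝ)) / N ≤ r := by
      rw [div_le_iff₀ hNpos]; linarith
    have e2 : r ≤ ((⌊r * N⌋₊ : ℝ)) / N + 1 / N := by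
      rw [← add_div, le_div_iff₀ hNpos]; linarith
    rw [abs_le]
    refine ⟨by push_cast; linarith, by push_cast; linarith⟩
  · push_neg at hc
    have h1' : (N : ℝ) ≤ r * N := by
      have := (Nat.le_floor_iff (by positivity : (0:ℝ) ≤ r * N)).mp hc
      exact_mod_cast this
    have hr1 : r = 1 := le_antisymm h1 (by nlinarith)
    refine ⟨⟨N - 1, by omega⟩, ?_⟩
    have : ((N - 1 : ℕ) : ℝ) = (N : ℝ) - 1 := by
      push_cast [Nat.cast_sub hN]; ring
    rw [hr1, this]
    have : 1 - ((N:ℝ) - 1) / N = 1 / N := by field_simp; ring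
    rw [this, abs_of_nonneg (by positivity)]

lemma aux_cover {d m : ℕ} (hm : m + 1 = d) (L : ℝ≥0) (g : (Fin m → ℝ) → Ed d)
    (hg : LipschitzWith L g) (t : ℝ) (ht0 : 0 < t) (ht2 : t ≤ 2) :
    volume {z : Ed d | infDist z (g '' (Set.univ.pi fun _ => Icc (0:ℝ) 1)) ≤ t}
      ≤ ENNReal.ofReal ((3 ^ m * (2 * ((L:ℝ) + 2)) ^ d) * t) := by
  set Q : Set (Fin m → ℝ) := Set.univ.pi fun _ => Icc (0:ℝ) 1 with hQ
  set S := g '' Q with hS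
  have hSne : S.Nonempty := ⟨g (fun _ => 0), ⟨fun _ => 0, fun i _ => by simp, rfl⟩⟩
  set N : ℕ := ⌈1 / t⌉₊ with hN
  have hN1 : 1 ≤ N := Nat.one_le_ceil_iff.mpr (by positivity)
  have hNpos : (0 : ℝ) < N := by exact_mod_cast hN1
  have hNt : 1 / (N : ℝ) ≤ t := by
    rw [div_le_iff₀ hNpos]
    have h1 : 1 / t ≤ (N : ℝ) := Nat.le_ceil _
    rw [div_le_iff₀ ht0] at h1
    linarith
  have hN3 : (N : ℝ) ≤ 3 / t := by
    have h2 : (N : ℝ) ≤ 1 / t + 1 := (Nat.ceil_lt_add_one (by positivity)).le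
    have h3 : (1 : ℝ) ≤ 2 / t := by rw [le_div_iff₀ ht0]; linarith
    have : 1 / t + 2 / t = 3 / t := by ring
    linarith
  -- the covering
  have key : {z : Ed d | infDist z S ≤ t} ⊆
      ⋃ a : Fin m → Fin N, cubeAt d (g fun i => (a i : ℝ) / N) (((L:ℝ) + 2) * t) := by
    intro z hz
    have h2t : infDist z S < 2 * t := lt_of_le_of_lt hz (by linarith)
    obtain ⟨s, hsS, hds⟩ := (infDist_lt_iff hSne).mp h2t
    obtain ⟨q, hq, rfl⟩ := hsS
    have hqi : ∀ i, q i ∈ Icc (0:ℝ) 1 := fun i => hq i (mem_univ i)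
    choose k hk using fun i => aux_grid N hN1 (hqi i).1 (hqi i).2
    refine mem_iUnion.mpr ⟨k, ?_⟩
    intro i
    have hdq : dist q (fun i => ((k i : ℝ) / N)) ≤ 1 / N := by
      rw [dist_pi_le_iff (by positivity)]
      intro j
      rw [Real.dist_eq]
      exact hk j
    have hgd : dist (g q) (g fun i => ((k i : ℝ) / N)) ≤ (L : ℝ) * t :=
      le_trans (hg.dist_le_mul _ _) (by
        have := mul_le_mul_of_nonneg_left (le_trans hdq hNt) (L.coe_nonneg)
        linarith)
    have hzz : dist z (g fun i => ((k i : ℝ) / N)) ≤ ((L:ℝ) + 2) * t := by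
      calc dist z (g fun i => ((k i : ℝ) / N)) ≤ dist z (g q) + dist (g q) _ := dist_triangle _ _ _
        _ ≤ 2 * t + (L : ℝ) * t := add_le_add hds.le hgd
        _ = ((L:ℝ) + 2) * t := by ring
    calc |z i - (g fun i => ((k i : ℝ) / N)) i| = |(z - g fun i => ((k i : ℝ) / N)) i| := by
          norm_num
      _ ≤ ‖z - g fun i => ((k i : ℝ) / N)‖ := aux_abs_coord_le _ i
      _ ≤ ((L:ℝ) + 2) * t := by rw [← dist_eq_norm]; exact hzz
  calc volume {z : Ed d | infDist z S ≤ t} ≤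
      volume (⋃ a : Fin m → Fin N, cubeAt d (g fun i => (a i : ℝ) / N) (((L:ℝ) + 2) * t)) :=
        measure_mono key
    _ ≤ ∑ a : Fin m → Fin N, volume (cubeAt d (g fun i => (a i : ℝ) / N) (((L:ℝ) + 2) * t)) := by
        refine le_trans (measure_iUnion_le _) ?_
        rw [tsum_fintype]
    _ = (N ^ m : ℕ) • (ENNReal.ofReal (2 * (((L:ℝ) + 2) * t))) ^ d := by
        simp [aux_vol_cubeAt, Finset.sum_const]
    _ ≤ ENNReal.ofReal ((3 ^ m * (2 * ((L:ℝ) + 2)) ^ d) * t) := by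
        rw [nsmul_eq_mul]
        rw [← ENNReal.ofReal_pow (by positivity), ← ENNReal.ofReal_natCast (N ^ m),
          ← ENNReal.ofReal_mul (by positivity)]
        apply ENNReal.ofReal_le_ofReal
        push_cast
        have h1 : ((N : ℝ)) ^ m ≤ (3 / t) ^ m := pow_le_pow_left₀ (by positivity) hN3 m
        have h2 : (2 * (((L:ℝ) + 2) * t)) ^ d = (2 * ((L:ℝ) + 2)) ^ d * t ^ d := by
          rw [← mul_pow]; ring_nf
        rw [h2]
        have h3 : (0:ℝ) ≤ (2 * ((L:ℝ) + 2)) ^ d * t ^ d := by positivity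
        calc (N:ℝ) ^ m * ((2 * ((L:ℝ) + 2)) ^ d * t ^ d)
            ≤ (3 / t) ^ m * ((2 * ((L:ℝ) + 2)) ^ d * t ^ d) := by
              exact mul_le_mul_of_nonneg_right h1 h3
          _ = 3 ^ m * (2 * ((L:ℝ) + 2)) ^ d * t := by
              rw [div_pow, ← hm, pow_succ]
              field_simp
              ring

lemma aux_layer {d : ℕ} (X' F : Set (Ed d)) (hXm : MeasurableSet X') (hXfin : volume X' < ⊤)
    (C s : ℝ) (hC : 0 ≤ C) (hs : 0 < s) (hs1 : s < 1)
    (hF : ∀ t : ℝ, 0 < t → t ≤ 1 → volume {z : Ed d | infDist z F ≤ t} ≤ ENNReal.ofReal (C * t)) :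
    ∫⁻ z in X', ENNReal.ofReal (infDist z F ^ (-s)) ∂volume < ⊤ := by
  set ψ : Ed d → ℝ := fun z => infDist z F with hψ
  have hψc : Continuous ψ := continuous_infDist_pt F
  set f : Ed d → ℝ≥0∞ := fun z => ENNReal.ofReal (ψ z ^ (-s)) with hf
  set Z0 : Set (Ed d) := X' ∩ {z | ψ z ≤ 0} with hZ0
  set Z1 : Set (Ed d) := X' ∩ {z | 1 < ψ z} with hZ1
  set A : ℕ → Set (Ed d) := fun k => X' ∩ {z | (1/2 : ℝ) ^ (k+1) < ψ z ∧ ψ z ≤ (1/2 : ℝ) ^ k}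
    with hA
  have hZ0m : MeasurableSet Z0 := hXm.inter (measurableSet_le hψc.measurable measurable_const)
  have hZ1m : MeasurableSet Z1 := hXm.inter (measurableSet_lt measurable_const hψc.measurable)
  have cover : X' ⊆ (Z0 ∪ Z1) ∪ ⋃ k, A k := by
    intro z hz
    rcases le_or_gt (ψ z) 0 with h0 | h0
    · exact Or.inl (Or.inl ⟨hz, h0⟩)
    rcases lt_or_ge 1 (ψ z) with h1 | h1
    · exact Or.inl (Or.inr ⟨hz, h1⟩)
    · have hex : ∃ n : ℕ, (1/2 : ℝ) ^ n < ψ z := exists_pow_lt_of_lt_one h0 (by norm_num)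
      right
      have hn0 : Nat.find hex ≠ 0 := by
        intro hcon
        have := Nat.find_spec hex
        rw [hcon] at this
        simp at this
        linarith
      obtain ⟨k, hk⟩ : ∃ k, Nat.find hex = k + 1 := ⟨Nat.find hex - 1, by omega⟩
      refine mem_iUnion.mpr ⟨k, hz, ?_, ?_⟩
      · have := Nat.find_spec hex; rwa [hk] at this
      · have := Nat.find_min hex (m := k) (by omega)
        exact not_lt.mp this
  have step1 : ∫⁻ z in X', f z ∂volume ≤
      (∫⁻ z in Z0, f z ∂volume + ∫⁻ z in Z1, f z ∂volume) + ∑' k, ∫⁻ z in A k, f z ∂volume := by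
    refine le_trans (lintegral_mono_set cover) ?_
    refine le_trans (lintegral_union_le _ _ _) ?_
    exact add_le_add (lintegral_union_le _ _ _) (lintegral_iUnion_le _ _)
  have e0 : ∫⁻ z in Z0, f z ∂volume = 0 := by
    have : ∀ᵐ z ∂volume, z ∈ Z0 → f z = 0 := by
      refine ae_of_all _ fun z hz => ?_
      have hz0 : ψ z = 0 := le_antisymm hz.2 infDist_nonneg
      simp [hf, hz0, Real.zero_rpow (by linarith : -s ≠ 0)]
    rw [setLIntegral_congr_fun_ae hZ0m this]
    simp
  have e1 : ∫⁻ z in Z1, f z ∂volume ≤ volume X' := by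
    have hb : ∫⁻ z in Z1, f z ∂volume ≤ ∫⁻ _ in Z1, (1 : ℝ≥0∞) ∂volume := by
      refine lintegral_mono_ae ?_
      rw [ae_restrict_iff' hZ1m]
      refine ae_of_all _ fun z hz => ?_
      simp only [hf]
      refine le_trans (ENNReal.ofReal_le_one.mpr ?_) le_rfl
      exact Real.rpow_le_one_of_one_le_of_nonpos hz.2.le (by linarith)
    refine le_trans hb ?_
    rw [setLIntegral_const]
    simpa using measure_mono (inter_subset_left : Z1 ⊆ X')
  have e2 : ∀ k : ℕ, ∫⁻ z in A k, f z ∂volume ≤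
      ENNReal.ofReal ((C * 2 ^ s) * ((2:ℝ) ^ (s-1)) ^ k) := by
    intro k
    have hAm : A k ⊆ {z : Ed d | ψ z ≤ (1/2:ℝ) ^ k} := fun z hz => hz.2.2
    have hpos : (0:ℝ) < (1/2 : ℝ) ^ (k+1) := by positivity
    have hb : ∀ z ∈ A k, f z ≤ ENNReal.ofReal (((1/2 : ℝ) ^ (k+1)) ^ (-s)) := by
      intro z hz
      exact ENNReal.ofReal_le_ofReal
        (Real.rpow_le_rpow_of_nonpos hpos hz.2.1.le (by linarith))
    have hAkm : MeasurableSet (A k) := by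
      refine hXm.inter (MeasurableSet.inter ?_ ?_)
      · exact measurableSet_lt measurable_const hψc.measurable
      · exact measurableSet_le hψc.measurable measurable_const
    calc ∫⁻ z in A k, f z ∂volume
        ≤ ∫⁻ _ in A k, ENNReal.ofReal (((1/2 : ℝ) ^ (k+1)) ^ (-s)) ∂volume := by
          refine lintegral_mono_ae ?_
          rw [ae_restrict_iff' hAkm]
          exact ae_of_all _ hb
      _ = ENNReal.ofReal (((1/2 : ℝ) ^ (k+1)) ^ (-s)) * volume (A k) := setLIntegral_const _ _
      _ ≤ ENNReal.ofReal (((1/2 : ℝ) ^ (k+1)) ^ (-s)) * ENNReal.ofReal (C * (1/2 : ℝ) ^ k) := by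
          refine mul_le_mul_right ?_ _
          refine le_trans (measure_mono (le_trans (fun z hz => hAm hz) le_rfl)) ?_
          exact hF ((1/2:ℝ)^k) (by positivity) (pow_le_one₀ (by norm_num) (by norm_num))
      _ = ENNReal.ofReal ((C * 2 ^ s) * ((2:ℝ) ^ (s-1)) ^ k) := by
          rw [← ENNReal.ofReal_mul (Real.rpow_nonneg hpos.le _)]
          congr 1
          -- real computation
          have h12 : ∀ n : ℕ, ((1/2 : ℝ) ^ n) = (2:ℝ) ^ (-(n:ℝ)) := by
            intro n
            rw [Real.rpow_neg (by norm_num : (0:ℝ) ≤ 2), Real.rpow_natCast, one_div, inv_pow]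
          have hr : ∀ n : ℕ, ((2:ℝ) ^ (s-1)) ^ n = (2:ℝ) ^ ((s-1) * n) := by
            intro n
            rw [← Real.rpow_natCast ((2:ℝ) ^ (s-1)) n, ← Real.rpow_mul (by norm_num)]
          rw [h12 (k+1), h12 k, ← Real.rpow_mul (by norm_num : (0:ℝ) ≤ 2), hr k]
          push_cast
          have h4 : -((k:ℝ)+1) * -s + -(k:ℝ) = s + (s-1) * (k:ℝ) := by ring
          calc (2:ℝ) ^ (-((k:ℝ)+1) * -s) * (C * 2 ^ (-(k:ℝ)))
              = C * ((2:ℝ) ^ (-((k:ℝ)+1) * -s) * 2 ^ (-(k:ℝ))) := by ring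
            _ = C * (2:ℝ) ^ (-((k:ℝ)+1) * -s + -(k:ℝ)) := by
                rw [← Real.rpow_add (by norm_num : (0:ℝ) < 2)]
            _ = C * (2:ℝ) ^ (s + (s-1) * (k:ℝ)) := by rw [h4]
            _ = C * ((2:ℝ) ^ s * (2:ℝ) ^ ((s-1) * (k:ℝ))) := by
                rw [Real.rpow_add (by norm_num : (0:ℝ) < 2)]
            _ = C * 2 ^ s * 2 ^ ((s-1) * (k:ℝ)) := by ring
  have sum2 : ∑' k, ∫⁻ z in A k, f z ∂volume ≤
      ENNReal.ofReal (C * 2 ^ s) * (1 - ENNReal.ofReal ((2:ℝ) ^ (s-1)))⁻¹ := by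
    refine le_trans (ENNReal.tsum_le_tsum e2) ?_
    have : ∀ k : ℕ, ENNReal.ofReal ((C * 2 ^ s) * ((2:ℝ) ^ (s-1)) ^ k) =
        ENNReal.ofReal (C * 2 ^ s) * (ENNReal.ofReal ((2:ℝ) ^ (s-1))) ^ k := by
      intro k
      rw [ENNReal.ofReal_mul (by positivity), ENNReal.ofReal_pow (by positivity)]
    simp_rw [this]
    rw [ENNReal.tsum_mul_left, ENNReal.tsum_geometric]
  have hrlt : ENNReal.ofReal ((2:ℝ) ^ (s-1)) < 1 :=
    ENNReal.ofReal_lt_one.mpr (Real.rpow_lt_one_of_one_lt_of_neg (by norm_num) (by linarith))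
  refine lt_of_le_of_lt step1 ?_
  refine ENNReal.add_lt_top.mpr ⟨ENNReal.add_lt_top.mpr ⟨?_, ?_⟩, ?_⟩
  · simp [e0]
  · exact lt_of_le_of_lt e1 hXfin
  · refine lt_of_le_of_lt sum2 ?_
    refine ENNReal.mul_lt_top ENNReal.ofReal_lt_top ?_
    rw [ENNReal.inv_lt_top]
    exact tsub_pos_iff_lt.mpr hrlt

lemma aux_cs {α : Type*} [MeasurableSpace α] (μ : Measure α) (S : Set α) (f g : α → ℝ)
    (hf : IntegrableOn f S μ) (hg : IntegrableOn g S μ) (hf0 : ∀ z, 0 ≤ f z)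
    (hfg : ∀ z, f z ^ 2 = g z) (hS : μ S ≠ ⊤) :
    ∫ z in S, f z ∂μ ≤ Real.sqrt (∫ z in S, g z ∂μ) * Real.sqrt ((μ S).toReal) := by
  set Q := ∫ z in S, g z ∂μ with hQdef
  set V := (μ S).toReal with hVdef
  have hQ0 : 0 ≤ Q := by
    refine integral_nonneg fun z => ?_
    rw [← hfg z]; positivity
  have hV0 : 0 ≤ V := ENNReal.toReal_nonneg
  rcases eq_or_lt_of_le hV0 with hV | hV
  · have hmS : μ S = 0 := by
      rcases (ENNReal.toReal_eq_zero_iff _).mp hV.symm with h | h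
      · exact h
      · exact absurd h hS
    rw [Measure.restrict_eq_zero.mpr hmS]
    simp
    positivity
  rcases eq_or_lt_of_le hQ0 with hQ | hQ
  · -- Q = 0 : f vanishes a.e.
    have hg0 : g =ᵐ[μ.restrict S] 0 := by
      refine (integral_eq_zero_iff_of_nonneg_ae ?_ hg).mp hQ.symm
      exact ae_of_all _ fun z => by rw [← hfg z]; positivity
    have hf0' : f =ᵐ[μ.restrict S] 0 := by
      filter_upwards [hg0] with z hz
      have : f z ^ 2 = 0 := by rw [hfg z, hz]; rfl
      have := pow_eq_zero_iff (n := 2) (by norm_num) |>.mp this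
      simpa using this
    rw [integral_congr_ae hf0']
    simp
    positivity
  · set sq := Real.sqrt Q with hsq
    set sv := Real.sqrt V with hsv
    have hsqpos : 0 < sq := Real.sqrt_pos.mpr hQ
    have hsvpos : 0 < sv := Real.sqrt_pos.mpr hV
    set a := sq / sv with ha
    have hapos : 0 < a := by positivity
    have pw : ∀ z, f z ≤ g z * (2 * a)⁻¹ + a / 2 := by
      intro z
      rw [← hfg z]
      have h2 := two_mul_le_add_sq (f z) a
      calc f z = (2 * f z * a) * (2 * a)⁻¹ := by field_simp
        _ ≤ (f z ^ 2 + a ^ 2) * (2 * a)⁻¹ := by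
            exact mul_le_mul_of_nonneg_right h2 (by positivity)
        _ = f z ^ 2 * (2 * a)⁻¹ + a / 2 := by field_simp
    have hint1 : IntegrableOn (fun z => g z * (2 * a)⁻¹ + a / 2) S μ := by
      refine Integrable.add (hg.mul_const _) ?_
      exact integrableOn_const hS
    have step : ∫ z in S, f z ∂μ ≤ ∫ z in S, (g z * (2 * a)⁻¹ + a / 2) ∂μ :=
      integral_mono_ae hf hint1 (ae_of_all _ pw)
    refine le_trans step ?_
    rw [integral_add (hg.mul_const _)
      (integrableOn_const hS),
      integral_mul_const, setIntegral_const]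
    have hQsq : Q = sq ^ 2 := (Real.sq_sqrt hQ0).symm
    have hVsv : V = sv ^ 2 := (Real.sq_sqrt hV0).symm
    rw [smul_eq_mul]
    have hfin : Q * (2*a)⁻¹ + V * (a/2) = sq * sv := by
      rw [hQsq, hVsv, ha]
      field_simp
      ring
    exact le_of_eq hfin

lemma aux_ofReal_max (x : ℝ) : ENNReal.ofReal x = ENNReal.ofReal (max x 0) := by
  rcases le_total 0 x with h | h
  · rw [max_eq_left h]
  · rw [max_eq_right h, ENNReal.ofReal_of_nonpos h]; simp

lemma aux_cubeAt_mono {d : ℕ} (c : Ed d) {r r' : ℝ} (h : r ≤ r') :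
    cubeAt d c r ⊆ cubeAt d c r' := fun z hz i => le_trans (hz i) h

lemma aux_diff_vol {d : ℕ} (σ ε : ℝ) (hσ : 0 ≤ σ) (hε : 0 ≤ ε) (a b : Ed d)
    (hab : ∀ i, |a i - b i| ≤ ε) :
    volume (cubeAt d a σ \ cubeAt d b σ) ≤
      ENNReal.ofReal ((2*σ)^d - (max (2*σ - 2*ε) 0)^d) := by
  have hsub : cubeAt d a σ \ cubeAt d b σ ⊆ cubeAt d a σ \ cubeAt d a (σ - ε) := by
    rintro z ⟨hz1, hz2⟩
    refine ⟨hz1, fun hz3 => hz2 fun i => ?_⟩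
    calc |z i - b i| ≤ |z i - a i| + |a i - b i| := abs_sub_le _ _ _
      _ ≤ (σ - ε) + ε := add_le_add (hz3 i) (hab i)
      _ = σ := by ring
  refine le_trans (measure_mono hsub) ?_
  rw [measure_diff (aux_cubeAt_mono a (by linarith)) (aux_cubeAt_meas a (σ - ε)).nullMeasurableSet
    (by rw [aux_vol_cubeAt]; exact ENNReal.pow_ne_top ENNReal.ofReal_ne_top)]
  rw [aux_vol_cubeAt, aux_vol_cubeAt]
  set m : ℝ := max (2*σ - 2*ε) 0 with hm
  have hm0 : 0 ≤ m := le_max_right _ _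
  have hmσ : m ≤ 2*σ := max_le (by linarith) (by linarith)
  have h1 : ENNReal.ofReal (2*(σ - ε)) = ENNReal.ofReal m := by
    rw [aux_ofReal_max (2*(σ-ε))]
    congr 1
    rw [hm]
    congr 1
    ring
  rw [h1]
  have hsub0 : (0:ℝ) ≤ (2*σ)^d - m^d := by
    have : m^d ≤ (2*σ)^d := pow_le_pow_left₀ hm0 hmσ d
    linarith
  rw [tsub_le_iff_right, ← ENNReal.ofReal_pow hm0, ← ENNReal.ofReal_add hsub0 (by positivity),
    sub_add_cancel, ← ENNReal.ofReal_pow (by linarith : (0:ℝ) ≤ 2*σ)]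

lemma aux_symm {d : ℕ} (σ : ℝ) (hσ : 0 ≤ σ) (c c' : Ed d) :
    volume (symmDiff (cubeAt d c σ) (cubeAt d c' σ)) ≤
      ENNReal.ofReal (2 * ((2*σ)^d - (max (2*σ - 2*dist c c') 0)^d)) := by
  set ε := dist c c' with hε
  have hε0 : 0 ≤ ε := dist_nonneg
  have hco : ∀ i, |c i - c' i| ≤ ε := by
    intro i
    have := aux_abs_coord_le (c - c') i
    rw [dist_eq_norm] at hε
    simpa using this.trans_eq hε.symm
  have hco' : ∀ i, |c' i - c i| ≤ ε := fun i => by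
    rw [abs_sub_comm]; exact hco i
  have hu0 : 0 ≤ (2*σ)^d - (max (2*σ - 2*ε) 0)^d := by
    have hm0 : (0:ℝ) ≤ max (2*σ - 2*ε) 0 := le_max_right _ _
    have : (max (2*σ - 2*ε) 0)^d ≤ (2*σ)^d :=
      pow_le_pow_left₀ hm0 (max_le (by linarith) (by linarith)) d
    linarith
  rw [Set.symmDiff_def]
  refine le_trans (measure_union_le _ _) ?_
  have h1 := aux_diff_vol σ ε hσ hε0 c c' hco
  have h2 := aux_diff_vol σ ε hσ hε0 c' c hco'
  calc volume (cubeAt d c σ \ cubeAt d c' σ) + volume (cubeAt d c' σ \ cubeAt d c σ)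
      ≤ ENNReal.ofReal ((2*σ)^d - (max (2*σ - 2*ε) 0)^d)
        + ENNReal.ofReal ((2*σ)^d - (max (2*σ - 2*ε) 0)^d) := add_le_add h1 h2
    _ = ENNReal.ofReal (2 * ((2*σ)^d - (max (2*σ - 2*ε) 0)^d)) := by
        rw [← ENNReal.ofReal_add hu0 hu0]
        congr 1
        ring


set_option maxHeartbeats 2000000

/-- `P_θ` is well defined and bounded on `C⁰(X)`: `‖P_θ h‖ ≤ ‖h‖ ‖e^{θg}‖_{L¹}/(2σ)^d`,
a Hölder-type modulus of continuity in terms of the symmetric difference of the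
noise cubes, and continuity of `P_θ h` on `X`. -/
theorem transfer_operator_well_defined {d : ℕ} (hd : 0 < d) (D : H1Data d)
    (σn : ℝ) (hσn : 0 < σn)
    (hmaps : ∀ x ∈ D.X, ∀ w ∈ cube d σn, D.f x + w ∈ D.X)
    (θ : ℝ) (hθ : 0 < θ) (hθβ : θ < 1 / (2 * D.β)) :
    ∃ K > 0, ∀ h : Ed d → ℝ, Continuous h → ∀ M : ℝ, (∀ x ∈ D.X, |h x| ≤ M) →
      (∀ x ∈ D.X, |transferFun D σn θ h x| ≤
        M * (∫ z in D.X, Real.exp (θ * Real.log ‖D.DfInv z‖)) / (2 * σn) ^ d) ∧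
      (∀ x ∈ D.X, ∀ y ∈ D.X,
        |transferFun D σn θ h x - transferFun D σn θ h y| ≤
          K * M * Real.sqrt (∫ z in D.X, Real.exp (2 * θ * Real.log ‖D.DfInv z‖)) *
            Real.sqrt
              ((volume (symmDiff (cubeAt d (D.f x) σn) (cubeAt d (D.f y) σn))).toReal)) ∧
      ContinuousOn (transferFun D σn θ h) D.X := by
  classical
  have hB0 : (0:ℝ) < D.B := lt_trans one_pos D.one_lt_B
  have hβ0 := D.beta_pos
  refine ⟨((2*σn)^d)⁻¹, by positivity, ?_⟩
  intro h hcont M hM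
  by_cases hXne : D.X.Nonempty
  swap
  · rw [Set.not_nonempty_iff_eq_empty] at hXne
    refine ⟨?_, ?_, ?_⟩
    · intro x hx; rw [hXne] at hx; exact absurd hx (Set.notMem_empty x)
    · intro x hx; rw [hXne] at hx; exact absurd hx (Set.notMem_empty x)
    · rw [hXne]; exact continuousOn_empty _
  obtain ⟨x0, hx0⟩ := hXne
  have hM0 : 0 ≤ M := le_trans (abs_nonneg _) (hM x0 hx0)
  have measX : MeasurableSet D.X := D.compact_X.isClosed.measurableSet
  have volXfin : volume D.X < ⊤ := D.compact_X.measure_lt_top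
  -- a nonzero vector
  set i0 : Fin d := ⟨0, hd⟩ with hi0
  set v0 : Ed d := EuclideanSpace.single i0 (1:ℝ) with hv0def
  have hv0 : v0 ≠ 0 := by
    intro hcon
    have h1 : v0 i0 = 1 := by simp [hv0def, EuclideanSpace.single_apply]
    rw [hcon] at h1
    simp at h1
  -- positivity of the distance to the critical set
  have hinf : ∀ x ∈ D.X \ D.Crit, 0 < infDist x D.Crit := by
    intro x hx
    rcases eq_or_lt_of_le (infDist_nonneg (s := D.Crit) (x := x)) with h0 | h0
    swap
    · exact h0
    exfalso
    have hb := (D.deriv_bound x hx v0).2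
    rw [← h0, Real.zero_rpow (by intro hc; rw [neg_eq_zero] at hc; linarith)] at hb
    have hDf0 : D.Df x v0 = 0 := by
      have hle : ‖D.Df x v0‖ ≤ 0 := by simpa using hb
      exact norm_le_zero_iff.mp hle
    have hid : D.DfInv x (D.Df x v0) = v0 := by
      have hcmp := D.inv_left x hx
      calc D.DfInv x (D.Df x v0) = ((D.DfInv x).comp (D.Df x)) v0 := rfl
        _ = v0 := by rw [hcmp]; rfl
    rw [hDf0] at hid
    simp at hid
    exact hv0 hid.symm
  have hDfInvpos : ∀ z ∈ D.X \ D.Crit, 0 < ‖D.DfInv z‖ := by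
    intro z hz
    refine norm_pos_iff.mpr ?_
    intro hcon
    have hid : D.DfInv z (D.Df z v0) = v0 := by
      have hcmp := D.inv_left z hz
      calc D.DfInv z (D.Df z v0) = ((D.DfInv z).comp (D.Df z)) v0 := rfl
        _ = v0 := by rw [hcmp]; rfl
    rw [hcon] at hid
    simp at hid
    exact hv0 hid.symm
  have hDfInvle : ∀ z ∈ D.X \ D.Crit, ‖D.DfInv z‖ ≤ D.B * infDist z D.Crit ^ (-D.β) := by
    intro z hz
    have hdz := hinf z hz
    refine ContinuousLinearMap.opNorm_le_bound _ (by positivity) ?_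
    intro u
    have hid : D.Df z (D.DfInv z u) = u := by
      have hcmp := D.inv_right z hz
      calc D.Df z (D.DfInv z u) = ((D.Df z).comp (D.DfInv z)) u := rfl
        _ = u := by rw [hcmp]; rfl
    have hlow := (D.deriv_bound z hz (D.DfInv z u)).1
    rw [hid] at hlow
    have hpos : 0 < D.B⁻¹ * infDist z D.Crit ^ D.β := by positivity
    calc ‖D.DfInv z u‖
        = (D.B⁻¹ * infDist z D.Crit ^ D.β)⁻¹ * (D.B⁻¹ * infDist z D.Crit ^ D.β * ‖D.DfInv z u‖) :=
          (inv_mul_cancel_left₀ hpos.ne' _).symm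
      _ ≤ (D.B⁻¹ * infDist z D.Crit ^ D.β)⁻¹ * ‖u‖ :=
          mul_le_mul_of_nonneg_left hlow (by positivity)
      _ = D.B * infDist z D.Crit ^ (-D.β) * ‖u‖ := by
          rw [mul_inv, inv_inv, Real.rpow_neg infDist_nonneg]
  -- continuity of log ‖DfInv‖ off the critical set
  have hlogcont : ContinuousOn (fun z => Real.log ‖D.DfInv z‖) (D.X \ D.Crit) := by
    intro x hx
    have hdx := hinf x hx
    rw [Metric.continuousWithinAt_iff]
    intro ε hε
    set c := D.B / infDist x D.Crit ^ D.β with hc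
    have hc0 : 0 < c := by positivity
    refine ⟨min (infDist x D.Crit / 2) (ε / (c+1)), by positivity, ?_⟩
    intro y hy hdisty
    have h1 : dist x y ≤ infDist x D.Crit / 2 := by
      rw [dist_comm]
      exact le_trans hdisty.le (min_le_left _ _)
    have h2 := D.logHolder_inv x hx y hy h1
    rw [Real.dist_eq]
    have h3 : dist x y < ε / (c+1) := by
      rw [dist_comm]
      exact lt_of_lt_of_le hdisty (min_le_right _ _)
    have h4 : c * (ε/(c+1)) ≤ ε := by
      rw [← mul_div_assoc, div_le_iff₀ (by positivity : (0:ℝ) < c+1)]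
      nlinarith
    have h5 : c * dist x y < c * (ε/(c+1)) := by
      exact mul_lt_mul_of_pos_left h3 hc0
    calc |Real.log ‖D.DfInv y‖ - Real.log ‖D.DfInv x‖|
        = |Real.log ‖D.DfInv x‖ - Real.log ‖D.DfInv y‖| := abs_sub_comm _ _
      _ ≤ c * dist x y := h2
      _ < ε := by linarith
  -- noise cube facts
  have hscal : ((volume (cube d σn))⁻¹).toReal = ((2*σn)^d)⁻¹ := by
    rw [aux_vol_cube, ← ENNReal.ofReal_pow (by positivity), ← ENNReal.ofReal_inv_of_pos (by positivity),
      ENNReal.toReal_ofReal (by positivity)]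
  have hsubX : ∀ x ∈ D.X, cubeAt d (D.f x) σn ⊆ D.X := by
    intro x hx
    rw [← aux_image_cube]
    rintro z ⟨w, hw, rfl⟩
    exact hmaps x hx w hw
  -- the critical set is contained in a null compact set
  have hCritne : D.Crit.Nonempty := by
    by_contra hcon
    rw [Set.not_nonempty_iff_eq_empty] at hcon
    have hx0' : x0 ∈ D.X \ D.Crit := ⟨hx0, by rw [hcon]; exact Set.notMem_empty x0⟩
    have hpos := hinf x0 hx0'
    rw [hcon, infDist_empty] at hpos
    exact lt_irrefl 0 hpos
  obtain ⟨nc, gc, L, hgC1, hgLip, hCsub⟩ := D.crit_structure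
  set Q1 : Set (Fin (d-1) → ℝ) := Set.univ.pi fun _ => Icc (0:ℝ) 1 with hQ1
  set F : Set (Ed d) := ⋃ i, gc i '' Q1 with hFdef
  have hmd : (d - 1) + 1 = d := by omega
  have hFc : IsCompact F := by
    apply isCompact_iUnion
    intro i
    exact ((isCompact_univ_pi fun _ => isCompact_Icc).image (hgC1 i).continuous)
  have hFclosed : IsClosed F := hFc.isClosed
  have hCF : D.Crit ⊆ F := hCsub
  have hFne : F.Nonempty := hCritne.mono hCF
  set C0 : ℝ := 3 ^ (d-1) * (2*((L:ℝ)+2))^d with hC0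
  have hC0pos : 0 < C0 := by positivity
  set CF : ℝ := nc * C0 * 2 with hCFdef
  have hCFnn : 0 ≤ CF := by positivity
  have hFt : ∀ t : ℝ, 0 < t → t ≤ 1 →
      volume {z : Ed d | infDist z F ≤ t} ≤ ENNReal.ofReal (CF * t) := by
    intro t ht0 ht1
    have hsub2 : {z : Ed d | infDist z F ≤ t} ⊆
        ⋃ i : Fin nc, {z : Ed d | infDist z (gc i '' Q1) ≤ 2*t} := by
      intro z hz
      have hlt : infDist z F < 2*t := lt_of_le_of_lt hz (by linarith)
      obtain ⟨p, hp, hdp⟩ := (infDist_lt_iff hFne).mp hlt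
      obtain ⟨i, hi⟩ := mem_iUnion.mp hp
      exact mem_iUnion.mpr ⟨i, le_trans (infDist_le_dist_of_mem hi) hdp.le⟩
    refine le_trans (measure_mono hsub2) ?_
    refine le_trans (measure_iUnion_le _) ?_
    rw [tsum_fintype]
    have hbound : ∀ i : Fin nc, volume {z : Ed d | infDist z (gc i '' Q1) ≤ 2*t} ≤
        ENNReal.ofReal (C0 * (2*t)) :=
      fun i => aux_cover hmd L (gc i) (hgLip i) (2*t) (by linarith) (by linarith)
    refine le_trans (Finset.sum_le_sum fun i _ => hbound i) ?_
    rw [Finset.sum_const, Finset.card_univ, Fintype.card_fin, nsmul_eq_mul,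
      ← ENNReal.ofReal_natCast nc, ← ENNReal.ofReal_mul (by positivity)]
    apply ENNReal.ofReal_le_ofReal
    rw [hCFdef]
    ring_nf
    exact le_refl _
  have hFnull : volume F = 0 := by
    have hb : ∀ n : ℕ, volume F ≤ ENNReal.ofReal (CF * (1/(n+1))) := by
      intro n
      refine le_trans (measure_mono ?_) (hFt (1/(n+1)) (by positivity) ?_)
      · intro z hz
        have : infDist z F = 0 := infDist_zero_of_mem hz
        simp only [mem_setOf_eq, this]
        positivity
      · rw [div_le_one (by positivity)]
        have : (0:ℝ) ≤ (n:ℝ) := Nat.cast_nonneg n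
        linarith
    have htt : Tendsto (fun n : ℕ => ENNReal.ofReal (CF * (1/(n+1)))) atTop (nhds 0) := by
      rw [show (0:ℝ≥0∞) = ENNReal.ofReal 0 by simp]
      apply ENNReal.tendsto_ofReal
      simpa using tendsto_one_div_add_atTop_nhds_zero_nat.const_mul CF
    have := ge_of_tendsto' htt hb
    exact le_antisymm this (zero_le)
  have hXF : D.X =ᵐ[volume] (D.X \ F) := by
    refine ae_eq_set.mpr ?_
    constructor
    · refine measure_mono_null ?_ hFnull
      intro z hz
      rcases hz with ⟨hz1, hz2⟩
      by_contra hzF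
      exact hz2 ⟨hz1, hzF⟩
    · exact measure_mono_null (fun z (hz : z ∈ (D.X \ F) \ D.X) => hz.2 hz.1.1) measure_empty
  -- integrability of exp(θ' log ‖DfInv‖) on X
  have hint : ∀ θ' : ℝ, 0 < θ' → θ' * D.β < 1 →
      IntegrableOn (fun z => Real.exp (θ' * Real.log ‖D.DfInv z‖)) D.X volume := by
    intro θ' hθ0 hθβ'
    have hXFm : MeasurableSet (D.X \ F) := measX.diff hFclosed.measurableSet
    have hφcont : ContinuousOn (fun z => Real.exp (θ' * Real.log ‖D.DfInv z‖)) (D.X \ F) := by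
      have h1 : ContinuousOn (fun z => Real.log ‖D.DfInv z‖) (D.X \ F) :=
        hlogcont.mono (fun z hz => ⟨hz.1, fun hc => hz.2 (hCF hc)⟩)
      exact Real.continuous_exp.comp_continuousOn (continuousOn_const.mul h1)
    constructor
    · rw [Measure.restrict_congr_set hXF]
      exact hφcont.aestronglyMeasurable hXFm
    · rw [Measure.restrict_congr_set hXF, hasFiniteIntegral_iff_norm]
      have hmeas2 : Measurable fun z : Ed d =>
          ENNReal.ofReal (D.B ^ θ') * ENNReal.ofReal (infDist z F ^ (-(θ' * D.β))) := by
        fun_prop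
      calc ∫⁻ z in D.X \ F, ENNReal.ofReal ‖Real.exp (θ' * Real.log ‖D.DfInv z‖)‖ ∂volume
          ≤ ∫⁻ z in D.X \ F,
              ENNReal.ofReal (D.B ^ θ') * ENNReal.ofReal (infDist z F ^ (-(θ' * D.β))) ∂volume := by
            refine setLIntegral_mono hmeas2 ?_
            intro z hz
            have hzC : z ∈ D.X \ D.Crit := ⟨hz.1, fun hc => hz.2 (hCF hc)⟩
            have hr := hDfInvpos z hzC
            have hφz : Real.exp (θ' * Real.log ‖D.DfInv z‖) = ‖D.DfInv z‖ ^ θ' := by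
              rw [Real.rpow_def_of_pos hr, mul_comm]
            have hFz : 0 < infDist z F := by
              rcases eq_or_lt_of_le (infDist_nonneg (s := F) (x := z)) with h0 | h0
              · exfalso
                refine hz.2 ?_
                rw [← hFclosed.closure_eq]
                exact (mem_closure_iff_infDist_zero hFne).mpr h0.symm
              · exact h0
            have hFC : infDist z F ≤ infDist z D.Crit := infDist_le_infDist_of_subset hCF hCritne
            have hbz : Real.exp (θ' * Real.log ‖D.DfInv z‖) ≤
                D.B ^ θ' * infDist z F ^ (-(θ' * D.β)) := by
              rw [hφz]
              calc ‖D.DfInv z‖ ^ θ' ≤ (D.B * infDist z D.Crit ^ (-D.β)) ^ θ' :=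
                    Real.rpow_le_rpow (norm_nonneg _) (hDfInvle z hzC) hθ0.le
                _ = D.B ^ θ' * (infDist z D.Crit ^ (-D.β)) ^ θ' :=
                    Real.mul_rpow hB0.le (Real.rpow_nonneg infDist_nonneg _)
                _ = D.B ^ θ' * infDist z D.Crit ^ (-(θ' * D.β)) := by
                    rw [← Real.rpow_mul infDist_nonneg]
                    congr 1
                    ring
                _ ≤ D.B ^ θ' * infDist z F ^ (-(θ' * D.β)) := by
                    refine mul_le_mul_of_nonneg_left ?_ (by positivity)
                    refine Real.rpow_le_rpow_of_nonpos hFz hFC ?_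
                    have : 0 < θ' * D.β := by positivity
                    linarith
            rw [Real.norm_eq_abs, abs_of_pos (Real.exp_pos _),
              ← ENNReal.ofReal_mul (by positivity)]
            exact ENNReal.ofReal_le_ofReal hbz
        _ = ENNReal.ofReal (D.B ^ θ') *
              ∫⁻ z in D.X \ F, ENNReal.ofReal (infDist z F ^ (-(θ' * D.β))) ∂volume :=
            lintegral_const_mul' _ _ ENNReal.ofReal_ne_top
        _ < ⊤ := by
            refine ENNReal.mul_lt_top ENNReal.ofReal_lt_top ?_
            refine lt_of_le_of_lt (lintegral_mono_set Set.diff_subset) ?_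
            exact aux_layer D.X F measX volXfin CF (θ' * D.β) hCFnn (by positivity) hθβ' hFt
  -- representation of the transfer operator
  have hrep : ∀ x : Ed d, transferFun D σn θ h x = ((2*σn)^d)⁻¹ *
      ∫ z in cubeAt d (D.f x) σn, Real.exp (θ * Real.log ‖D.DfInv z‖) * h z ∂volume := by
    intro x
    rw [aux_shift_integral (D.f x) σn (fun z => Real.exp (θ * Real.log ‖D.DfInv z‖) * h z)]
    unfold transferFun noiseMeasure
    rw [integral_smul_measure, hscal, smul_eq_mul]
  -- specialize integrability
  have hs2 : θ * D.β < 1/2 := by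
    have h2β : 0 < 2 * D.β := by linarith
    calc θ * D.β < (1/(2*D.β)) * D.β := mul_lt_mul_of_pos_right hθβ hβ0
      _ = 1/2 := by field_simp
  set φ1 : Ed d → ℝ := fun z => Real.exp (θ * Real.log ‖D.DfInv z‖) with hφ1
  set φ2 : Ed d → ℝ := fun z => Real.exp (2 * θ * Real.log ‖D.DfInv z‖) with hφ2
  have hi1 : IntegrableOn φ1 D.X volume := hint θ hθ (by linarith)
  have hi2 : IntegrableOn φ2 D.X volume := by
    have := hint (2*θ) (by linarith) (by rw [mul_assoc]; linarith)
    exact this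
  have hφ1pos : ∀ z, 0 < φ1 z := fun z => Real.exp_pos _
  have hφ2pos : ∀ z, 0 < φ2 z := fun z => Real.exp_pos _
  have hsq : ∀ z, φ1 z ^ 2 = φ2 z := by
    intro z
    simp only [hφ1, hφ2]
    rw [sq, ← Real.exp_add]
    congr 1
    ring
  set I1 := ∫ z in D.X, φ1 z with hI1
  set Q2 := ∫ z in D.X, φ2 z with hQ2
  have hI1nn : 0 ≤ I1 := integral_nonneg fun z => (hφ1pos z).le
  have hQ2nn : 0 ≤ Q2 := integral_nonneg fun z => (hφ2pos z).le
  -- integrability of the product and the basic bound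
  have hIφh : ∀ S : Set (Ed d), MeasurableSet S → S ⊆ D.X →
      IntegrableOn (fun z => φ1 z * h z) S volume := by
    intro S hSm hSX
    have hφS : IntegrableOn φ1 S volume := hi1.mono_set hSX
    refine Integrable.mono' (hφS.mul_const M) ?_ ?_
    · exact hφS.aestronglyMeasurable.mul (hcont.aestronglyMeasurable.restrict)
    · rw [ae_restrict_iff' hSm]
      refine ae_of_all _ fun z hz => ?_
      rw [Real.norm_eq_abs, abs_mul, abs_of_pos (hφ1pos z)]
      exact mul_le_mul_of_nonneg_left (hM z (hSX hz)) (hφ1pos z).le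
  have habs : ∀ S : Set (Ed d), MeasurableSet S → S ⊆ D.X →
      |∫ z in S, φ1 z * h z ∂volume| ≤ (∫ z in S, φ1 z ∂volume) * M := by
    intro S hSm hSX
    have h1 : |∫ z in S, φ1 z * h z ∂volume| ≤ ∫ z in S, φ1 z * M ∂volume := by
      rw [← Real.norm_eq_abs]
      refine norm_integral_le_of_norm_le ((hi1.mono_set hSX).mul_const M) ?_
      rw [ae_restrict_iff' hSm]
      refine ae_of_all _ fun z hz => ?_
      rw [Real.norm_eq_abs, abs_mul, abs_of_pos (hφ1pos z)]
      exact mul_le_mul_of_nonneg_left (hM z (hSX hz)) (hφ1pos z).le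
    rw [integral_mul_const] at h1
    exact h1
  -- the second (Hölder-type) bound, proved first
  have key2 : ∀ x ∈ D.X, ∀ y ∈ D.X,
      |transferFun D σn θ h x - transferFun D σn θ h y| ≤
        ((2*σn)^d)⁻¹ * M * Real.sqrt Q2 *
          Real.sqrt ((volume (symmDiff (cubeAt d (D.f x) σn) (cubeAt d (D.f y) σn))).toReal) := by
    intro x hx y hy
    set Sx := cubeAt d (D.f x) σn with hSx
    set Sy := cubeAt d (D.f y) σn with hSy
    have hAm : MeasurableSet Sx := aux_cubeAt_meas _ _
    have hBm : MeasurableSet Sy := aux_cubeAt_meas _ _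
    have hAX : Sx ⊆ D.X := hsubX x hx
    have hBX : Sy ⊆ D.X := hsubX y hy
    have hIA : IntegrableOn (fun z => φ1 z * h z) Sx volume := hIφh _ hAm hAX
    have hIB : IntegrableOn (fun z => φ1 z * h z) Sy volume := hIφh _ hBm hBX
    have hSDX : symmDiff Sx Sy ⊆ D.X := by
      refine le_trans symmDiff_le_sup ?_
      exact sup_le (le_trans le_sup_left (sup_le hAX hBX)) (le_trans le_sup_right (sup_le hAX hBX))
    have hSDfin : volume (symmDiff Sx Sy) ≠ ⊤ :=
      ((measure_mono hSDX).trans_lt volXfin).ne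
    rw [hrep x, hrep y, ← mul_sub]
    have hsplit : (∫ z in Sx, φ1 z * h z ∂volume) - (∫ z in Sy, φ1 z * h z ∂volume) =
        (∫ z in Sx \ Sy, φ1 z * h z ∂volume) - (∫ z in Sy \ Sx, φ1 z * h z ∂volume) := by
      rw [← integral_inter_add_diff hBm hIA, ← integral_inter_add_diff hAm hIB, inter_comm Sy Sx]
      ring
    have hunion : ∫ z in symmDiff Sx Sy, φ1 z ∂volume =
        (∫ z in Sx \ Sy, φ1 z ∂volume) + (∫ z in Sy \ Sx, φ1 z ∂volume) := by
      rw [Set.symmDiff_def]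
      exact setIntegral_union disjoint_sdiff_sdiff (hBm.diff hAm)
        (hi1.mono_set (fun z hz => hAX hz.1)) (hi1.mono_set (fun z hz => hBX hz.1))
    have hcs := aux_cs volume (symmDiff Sx Sy) φ1 φ2 (hi1.mono_set hSDX) (hi2.mono_set hSDX)
      (fun z => (hφ1pos z).le) hsq hSDfin
    have hQle : ∫ z in symmDiff Sx Sy, φ2 z ∂volume ≤ Q2 :=
      setIntegral_mono_set hi2 (ae_of_all _ fun z => (hφ2pos z).le)
        (HasSubset.Subset.eventuallyLE hSDX)
    have hb1 : |(∫ z in Sx, φ1 z * h z ∂volume) - (∫ z in Sy, φ1 z * h z ∂volume)| ≤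
        (∫ z in symmDiff Sx Sy, φ1 z ∂volume) * M := by
      rw [hsplit, hunion]
      calc |(∫ z in Sx \ Sy, φ1 z * h z ∂volume) - (∫ z in Sy \ Sx, φ1 z * h z ∂volume)|
          ≤ |∫ z in Sx \ Sy, φ1 z * h z ∂volume| + |∫ z in Sy \ Sx, φ1 z * h z ∂volume| :=
            abs_sub _ _
        _ ≤ (∫ z in Sx \ Sy, φ1 z ∂volume) * M + (∫ z in Sy \ Sx, φ1 z ∂volume) * M :=
            add_le_add (habs _ (hAm.diff hBm) (fun z hz => hAX hz.1))
              (habs _ (hBm.diff hAm) (fun z hz => hBX hz.1))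
        _ = ((∫ z in Sx \ Sy, φ1 z ∂volume) + (∫ z in Sy \ Sx, φ1 z ∂volume)) * M := by ring
    have hb2 : (∫ z in symmDiff Sx Sy, φ1 z ∂volume) * M ≤
        Real.sqrt Q2 * Real.sqrt ((volume (symmDiff Sx Sy)).toReal) * M := by
      refine mul_le_mul_of_nonneg_right (le_trans hcs ?_) hM0
      exact mul_le_mul_of_nonneg_right (Real.sqrt_le_sqrt hQle) (Real.sqrt_nonneg _)
    calc |((2*σn)^d)⁻¹ * ((∫ z in Sx, φ1 z * h z ∂volume) - (∫ z in Sy, φ1 z * h z ∂volume))|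
        = ((2*σn)^d)⁻¹ * |(∫ z in Sx, φ1 z * h z ∂volume) - (∫ z in Sy, φ1 z * h z ∂volume)| := by
          rw [abs_mul, abs_of_nonneg (by positivity : (0:ℝ) ≤ ((2*σn)^d)⁻¹)]
      _ ≤ ((2*σn)^d)⁻¹ * (Real.sqrt Q2 * Real.sqrt ((volume (symmDiff Sx Sy)).toReal) * M) :=
          mul_le_mul_of_nonneg_left (le_trans hb1 hb2) (by positivity)
      _ = ((2*σn)^d)⁻¹ * M * Real.sqrt Q2 * Real.sqrt ((volume (symmDiff Sx Sy)).toReal) := by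
          ring
  refine ⟨?_, key2, ?_⟩
  · -- the L¹ bound
    intro x hx
    rw [hrep x]
    have hA := hsubX x hx
    have hAm := aux_cubeAt_meas (D.f x) σn
    have h3 : ∫ z in cubeAt d (D.f x) σn, φ1 z ∂volume ≤ I1 :=
      setIntegral_mono_set hi1 (ae_of_all _ fun z => (hφ1pos z).le)
        (HasSubset.Subset.eventuallyLE hA)
    calc |((2*σn)^d)⁻¹ * ∫ z in cubeAt d (D.f x) σn, φ1 z * h z ∂volume|
        = ((2*σn)^d)⁻¹ * |∫ z in cubeAt d (D.f x) σn, φ1 z * h z ∂volume| := by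
          rw [abs_mul, abs_of_nonneg (by positivity : (0:ℝ) ≤ ((2*σn)^d)⁻¹)]
      _ ≤ ((2*σn)^d)⁻¹ * (I1 * M) := by
          refine mul_le_mul_of_nonneg_left ?_ (by positivity)
          exact le_trans (habs _ hAm hA) (mul_le_mul_of_nonneg_right h3 hM0)
      _ = M * I1 / (2*σn)^d := by
          rw [div_eq_mul_inv]
          ring
  · -- continuity
    intro x hx
    have hKMQ : (0:ℝ) ≤ ((2*σn)^d)⁻¹ * M * Real.sqrt Q2 := by positivity
    have hcx : ContinuousWithinAt D.f D.X x := D.cont_f x hx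
    set G : Ed d → ℝ := fun v => ((2*σn)^d)⁻¹ * M * Real.sqrt Q2 *
      Real.sqrt (2 * ((2*σn)^d - (max (2*σn - 2 * dist v (D.f x)) 0)^d)) with hG
    have hGcont : Continuous G := by
      apply continuous_const.mul
      apply Real.continuous_sqrt.comp
      apply continuous_const.mul
      apply continuous_const.sub
      apply Continuous.pow
      exact (continuous_const.sub (continuous_const.mul (continuous_id.dist continuous_const))).max
        continuous_const
    have hG0 : G (D.f x) = 0 := by
      simp only [hG, dist_self]
      rw [show 2*σn - 2*(0:ℝ) = 2*σn by ring, max_eq_left (by positivity : (0:ℝ) ≤ 2*σn)]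
      simp
    have hub : ∀ y ∈ D.X, |transferFun D σn θ h y - transferFun D σn θ h x| ≤ G (D.f y) := by
      intro y hy
      refine le_trans (key2 y hy x hx) ?_
      rw [hG]
      refine mul_le_mul_of_nonneg_left ?_ hKMQ
      refine Real.sqrt_le_sqrt ?_
      refine ENNReal.toReal_le_of_le_ofReal ?_ ?_
      · have hm0 : (0:ℝ) ≤ max (2*σn - 2*dist (D.f y) (D.f x)) 0 := le_max_right _ _
        have hmle : max (2*σn - 2*dist (D.f y) (D.f x)) 0 ≤ 2*σn := by
          refine max_le ?_ (by positivity)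
          have := dist_nonneg (x := D.f y) (y := D.f x)
          linarith
        have := pow_le_pow_left₀ hm0 hmle d
        linarith
      · exact aux_symm σn (by positivity) (D.f y) (D.f x)
    have htend0 : Tendsto (fun y => transferFun D σn θ h y - transferFun D σn θ h x)
        (nhdsWithin x D.X) (nhds 0) := by
      refine squeeze_zero_norm' (a := fun y => G (D.f y)) ?_ ?_
      · filter_upwards [self_mem_nhdsWithin] with y hy
        rw [Real.norm_eq_abs]
        exact hub y hy
      · have hcomp := (hGcont.continuousAt (x := D.f x)).tendsto.comp hcx
        rw [hG0] at hcomp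
        exact hcomp
    have : Tendsto (transferFun D σn θ h) (nhdsWithin x D.X) (nhds (transferFun D σn θ h x)) := by
      have h2 := htend0.add (tendsto_const_nhds (x := transferFun D σn θ h x))
      simp only [sub_add_cancel, zero_add] at h2
      exact h2
    exact this


end
end

section
/- Under Hypotheses (H1) and (H2), the family of operators θ ↦ P_θ satisfies ‖P_θ − P_0‖_{C^0(X) → C^0(X)} = O(θ^{2/3}) as θ → 0⁺; in particular P_θ converges to the Markov transition operator P_0 in operator norm as θ → 0⁺. -/
open MeasureTheory Metric Set Filter
open scoped ENNReal NNReal symmDiff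

noncomputable section

/-! ### Auxiliary lemmas -/

lemma abs_exp_sub_one_le' (z : ℝ) : |Real.exp z - 1| ≤ Real.exp |z| - 1 := by
  rcases le_or_gt 0 z with hz | hz
  · rw [abs_of_nonneg hz, abs_of_nonneg (by nlinarith [Real.one_le_exp hz])]
  · rw [abs_of_neg hz, abs_of_nonpos (by nlinarith [Real.exp_lt_one_iff.mpr hz])]
    have h1 := Real.add_one_le_exp z
    have h2 := Real.add_one_le_exp (-z)
    linarith

lemma bernoulli_pow_le' {a c : ℝ} (ha : 1 ≤ a) (hc0 : 0 < c) (hc1 : c ≤ 1) :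
    a ^ c ≤ 1 + c * (a - 1) := by
  have hs : (0:ℝ) ≤ c * (a - 1) := by nlinarith
  have hb := one_add_mul_self_le_rpow_one_add (s := c * (a-1)) (by linarith)
      (p := 1 / c) (by rw [le_div_iff₀ hc0]; linarith)
  have hA : a ≤ (1 + c * (a-1)) ^ (1/c : ℝ) := by
    have : 1 + (1/c) * (c * (a-1)) = a := by field_simp; ring
    linarith [hb]
  calc a ^ c ≤ ((1 + c * (a-1)) ^ (1/c : ℝ)) ^ c :=
        Real.rpow_le_rpow (by linarith) hA hc0.le
    _ = (1 + c * (a-1)) ^ ((1/c) * c : ℝ) := by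
        rw [← Real.rpow_mul (by linarith)]
    _ = 1 + c * (a - 1) := by
        rw [one_div, inv_mul_cancel₀ hc0.ne', Real.rpow_one]

lemma exp_theta_sub_one_le' {t θ s : ℝ} (ht : 0 ≤ t) (hθ : 0 < θ) (hθs : θ ≤ s) :
    Real.exp (θ * t) - 1 ≤ (θ / s) * Real.exp (s * t) := by
  have hs0 : 0 < s := lt_of_lt_of_le hθ hθs
  have ha : 1 ≤ Real.exp (s * t) := Real.one_le_exp (by positivity)
  have key : Real.exp (s * t) ^ (θ / s : ℝ) ≤ 1 + (θ/s) * (Real.exp (s*t) - 1) :=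
    bernoulli_pow_le' ha (by positivity) (by rw [div_le_one hs0]; exact hθs)
  have heq : Real.exp (s * t) ^ (θ / s : ℝ) = Real.exp (θ * t) := by
    rw [← Real.exp_mul]; congr 1; field_simp
  rw [heq] at key
  nlinarith [ha, div_nonneg hθ.le hs0.le]

lemma coord_abs_le_norm' {d : ℕ} (w : Ed d) (i : Fin d) : |w i| ≤ ‖w‖ := by
  rw [EuclideanSpace.norm_eq]
  have h1 : |w i| = Real.sqrt (‖w i‖^2) := by
    rw [Real.sqrt_sq_eq_abs]; simp [abs_abs]
  rw [h1]
  apply Real.sqrt_le_sqrt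
  exact Finset.single_le_sum (f := fun j => ‖w j‖^2) (fun j _ => by positivity) (Finset.mem_univ i)

lemma cube_isClosed' (d : ℕ) (σ : ℝ) : IsClosed (cube d σ) := by
  have : cube d σ = ⋂ i, {w : Ed d | |w i| ≤ σ} := by
    ext w; simp [cube, Set.mem_iInter]
  rw [this]
  exact isClosed_iInter fun i =>
    IsClosed.preimage (continuous_abs.comp (EuclideanSpace.proj i).continuous)
      isClosed_Iic (t := Set.Iic σ)

lemma ball_subset_cube' {d : ℕ} {σ : ℝ} : Metric.ball (0 : Ed d) σ ⊆ cube d σ := by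
  intro w hw i
  have := coord_abs_le_norm' w i
  simp [Metric.mem_ball, dist_zero_right] at hw
  linarith

lemma cube_subset_closedBall' {d : ℕ} {σ : ℝ} (hσ : 0 ≤ σ) :
    cube d σ ⊆ Metric.closedBall (0 : Ed d) (Real.sqrt d * σ) := by
  intro w hw
  simp only [Metric.mem_closedBall, dist_zero_right]
  rw [EuclideanSpace.norm_eq]
  have : ∑ i, ‖w i‖^2 ≤ ∑ _i : Fin d, σ^2 := by
    apply Finset.sum_le_sum
    intro i _
    have h := hw i
    have : ‖w i‖ ≤ σ := by simpa using h
    nlinarith [norm_nonneg (w i)]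
  calc Real.sqrt (∑ i, ‖w i‖^2) ≤ Real.sqrt (∑ _i : Fin d, σ^2) := Real.sqrt_le_sqrt this
    _ = Real.sqrt (d * σ^2) := by simp [Finset.sum_const, mul_comm]
    _ = Real.sqrt d * σ := by
        rw [Real.sqrt_mul (by positivity), Real.sqrt_sq hσ]

lemma cube_vol_pos' {d : ℕ} {σ : ℝ} (hσ : 0 < σ) : 0 < volume (cube d σ) :=
  lt_of_lt_of_le (Metric.measure_ball_pos _ _ hσ) (measure_mono ball_subset_cube')

lemma cube_vol_ne_top' {d : ℕ} {σ : ℝ} (hσ : 0 < σ) : volume (cube d σ) ≠ ⊤ :=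
  ne_top_of_le_ne_top measure_closedBall_lt_top.ne
    (measure_mono (cube_subset_closedBall' hσ.le))

lemma noise_prob' {d : ℕ} {σ : ℝ} (hσ : 0 < σ) : IsProbabilityMeasure (noiseMeasure d σ) := by
  constructor
  rw [noiseMeasure, Measure.smul_apply, Measure.restrict_apply MeasurableSet.univ,
    Set.univ_inter, smul_eq_mul]
  exact ENNReal.inv_mul_cancel (cube_vol_pos' hσ).ne' (cube_vol_ne_top' hσ)

lemma lipschitz_image_thickening_bound' {d n : ℕ} (hdn : d = n + 1)
    (g : (Fin n → ℝ) → Ed d) (L : ℝ≥0) (hg : LipschitzWith L g) :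
    ∃ C : ℝ≥0∞, C ≠ ⊤ ∧ ∀ s : ℝ, 0 < s → s ≤ 2 →
      volume (Metric.thickening s (g '' (Set.univ.pi fun _ => Set.Icc (0:ℝ) 1))) ≤
        C * ENNReal.ofReal s := by
  have hd : 0 < d := hdn ▸ n.succ_pos
  haveI : Nonempty (Fin d) := ⟨⟨0, hd⟩⟩
  haveI : Nontrivial (Ed d) := by
    refine ⟨0, EuclideanSpace.single ⟨0, hd⟩ 1, ?_⟩
    intro h
    have := congrArg (fun v : Ed d => v ⟨0, hd⟩) h.symm
    simp [EuclideanSpace.single_apply] at this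
  set V1 := volume (Metric.ball (0 : Ed d) 1) with hV1
  have hV1top : V1 ≠ ⊤ := measure_ball_lt_top.ne
  set A : ℝ := 5 ^ n * ((L : ℝ) + 1) ^ d with hA
  refine ⟨ENNReal.ofReal A * V1, ENNReal.mul_ne_top ENNReal.ofReal_ne_top hV1top, ?_⟩
  intro s hs hs2
  set M := ⌈1/s⌉₊ with hM
  set Q : Set (Fin n → ℝ) := Set.univ.pi fun _ => Set.Icc (0:ℝ) 1 with hQ
  set p : (Fin n → Fin (M+1)) → (Fin n → ℝ) := fun j i => (j i : ℝ) * s with hp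
  have hr : (0:ℝ) ≤ ((L:ℝ)+1) * s := by positivity
  have hcover : Metric.thickening s (g '' Q) ⊆
      ⋃ j : Fin n → Fin (M+1), Metric.ball (g (p j)) (((L:ℝ)+1) * s) := by
    intro y hy
    rw [Metric.mem_thickening_iff] at hy
    obtain ⟨z, hz, hyz⟩ := hy
    obtain ⟨q, hq, rfl⟩ := hz
    have hq' : ∀ i, q i ∈ Set.Icc (0:ℝ) 1 := fun i => hq i (Set.mem_univ i)
    have hjlt : ∀ i : Fin n, ⌊q i / s⌋₊ < M + 1 := by
      intro i
      have h1 : q i / s ≤ 1 / s := by gcongr; exact (hq' i).2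
      have h2 : ⌊q i / s⌋₊ ≤ ⌊1 / s⌋₊ := Nat.floor_le_floor h1
      exact Nat.lt_succ_of_le (h2.trans (Nat.floor_le_ceil _))
    refine Set.mem_iUnion.mpr ⟨fun i => ⟨⌊q i / s⌋₊, hjlt i⟩, ?_⟩
    have hdistq : dist q (p (fun i => ⟨⌊q i / s⌋₊, hjlt i⟩)) ≤ s := by
      rw [dist_pi_le_iff hs.le]
      intro i
      simp only [hp, Real.dist_eq]
      have h0 : (0:ℝ) ≤ q i / s := div_nonneg (hq' i).1 hs.le
      have hfl : (⌊q i / s⌋₊ : ℝ) ≤ q i / s := Nat.floor_le h0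
      have hfu : q i / s < ⌊q i / s⌋₊ + 1 := Nat.lt_floor_add_one _
      rw [abs_le]
      have hl : (⌊q i / s⌋₊ : ℝ) * s ≤ q i := (le_div_iff₀ hs).mp hfl
      have hu : q i < ((⌊q i / s⌋₊:ℝ) + 1) * s := (div_lt_iff₀ hs).mp hfu
      constructor <;> nlinarith
    have hlip := hg.dist_le_mul q (p (fun i => ⟨⌊q i / s⌋₊, hjlt i⟩))
    have hdg : dist (g q) (g (p fun i => ⟨⌊q i / s⌋₊, hjlt i⟩)) ≤ (L:ℝ) * s := by
      calc dist (g q) (g (p fun i => ⟨⌊q i / s⌋₊, hjlt i⟩))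
          ≤ (L:ℝ) * dist q _ := hlip
        _ ≤ (L:ℝ) * s := by
            apply mul_le_mul_of_nonneg_left hdistq L.coe_nonneg
    rw [Metric.mem_ball]
    calc dist y (g (p fun i => ⟨⌊q i / s⌋₊, hjlt i⟩))
        ≤ dist y (g q) + dist (g q) _ := dist_triangle _ _ _
      _ < s + (L:ℝ) * s := add_lt_add_of_lt_of_le hyz hdg
      _ = ((L:ℝ)+1) * s := by ring
  calc volume (Metric.thickening s (g '' Q))
      ≤ ∑' j : Fin n → Fin (M+1), volume (Metric.ball (g (p j)) (((L:ℝ)+1)*s)) :=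
        le_trans (measure_mono hcover) (measure_iUnion_le _)
    _ = ∑' _j : Fin n → Fin (M+1), ENNReal.ofReal ((((L:ℝ)+1)*s) ^ d) * V1 := by
        congr 1; funext j
        rw [Measure.addHaar_ball _ _ hr, finrank_euclideanSpace_fin]
    _ = ((M+1)^n : ℕ) * (ENNReal.ofReal ((((L:ℝ)+1)*s) ^ d) * V1) := by
        rw [tsum_fintype]
        simp [Finset.card_univ]
    _ ≤ ENNReal.ofReal A * ENNReal.ofReal s * V1 := by
        rw [← mul_assoc]
        apply mul_le_mul_left
        rw [← ENNReal.ofReal_natCast, ← ENNReal.ofReal_mul (by positivity),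
          ← ENNReal.ofReal_mul (by positivity)]
        apply ENNReal.ofReal_le_ofReal
        have hM1 : ((M:ℝ)+1) ≤ 5 / s := by
          have h1 : (M:ℝ) < 1/s + 1 := Nat.ceil_lt_add_one (by positivity)
          rw [le_div_iff₀ hs]
          have h2 : (1/s) * s = 1 := by field_simp
          nlinarith
        push_cast
        calc ((M:ℝ)+1)^n * (((L:ℝ)+1)*s)^d
            ≤ (5/s)^n * (((L:ℝ)+1)*s)^d := by
              apply mul_le_mul_of_nonneg_right _ (by positivity)
              exact pow_le_pow_left₀ (by positivity) hM1 n
          _ = A * s := by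
              rw [hA, hdn, mul_pow, pow_succ s, div_pow]
              have hsn : s ^ n ≠ 0 := pow_ne_zero n hs.ne'
              field_simp
    _ = ENNReal.ofReal A * V1 * ENNReal.ofReal s := by ring

set_option maxHeartbeats 2000000 in
/-- Equation (3.6): `‖P_θ − P_0‖_{C⁰(X) → C⁰(X)} = O(θ^{2/3})` as `θ → 0⁺`. -/
theorem transfer_operator_norm_continuity {d : ℕ} (hd : 0 < d) (D : H1Data d)
    (σn : ℝ) (hσn : 0 < σn) (P : Measure (ℕ → Ed d)) [IsProbabilityMeasure P]
    (hP : IsIIDNoise σn P) (H2 : H2Data D σn P)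
    (hmaps : ∀ x ∈ D.X, ∀ w ∈ cube d σn, D.f x + w ∈ D.X) :
    ∃ K > 0, ∃ θ₀ > 0, ∀ θ : ℝ, 0 < θ → θ ≤ θ₀ →
      ∀ h : Ed d → ℝ, Continuous h → (∀ x ∈ D.X, |h x| ≤ 1) →
        ∀ x ∈ D.X,
          |transferFun D σn θ h x - transferFun D σn 0 h x| ≤ K * θ ^ ((2 : ℝ) / 3) := by
  classical
  haveI : Nonempty (Fin d) := ⟨⟨0, hd⟩⟩
  haveI hνp : IsProbabilityMeasure (noiseMeasure d σn) := noise_prob' hσn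
  rcases Set.eq_empty_or_nonempty D.X with hXe | hXne
  · exact ⟨1, one_pos, 1, one_pos, fun θ _ _ h _ _ x hx => by
      rw [hXe] at hx; exact absurd hx (Set.notMem_empty x)⟩
  obtain ⟨x0, hx0⟩ := hXne
  have hB1 : (1:ℝ) < D.B := D.one_lt_B
  have hB0 : (0:ℝ) < D.B := lt_trans one_pos hB1
  have hβ0 : (0:ℝ) < D.β := D.beta_pos
  set u0 : Ed d := EuclideanSpace.single (⟨0, hd⟩ : Fin d) (1:ℝ) with hu0def
  have hu0 : u0 ≠ 0 := by
    intro hcon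
    have := congrArg (fun v : Ed d => v ⟨0, hd⟩) hcon
    simp [hu0def, EuclideanSpace.single_apply] at this
  have hu0n : 0 < ‖u0‖ := norm_pos_iff.mpr hu0
  -- positivity of the distance to the critical set on X \ Crit
  have hρpos : ∀ y ∈ D.X \ D.Crit, 0 < Metric.infDist y D.Crit := by
    intro y hy
    rcases lt_or_eq_of_le (Metric.infDist_nonneg (x := y) (s := D.Crit)) with hlt | heq
    · exact hlt
    · exfalso
      have hb := (D.deriv_bound y hy u0).2
      rw [← heq, Real.zero_rpow (neg_ne_zero.mpr hβ0.ne')] at hb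
      have hDf0 : ‖D.Df y u0‖ ≤ 0 := by simpa using hb
      have hli : D.DfInv y (D.Df y u0) = u0 :=
        congrArg (fun (S : Ed d →L[ℝ] Ed d) => S u0) (D.inv_left y hy)
      have hle : ‖u0‖ ≤ ‖D.DfInv y‖ * ‖D.Df y u0‖ := by
        conv_lhs => rw [← hli]
        exact (D.DfInv y).le_opNorm _
      nlinarith [norm_nonneg (D.Df y u0), norm_nonneg (D.DfInv y)]
  -- operator norm bounds for DfInv
  have hinv_up : ∀ y ∈ D.X \ D.Crit,
      ‖D.DfInv y‖ ≤ D.B * Metric.infDist y D.Crit ^ (-D.β) := by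
    intro y hy
    have hρ : 0 < Metric.infDist y D.Crit := hρpos y hy
    set ρ := Metric.infDist y D.Crit
    apply ContinuousLinearMap.opNorm_le_bound _ (by positivity)
    intro u
    have hlow := (D.deriv_bound y hy (D.DfInv y u)).1
    have hri : D.Df y (D.DfInv y u) = u :=
      congrArg (fun (S : Ed d →L[ℝ] Ed d) => S u) (D.inv_right y hy)
    rw [hri] at hlow
    have key : D.B * ρ^(-D.β) * (D.B⁻¹ * ρ^D.β) = 1 := by
      rw [Real.rpow_neg hρ.le]
      field_simp
    nlinarith [mul_le_mul_of_nonneg_left hlow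
      (by positivity : (0:ℝ) ≤ D.B * ρ^(-D.β)), norm_nonneg (D.DfInv y u)]
  have hinv_lo : ∀ y ∈ D.X \ D.Crit,
      D.B⁻¹ * Metric.infDist y D.Crit ^ D.β ≤ ‖D.DfInv y‖ := by
    intro y hy
    have hρ : 0 < Metric.infDist y D.Crit := hρpos y hy
    set ρ := Metric.infDist y D.Crit
    have hup := (D.deriv_bound y hy u0).2
    have hli : D.DfInv y (D.Df y u0) = u0 :=
      congrArg (fun (S : Ed d →L[ℝ] Ed d) => S u0) (D.inv_left y hy)
    have h1 : ‖u0‖ ≤ ‖D.DfInv y‖ * ‖D.Df y u0‖ := by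
      conv_lhs => rw [← hli]
      exact (D.DfInv y).le_opNorm _
    have h2 : ‖u0‖ ≤ ‖D.DfInv y‖ * (D.B * ρ^(-D.β) * ‖u0‖) :=
      le_trans h1 (by nlinarith [norm_nonneg (D.DfInv y)])
    have key : D.B * ρ^(-D.β) * (D.B⁻¹ * ρ^D.β) = 1 := by
      rw [Real.rpow_neg hρ.le]
      field_simp
    have h3 : 1 ≤ ‖D.DfInv y‖ * (D.B * ρ^(-D.β)) := by
      nlinarith [hu0n]
    calc D.B⁻¹ * ρ^D.β = 1 * (D.B⁻¹ * ρ^D.β) := (one_mul _).symm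
      _ ≤ (‖D.DfInv y‖ * (D.B * ρ^(-D.β))) * (D.B⁻¹ * ρ^D.β) := by
          apply mul_le_mul_of_nonneg_right h3 (by positivity)
      _ = ‖D.DfInv y‖ * (D.B * ρ^(-D.β) * (D.B⁻¹ * ρ^D.β)) := by ring
      _ = ‖D.DfInv y‖ := by rw [key, mul_one]
  have hDfInvpos : ∀ y ∈ D.X \ D.Crit, 0 < ‖D.DfInv y‖ := by
    intro y hy
    have hρ := hρpos y hy
    exact lt_of_lt_of_le (by positivity) (hinv_lo y hy)
  have hlogbound : ∀ y ∈ D.X \ D.Crit,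
      |Real.log ‖D.DfInv y‖| ≤ Real.log D.B + D.β * |Real.log (Metric.infDist y D.Crit)| := by
    intro y hy
    have hρ := hρpos y hy
    set ρ := Metric.infDist y D.Crit
    have hpos := hDfInvpos y hy
    rw [abs_le]
    constructor
    · have h1 : Real.log (D.B⁻¹ * ρ ^ D.β) ≤ Real.log ‖D.DfInv y‖ :=
        Real.log_le_log (by positivity) (hinv_lo y hy)
      rw [Real.log_mul (by positivity) (by positivity), Real.log_inv,
        Real.log_rpow hρ] at h1
      nlinarith [neg_abs_le (Real.log ρ)]
    · have h1 : Real.log ‖D.DfInv y‖ ≤ Real.log (D.B * ρ ^ (-D.β)) :=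
        Real.log_le_log hpos (hinv_up y hy)
      rw [Real.log_mul (by positivity) (by positivity), Real.log_rpow hρ] at h1
      nlinarith [neg_abs_le (Real.log ρ)]
  -- the critical set is nonempty (otherwise contradiction)
  rcases Set.eq_empty_or_nonempty D.Crit with hCe | hCne
  · exfalso
    have hx0' : x0 ∈ D.X \ D.Crit := ⟨hx0, by simp [hCe]⟩
    have := hρpos x0 hx0'
    rw [hCe, Metric.infDist_empty] at this
    exact lt_irrefl 0 this
  obtain ⟨c0, hc0⟩ := hCne
  -- continuity of log ‖DfInv‖ on X \ Crit
  have hΛcont : ContinuousOn (fun y => Real.log ‖D.DfInv y‖) (D.X \ D.Crit) := by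
    intro y hy
    have hρ := hρpos y hy
    set ρ := Metric.infDist y D.Crit
    have hρβ : 0 < ρ ^ D.β := Real.rpow_pos_of_pos hρ D.β
    rw [Metric.continuousWithinAt_iff]
    intro ε hε
    refine ⟨min (ρ/2) (ε * ρ ^ D.β / (2 * D.B)), by positivity, ?_⟩
    intro z hz hdz
    have hd1 : dist z y ≤ ρ / 2 := le_trans hdz.le (min_le_left _ _)
    have hd2 : dist z y < ε * ρ ^ D.β / (2 * D.B) := lt_of_lt_of_le hdz (min_le_right _ _)
    have hH := D.logHolder_inv y hy z hz (by rw [dist_comm]; exact hd1)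
    rw [Real.dist_eq, abs_sub_comm]
    calc |Real.log ‖D.DfInv y‖ - Real.log ‖D.DfInv z‖|
        ≤ D.B / ρ ^ D.β * dist y z := hH
      _ < ε := by
          rw [dist_comm]
          have hpos : 0 < D.B / ρ ^ D.β := by positivity
          calc D.B / ρ ^ D.β * dist z y
              < D.B / ρ ^ D.β * (ε * ρ ^ D.β / (2 * D.B)) := by
                apply mul_lt_mul_of_pos_left hd2 hpos
            _ = ε / 2 := by field_simp
            _ < ε := by linarith
  -- the enlarged critical set Crit'
  obtain ⟨m, gf, L, hC1, hLip, hsubC⟩ := D.crit_structure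
  set Q : Set (Fin (d-1) → ℝ) := Set.univ.pi fun _ => Set.Icc (0:ℝ) 1 with hQdef
  set Crit' : Set (Ed d) := ⋃ i : Fin m, gf i '' Q with hCrit'def
  have hdn : d = (d-1) + 1 := (Nat.succ_pred_eq_of_pos hd).symm
  choose Ci hCitop hCith using fun i : Fin m =>
    lipschitz_image_thickening_bound' hdn (gf i) L (hLip i)
  set C : ℝ≥0∞ := ∑ i : Fin m, Ci i with hCdef
  have hCtop : C ≠ ⊤ := by
    rw [hCdef]
    exact (ENNReal.sum_lt_top.mpr fun i _ => (hCitop i).lt_top).ne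
  have hCth : ∀ s : ℝ, 0 < s → s ≤ 2 →
      volume (Metric.thickening s Crit') ≤ C * ENNReal.ofReal s := by
    intro s h1 h2
    rw [hCrit'def, Metric.thickening_iUnion]
    calc volume (⋃ i, Metric.thickening s (gf i '' Q))
        ≤ ∑ i, volume (Metric.thickening s (gf i '' Q)) := measure_iUnion_fintype_le _ _
      _ ≤ ∑ i, Ci i * ENNReal.ofReal s := Finset.sum_le_sum fun i _ => hCith i s h1 h2
      _ = C * ENNReal.ofReal s := by rw [hCdef, Finset.sum_mul]
  have hC'closed : IsClosed Crit' := by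
    rw [hCrit'def]
    exact (isCompact_iUnion fun i =>
      ((isCompact_univ_pi fun _ => isCompact_Icc).image (hC1 i).continuous)).isClosed
  have hsubC' : D.Crit ⊆ Crit' := hsubC
  have hC'ne : Crit'.Nonempty := ⟨c0, hsubC hc0⟩
  have hC'null : volume Crit' = 0 := by
    have hle : ∀ k : ℕ, volume Crit' ≤ C * ENNReal.ofReal (((k:ℝ)+1)⁻¹) := by
      intro k
      refine le_trans (measure_mono (Metric.self_subset_thickening (by positivity) _))
        (hCth _ (by positivity) ?_)
      have h1 : (1:ℝ) ≤ (k:ℝ) + 1 := by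
        have : (0:ℝ) ≤ (k:ℝ) := Nat.cast_nonneg k
        linarith
      calc ((k:ℝ)+1)⁻¹ ≤ 1 := by
            rw [inv_le_one_iff₀]; right; exact h1
        _ ≤ 2 := by norm_num
    have htend : Filter.Tendsto (fun k : ℕ => C * ENNReal.ofReal (((k:ℝ)+1)⁻¹))
        Filter.atTop (nhds 0) := by
      have h1 : Filter.Tendsto (fun k : ℕ => ENNReal.ofReal (((k:ℝ)+1)⁻¹))
          Filter.atTop (nhds (ENNReal.ofReal 0)) := by
        apply ENNReal.tendsto_ofReal
        have : Filter.Tendsto (fun n : ℕ => 1 / ((n : ℝ) + 1)) Filter.atTop (nhds 0) :=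
            tendsto_one_div_add_atTop_nhds_zero_nat
        simpa [one_div] using this
      rw [ENNReal.ofReal_zero] at h1
      have := ENNReal.Tendsto.const_mul h1 (Or.inr hCtop)
      simpa using this
    exact le_antisymm (ge_of_tendsto' htend hle) (zero_le)
  -- constants
  set q : ℝ := min D.β 2⁻¹ with hqdef
  have hq0 : 0 < q := lt_min hβ0 (by norm_num)
  have hq2 : q ≤ 2⁻¹ := min_le_right _ _
  have hq1 : q < 1 := lt_of_le_of_lt hq2 (by norm_num)
  set s0 : ℝ := q / D.β with hs0def
  have hs00 : 0 < s0 := div_pos hq0 hβ0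
  have hs01 : s0 ≤ 1 := by rw [hs0def, div_le_one hβ0]; exact min_le_left _ _
  have hs0β : s0 * D.β = q := div_mul_cancel₀ q hβ0.ne'
  obtain ⟨M, hMX⟩ := D.compact_X.isBounded.subset_closedBall 0
  set R : ℝ := max 1 (M + ‖c0‖) with hRdef
  have hR1 : (1:ℝ) ≤ R := le_max_left _ _
  have hρleR : ∀ y ∈ D.X, Metric.infDist y D.Crit ≤ R := by
    intro y hy
    calc Metric.infDist y D.Crit ≤ dist y c0 := Metric.infDist_le_dist_of_mem hc0
      _ ≤ ‖y‖ + ‖c0‖ := by rw [dist_eq_norm]; exact norm_sub_le _ _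
      _ ≤ M + ‖c0‖ := by
          have := hMX hy
          rw [Metric.mem_closedBall, dist_zero_right] at this
          linarith
      _ ≤ R := le_max_right _ _
  set A : ℝ := Real.log D.B with hAdef
  have hA0 : 0 ≤ A := Real.log_nonneg hB1.le
  set ν := noiseMeasure d σn with hνdef
  haveI : IsProbabilityMeasure ν := hνp
  have hcubem : MeasurableSet (cube d σn) := (cube_isClosed' d σn).measurableSet
  have hνle : ∀ s : Set (Ed d), ν s ≤ (volume (cube d σn))⁻¹ * volume s := by
    intro s
    rw [hνdef, noiseMeasure, Measure.smul_apply, smul_eq_mul]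
    apply mul_le_mul_right
    rw [Measure.restrict_apply' hcubem]
    exact measure_mono Set.inter_subset_left
  have hcubepos := cube_vol_pos' (d := d) hσn
  set cInv : ℝ≥0∞ := (volume (cube d σn))⁻¹ with hcInvdef
  have hcInvtop : cInv ≠ ⊤ := ENNReal.inv_ne_top.mpr hcubepos.ne'
  set DD : ℝ≥0∞ := cInv * C * 2 with hDDdef
  have hDDtop : DD ≠ ⊤ :=
    ENNReal.mul_ne_top (ENNReal.mul_ne_top hcInvtop hCtop) (by norm_num)
  set geo : ℝ≥0∞ := (1 - ENNReal.ofReal (Real.exp (q-1)))⁻¹ with hgeodef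
  have hgeotop : geo ≠ ⊤ := by
    rw [hgeodef, ENNReal.inv_ne_top]
    have : ENNReal.ofReal (Real.exp (q-1)) < 1 :=
      ENNReal.ofReal_lt_one.mpr (Real.exp_lt_one_iff.mpr (by linarith))
    rw [ne_eq, tsub_eq_zero_iff_le, not_le]
    exact this
  set Mlin : ℝ≥0∞ := 1 + DD * ENNReal.ofReal (Real.exp q) * geo with hMlindef
  have hMlintop : Mlin ≠ ⊤ := by
    rw [hMlindef]
    exact ENNReal.add_ne_top.mpr ⟨ENNReal.one_ne_top,
      ENNReal.mul_ne_top (ENNReal.mul_ne_top hDDtop ENNReal.ofReal_ne_top) hgeotop⟩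
  set Mr : ℝ := Mlin.toReal with hMrdef
  have hMr0 : 0 ≤ Mr := ENNReal.toReal_nonneg
  refine ⟨max 1 (Real.exp (s0*A) * (R ^ q + Mr) / s0),
    lt_of_lt_of_le one_pos (le_max_left _ _), s0, hs00, ?_⟩
  intro θ hθ0 hθs0 h hcont hhb x hx
  -- the random orbit map
  set T : Ed d → Ed d := fun w => D.f x + w with hTdef
  have hTcont : Continuous T := continuous_const.add continuous_id
  set S : Set (Ed d) := T ⁻¹' (D.X \ Crit') with hSdef
  have hSmeas : MeasurableSet S :=
    hTcont.measurable ((D.compact_X.isClosed.measurableSet).diff hC'closed.measurableSet)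
  have hae : ∀ᵐ w ∂ν, T w ∈ D.X \ Crit' := by
    rw [MeasureTheory.ae_iff]
    apply measure_mono_null (show _ ⊆ (cube d σn)ᶜ ∪ T ⁻¹' Crit' from ?_)
    · apply measure_union_null
      · rw [hνdef, noiseMeasure, Measure.smul_apply,
          Measure.restrict_apply hcubem.compl]
        simp
      · apply le_antisymm _ (zero_le)
        calc ν (T ⁻¹' Crit') ≤ cInv * volume (T ⁻¹' Crit') := hνle _
          _ = cInv * volume Crit' := by
              rw [hTdef, show (fun w => D.f x + w) ⁻¹' Crit' = (D.f x + ·) ⁻¹' Crit' from rfl,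
                measure_preimage_add]
          _ = 0 := by rw [hC'null, mul_zero]
    · intro w hw
      simp only [Set.mem_setOf_eq, Set.mem_diff, not_and, not_not] at hw
      by_cases hwc : w ∈ cube d σn
      · exact Or.inr (hw (hmaps x hx w hwc))
      · exact Or.inl hwc
  set Λ : Ed d → ℝ := fun y => Real.log ‖D.DfInv y‖ with hΛdef
  set ψ : Ed d → ℝ := fun w => Metric.infDist (T w) Crit' ^ (-q) with hψdef
  have hψmeas : Measurable ψ :=
    Measurable.pow_const ((Metric.continuous_infDist_pt Crit').comp hTcont).measurable (-q)
  have hψnn : ∀ w, 0 ≤ ψ w := fun w => Real.rpow_nonneg Metric.infDist_nonneg _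
  -- small-set measure estimates
  have hsmall : ∀ k : ℕ, ν {w | Metric.infDist (T w) Crit' ≤ Real.exp (-(k:ℝ))} ≤
      DD * ENNReal.ofReal (Real.exp (-(k:ℝ))) := by
    intro k
    have he1 : Real.exp (-(k:ℝ)) ≤ 1 := Real.exp_le_one_iff.mpr (neg_nonpos.mpr (Nat.cast_nonneg k))
    have hsub : {w | Metric.infDist (T w) Crit' ≤ Real.exp (-(k:ℝ))} ⊆
        T ⁻¹' (Metric.thickening (2 * Real.exp (-(k:ℝ))) Crit') := by
      intro w hw
      simp only [Set.mem_setOf_eq] at hw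
      refine Set.mem_preimage.mpr ((Metric.mem_thickening_iff_infDist_lt hC'ne).mpr ?_)
      nlinarith [Real.exp_pos (-(k:ℝ))]
    calc ν {w | Metric.infDist (T w) Crit' ≤ Real.exp (-(k:ℝ))}
        ≤ ν (T ⁻¹' (Metric.thickening (2 * Real.exp (-(k:ℝ))) Crit')) := measure_mono hsub
      _ ≤ cInv * volume (T ⁻¹' (Metric.thickening (2 * Real.exp (-(k:ℝ))) Crit')) := hνle _
      _ = cInv * volume (Metric.thickening (2 * Real.exp (-(k:ℝ))) Crit') := by
          rw [hTdef, show (fun w => D.f x + w) ⁻¹' _ = (D.f x + ·) ⁻¹' _ from rfl,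
            measure_preimage_add]
      _ ≤ cInv * (C * ENNReal.ofReal (2 * Real.exp (-(k:ℝ)))) :=
          mul_le_mul_right (hCth _ (by positivity) (by nlinarith [Real.exp_pos (-(k:ℝ))])) _
      _ = DD * ENNReal.ofReal (Real.exp (-(k:ℝ))) := by
          rw [ENNReal.ofReal_mul (by norm_num), hDDdef]
          rw [show ENNReal.ofReal (2:ℝ) = 2 from by norm_num]
          ring
  -- lintegral bound for ψ
  have hψlint : ∫⁻ w, ENNReal.ofReal (ψ w) ∂ν ≤ Mlin := by
    set F : ℕ → Ed d → ℝ≥0∞ := fun k =>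
      Set.indicator {w | Metric.infDist (T w) Crit' ≤ Real.exp (-(k:ℝ))}
        (fun _ => ENNReal.ofReal (Real.exp (((k:ℝ)+1)*q))) with hFdef
    have hsetmeas : ∀ k : ℕ,
        MeasurableSet {w | Metric.infDist (T w) Crit' ≤ Real.exp (-(k:ℝ))} := by
      intro k
      exact measurableSet_le ((Metric.continuous_infDist_pt Crit').comp hTcont).measurable
        measurable_const
    have hFmeas : ∀ k, Measurable (F k) := fun k =>
      measurable_const.indicator (hsetmeas k)
    have hpt : ∀ᵐ w ∂ν, ENNReal.ofReal (ψ w) ≤ 1 + ∑' k, F k w := by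
      filter_upwards [hae] with w hw
      have hrpos : 0 < Metric.infDist (T w) Crit' := by
        rw [← hC'closed.notMem_iff_infDist_pos hC'ne]
        exact hw.2
      set r := Metric.infDist (T w) Crit' with hrd
      rcases le_or_gt 1 r with h1 | h1
      · have hψ1 : ψ w ≤ 1 := by
          rw [hψdef]
          exact Real.rpow_le_one_of_one_le_of_nonpos h1 (by linarith)
        calc ENNReal.ofReal (ψ w) ≤ 1 := by
              rw [← ENNReal.ofReal_one]
              exact ENNReal.ofReal_le_ofReal hψ1
          _ ≤ 1 + ∑' k, F k w := le_self_add
      · set t : ℝ := -Real.log r with htd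
        have ht0 : 0 < t := by
          rw [htd]
          have := Real.log_neg hrpos h1
          linarith
        set k0 := ⌊t⌋₊ with hk0d
        have hk0t : (k0:ℝ) ≤ t := Nat.floor_le ht0.le
        have htk0 : t ≤ (k0:ℝ) + 1 := (Nat.lt_floor_add_one t).le
        have hmem : w ∈ {w' | Metric.infDist (T w') Crit' ≤ Real.exp (-(k0:ℝ))} := by
          simp only [Set.mem_setOf_eq, ← hrd]
          rw [show r = Real.exp (Real.log r) from (Real.exp_log hrpos).symm]
          apply Real.exp_le_exp.mpr
          rw [htd] at hk0t
          linarith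
        have hψval : ψ w ≤ Real.exp (((k0:ℝ)+1) * q) := by
          have heq : ψ w = Real.exp (q * t) := by
            rw [hψdef]
            simp only [← hrd]
            rw [Real.rpow_def_of_pos hrpos, htd]
            ring_nf
          rw [heq]
          apply Real.exp_le_exp.mpr
          nlinarith
        calc ENNReal.ofReal (ψ w)
            ≤ ENNReal.ofReal (Real.exp (((k0:ℝ)+1)*q)) := ENNReal.ofReal_le_ofReal hψval
          _ = F k0 w := by
              simp only [hFdef]
              exact (Set.indicator_of_mem hmem (fun _ => ENNReal.ofReal (Real.exp (((k0:ℝ)+1)*q)))).symm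
          _ ≤ ∑' k, F k w := ENNReal.le_tsum k0
          _ ≤ 1 + ∑' k, F k w := le_add_self
    calc ∫⁻ w, ENNReal.ofReal (ψ w) ∂ν
        ≤ ∫⁻ w, (1 + ∑' k, F k w) ∂ν := lintegral_mono_ae hpt
      _ = ∫⁻ _, (1:ℝ≥0∞) ∂ν + ∫⁻ w, ∑' k, F k w ∂ν := lintegral_add_left measurable_const _
      _ = 1 + ∑' k, ∫⁻ w, F k w ∂ν := by
          rw [lintegral_one, measure_univ, lintegral_tsum fun k => (hFmeas k).aemeasurable]
      _ ≤ 1 + ∑' k : ℕ, ENNReal.ofReal (Real.exp (((k:ℝ)+1)*q)) *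
            (DD * ENNReal.ofReal (Real.exp (-(k:ℝ)))) := by
          apply add_le_add_right
          apply ENNReal.tsum_le_tsum
          intro k
          rw [hFdef, lintegral_indicator_const (hsetmeas k)]
          exact mul_le_mul_right (hsmall k) _
      _ = 1 + DD * ENNReal.ofReal (Real.exp q) * geo := by
          congr 1
          have hterm : ∀ k : ℕ, ENNReal.ofReal (Real.exp (((k:ℝ)+1)*q)) *
              (DD * ENNReal.ofReal (Real.exp (-(k:ℝ)))) =
              DD * ENNReal.ofReal (Real.exp q) * (ENNReal.ofReal (Real.exp (q-1)))^k := by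
            intro k
            have e1 : Real.exp (((k:ℝ)+1)*q) * Real.exp (-(k:ℝ)) =
                Real.exp q * Real.exp (q-1) ^ k := by
              rw [← Real.exp_nat_mul, ← Real.exp_add, ← Real.exp_add]
              congr 1
              ring
            calc ENNReal.ofReal (Real.exp (((k:ℝ)+1)*q)) *
                (DD * ENNReal.ofReal (Real.exp (-(k:ℝ))))
                = DD * (ENNReal.ofReal (Real.exp (((k:ℝ)+1)*q)) *
                  ENNReal.ofReal (Real.exp (-(k:ℝ)))) := by rw [hDDdef]; ring
              _ = DD * ENNReal.ofReal (Real.exp (((k:ℝ)+1)*q) * Real.exp (-(k:ℝ))) := by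
                  rw [← ENNReal.ofReal_mul (Real.exp_pos _).le]
              _ = DD * ENNReal.ofReal (Real.exp q * Real.exp (q-1) ^ k) := by rw [e1]
              _ = DD * (ENNReal.ofReal (Real.exp q) * ENNReal.ofReal (Real.exp (q-1) ^ k)) := by
                  rw [ENNReal.ofReal_mul (Real.exp_pos _).le]
              _ = DD * ENNReal.ofReal (Real.exp q) * (ENNReal.ofReal (Real.exp (q-1)))^k := by
                  rw [hDDdef, ENNReal.ofReal_pow (Real.exp_pos _).le]; ring
          rw [tsum_congr hterm, ENNReal.tsum_mul_left, ENNReal.tsum_geometric, hgeodef]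
  have hψint : Integrable ψ ν := by
    refine ⟨hψmeas.aestronglyMeasurable, ?_⟩
    rw [hasFiniteIntegral_iff_ofReal (Filter.Eventually.of_forall hψnn)]
    exact lt_of_le_of_lt hψlint hMlintop.lt_top
  have hψint_le : ∫ w, ψ w ∂ν ≤ Mr := by
    rw [integral_eq_lintegral_of_nonneg_ae (Filter.Eventually.of_forall hψnn)
      hψmeas.aestronglyMeasurable]
    exact ENNReal.toReal_mono hMlintop hψlint
  -- the majorant
  set c1 : ℝ := (θ / s0) * Real.exp (s0 * A) with hc1def
  have hc1pos : 0 < c1 := by positivity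
  set φ : Ed d → ℝ := fun w => c1 * (R ^ q + ψ w) with hφdef
  have hφint : Integrable φ ν := (((integrable_const (R ^ q)).add hψint).const_mul c1)
  set Fθ : Ed d → ℝ := fun w => Real.exp (θ * Λ (T w)) * h (T w) with hFθdef
  set F0 : Ed d → ℝ := fun w => h (T w) with hF0def
  have hRq0 : (0:ℝ) ≤ R ^ q := Real.rpow_nonneg (by linarith) q
  -- pointwise a.e. bounds
  have hkey : ∀ᵐ w ∂ν, |Fθ w - F0 w| ≤ φ w ∧ ‖Fθ w‖ ≤ 1 + φ w := by
    filter_upwards [hae] with w hw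
    have hwXC : T w ∈ D.X \ D.Crit := ⟨hw.1, fun hc => hw.2 (hsubC' hc)⟩
    have hrpos : 0 < Metric.infDist (T w) Crit' := by
      rw [← hC'closed.notMem_iff_infDist_pos hC'ne]
      exact hw.2
    have hrρ : Metric.infDist (T w) Crit' ≤ Metric.infDist (T w) D.Crit :=
      Metric.infDist_le_infDist_of_subset hsubC' ⟨c0, hc0⟩
    set ρ := Metric.infDist (T w) D.Crit with hρdd
    set r := Metric.infDist (T w) Crit' with hrdd
    have hρpos' : 0 < ρ := lt_of_lt_of_le hrpos hrρ
    have hΛb : |Λ (T w)| ≤ A + D.β * |Real.log ρ| := hlogbound _ hwXC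
    have hρR : ρ ≤ R := hρleR _ hw.1
    have hstep : Real.exp (θ * |Λ (T w)|) - 1 ≤ φ w := by
      have h1 : Real.exp (θ * |Λ (T w)|) - 1 ≤ (θ/s0) * Real.exp (s0 * |Λ (T w)|) :=
        exp_theta_sub_one_le' (abs_nonneg _) hθ0 hθs0
      have h2 : s0 * |Λ (T w)| ≤ s0 * A + q * |Real.log ρ| := by
        have hm := mul_le_mul_of_nonneg_left hΛb hs00.le
        have : s0 * (A + D.β * |Real.log ρ|) = s0 * A + (s0 * D.β) * |Real.log ρ| := by ring
        rw [this, hs0β] at hm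
        exact hm
      have hlast : Real.exp (q * |Real.log ρ|) ≤ R ^ q + ψ w := by
        rcases le_or_gt 0 (Real.log ρ) with hl | hl
        · have e1 : Real.exp (q * |Real.log ρ|) = ρ ^ q := by
            rw [abs_of_nonneg hl, Real.rpow_def_of_pos hρpos']
            ring_nf
          rw [e1]
          have : ρ ^ q ≤ R ^ q := Real.rpow_le_rpow hρpos'.le hρR hq0.le
          linarith [hψnn w]
        · have e1 : Real.exp (q * |Real.log ρ|) = ρ ^ (-q) := by
            rw [abs_of_neg hl, Real.rpow_def_of_pos hρpos']
            ring_nf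
          rw [e1]
          have e2 : ρ ^ (-q) ≤ r ^ (-q) := by
            rw [Real.rpow_neg hρpos'.le, Real.rpow_neg hrpos.le]
            have hb1 : 0 < r ^ q := Real.rpow_pos_of_pos hrpos q
            have hb2 : r ^ q ≤ ρ ^ q := Real.rpow_le_rpow hrpos.le hrρ hq0.le
            exact inv_anti₀ hb1 hb2
          have e3 : ψ w = r ^ (-q) := by rw [hψdef]
          rw [e3]
          linarith
      have h3 : Real.exp (s0 * |Λ (T w)|) ≤ Real.exp (s0*A) * (R ^ q + ψ w) := by
        calc Real.exp (s0 * |Λ (T w)|)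
            ≤ Real.exp (s0 * A + q * |Real.log ρ|) := Real.exp_le_exp.mpr h2
          _ = Real.exp (s0*A) * Real.exp (q * |Real.log ρ|) := Real.exp_add _ _
          _ ≤ Real.exp (s0*A) * (R ^ q + ψ w) := by
              apply mul_le_mul_of_nonneg_left hlast (Real.exp_pos _).le
      calc Real.exp (θ * |Λ (T w)|) - 1
          ≤ (θ/s0) * Real.exp (s0 * |Λ (T w)|) := h1
        _ ≤ (θ/s0) * (Real.exp (s0*A) * (R ^ q + ψ w)) := by
            apply mul_le_mul_of_nonneg_left h3 (by positivity)
        _ = φ w := by rw [hφdef]; simp only [hc1def]; ring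
    have hhw : |h (T w)| ≤ 1 := hhb _ hw.1
    have hexpabs : |Real.exp (θ * Λ (T w)) - 1| ≤ Real.exp (θ * |Λ (T w)|) - 1 := by
      have hax := abs_exp_sub_one_le' (θ * Λ (T w))
      rw [abs_mul, abs_of_pos hθ0] at hax
      exact hax
    constructor
    · have heqq : Fθ w - F0 w = (Real.exp (θ * Λ (T w)) - 1) * h (T w) := by
        rw [hFθdef, hF0def]; ring
      rw [heqq, abs_mul]
      have h01 : 0 ≤ |Real.exp (θ * Λ (T w)) - 1| := abs_nonneg _
      calc |Real.exp (θ * Λ (T w)) - 1| * |h (T w)|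
          ≤ |Real.exp (θ * Λ (T w)) - 1| * 1 := mul_le_mul_of_nonneg_left hhw h01
        _ = |Real.exp (θ * Λ (T w)) - 1| := mul_one _
        _ ≤ Real.exp (θ * |Λ (T w)|) - 1 := hexpabs
        _ ≤ φ w := hstep
    · rw [hFθdef]
      rw [Real.norm_eq_abs, abs_mul, Real.abs_exp]
      have hee : Real.exp (θ * Λ (T w)) ≤ Real.exp (θ * |Λ (T w)|) := by
        apply Real.exp_le_exp.mpr
        exact mul_le_mul_of_nonneg_left (le_abs_self _) hθ0.le
      calc Real.exp (θ * Λ (T w)) * |h (T w)|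
          ≤ Real.exp (θ * |Λ (T w)|) * 1 :=
            mul_le_mul hee hhw (abs_nonneg _) (Real.exp_pos _).le
        _ = Real.exp (θ * |Λ (T w)|) := mul_one _
        _ ≤ 1 + φ w := by linarith [hstep]
  -- measurability and integrability of Fθ, F0
  have hrestr : ν.restrict S = ν :=
    Measure.restrict_eq_self_of_ae_mem (by filter_upwards [hae] with w hw using hw)
  have hΛT : ContinuousOn (fun w => Λ (T w)) S := by
    apply ContinuousOn.comp (hΛcont.mono (Set.diff_subset_diff_right hsubC'))
      hTcont.continuousOn
    intro w hw
    exact hw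
  have hcontFθ : ContinuousOn Fθ S := by
    apply ContinuousOn.mul
    · exact Real.continuous_exp.comp_continuousOn (continuousOn_const.mul hΛT)
    · exact (hcont.comp hTcont).continuousOn
  have hFθmeas : AEStronglyMeasurable Fθ ν := by
    have := (hcontFθ.aemeasurable (μ := ν) hSmeas).aestronglyMeasurable
    rwa [hrestr] at this
  have hFθint : Integrable Fθ ν := by
    apply Integrable.mono' ((integrable_const (1:ℝ)).add hφint) hFθmeas
    filter_upwards [hkey] with w hw
    simpa using hw.2
  have hF0int : Integrable F0 ν := by
    apply Integrable.mono' (integrable_const (1:ℝ)) (hcont.comp hTcont).aestronglyMeasurable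
    filter_upwards [hae] with w hw
    simp only [hF0def, Real.norm_eq_abs]
    exact hhb _ hw.1
  -- identification with transferFun
  have heqθ : transferFun D σn θ h x = ∫ w, Fθ w ∂ν := by
    simp only [transferFun, hFθdef, hΛdef, hTdef, hνdef]
  have heq0 : transferFun D σn 0 h x = ∫ w, F0 w ∂ν := by
    simp only [transferFun, hF0def, hTdef, hνdef, zero_mul, Real.exp_zero, one_mul]
  rw [heqθ, heq0, ← integral_sub hFθint hF0int]
  have hnorm : |∫ w, (Fθ w - F0 w) ∂ν| ≤ ∫ w, φ w ∂ν := by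
    rw [← Real.norm_eq_abs]
    apply norm_integral_le_of_norm_le hφint
    filter_upwards [hkey] with w hw
    rw [Real.norm_eq_abs]
    exact hw.1
  have hφval : ∫ w, φ w ∂ν = c1 * (R ^ q + ∫ w, ψ w ∂ν) := by
    rw [hφdef, integral_const_mul, integral_add (integrable_const _) hψint, integral_const]
    simp
  have hfinal : ∫ w, φ w ∂ν ≤ θ * (Real.exp (s0*A) * (R ^ q + Mr) / s0) := by
    rw [hφval, hc1def]
    calc (θ/s0) * Real.exp (s0*A) * (R ^ q + ∫ w, ψ w ∂ν)
        ≤ (θ/s0) * Real.exp (s0*A) * (R ^ q + Mr) := by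
          apply mul_le_mul_of_nonneg_left (by linarith [hψint_le]) (by positivity)
      _ = θ * (Real.exp (s0*A) * (R ^ q + Mr) / s0) := by ring
  have hθ1 : θ ≤ 1 := le_trans hθs0 hs01
  have hθ23 : θ ≤ θ ^ ((2:ℝ)/3) := by
    calc θ = θ ^ (1:ℝ) := (Real.rpow_one θ).symm
      _ ≤ θ ^ ((2:ℝ)/3) := Real.rpow_le_rpow_of_exponent_ge hθ0 hθ1 (by norm_num)
  have hK1 : 0 ≤ Real.exp (s0*A) * (R ^ q + Mr) / s0 :=
    div_nonneg (mul_nonneg (Real.exp_pos _).le (by linarith)) hs00.le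
  calc |∫ w, (Fθ w - F0 w) ∂ν| ≤ ∫ w, φ w ∂ν := hnorm
    _ ≤ θ * (Real.exp (s0*A) * (R ^ q + Mr) / s0) := hfinal
    _ ≤ θ ^ ((2:ℝ)/3) * (Real.exp (s0*A) * (R ^ q + Mr) / s0) :=
        mul_le_mul_of_nonneg_right hθ23 hK1
    _ ≤ θ ^ ((2:ℝ)/3) * max 1 (Real.exp (s0*A) * (R ^ q + Mr) / s0) := by
        apply mul_le_mul_of_nonneg_left (le_max_right _ _)
          (Real.rpow_nonneg hθ0.le _)
    _ = max 1 (Real.exp (s0*A) * (R ^ q + Mr) / s0) * θ ^ ((2:ℝ)/3) := mul_comm _ _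

end
end
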